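/- arXiv:1902.01062 — 7 statements merged into one kernel-verified Lean document; each statement's English description precedes it below -/
import Mathlib

section
/- Let g be a Steinhaus window and Λ ⊆ ℤ_M × ℤ_M. For k ∈ ℤ_M set A_k = {ℓ ∈ ℤ_M : (k,ℓ) ∈ Λ}, and let H = Φ_Λ Φ_Λ* − (|Λ|/M)·I_M. Then E[Tr(H²)] = (1/M)·Σ_{k∈ℤ_M} |A_k|·(M − |A_k|), and consequently E[Tr(H²)] ≤ |Λ|·(1 − |Λ|/M²). -/
open MeasureTheory ProbabilityTheory Complex Finset
open scoped Real BigOperators Classical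

noncomputable section

/-- Time–frequency shift `π(k,ℓ) g = M_ℓ T_k g`. -/
def tfShift (M : ℕ) (k l : ZMod M) (g : ZMod M → ℂ) : ZMod M → ℂ :=
  fun m => Complex.exp (2 * (Real.pi : ℂ) * Complex.I * (l.val : ℂ) * (m.val : ℂ) / (M : ℂ)) *
    g (m - k)

/-- Squared ℓ²-norm on ℂ^M. -/
def nsq (M : ℕ) [NeZero M] (x : ZMod M → ℂ) : ℝ :=
  ∑ m : ZMod M, ‖x m‖ ^ 2

/-- Inner product ⟨x,y⟩ = ∑ x(m)·conj(y(m)). -/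
def inn (M : ℕ) [NeZero M] (x y : ZMod M → ℂ) : ℂ :=
  ∑ m : ZMod M, x m * (starRingEnd ℂ) (y m)

/-- Frame operator Φ_Λ Φ_Λ^* of the Gabor system (g, Λ). -/
def frameOp (M : ℕ) [NeZero M] (Λ : Finset (ZMod M × ZMod M)) (g : ZMod M → ℂ) :
    Matrix (ZMod M) (ZMod M) ℂ :=
  fun m1 m2 => ∑ kl ∈ Λ,
    tfShift M kl.1 kl.2 g m1 * (starRingEnd ℂ) (tfShift M kl.1 kl.2 g m2)

/-- A Steinhaus window: g(m) = M^{-1/2} e^{2πi y_m} with y_m i.i.d. uniform on [0,1). -/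
def IsSteinhaus (M : ℕ) {Ω : Type*} [MeasurableSpace Ω] (P : Measure Ω)
    (g : Ω → ZMod M → ℂ) : Prop :=
  ∃ y : ZMod M → Ω → ℝ,
    (∀ m, Measurable (y m)) ∧
    iIndepFun y P ∧
    (∀ m, Measure.map (y m) P = volume.restrict (Set.Ico (0 : ℝ) 1)) ∧
    (∀ ω m, g ω m = (1 / Real.sqrt M : ℝ) *
      Complex.exp (2 * (Real.pi : ℂ) * Complex.I * (y m ω)))

/-- A complex Gaussian window g ~ CN(0, (1/M) I_M): the 2M real coordinates are
independent centered Gaussians of variance 1/(2M). -/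
def IsGaussianWindow (M : ℕ) {Ω : Type*} [MeasurableSpace Ω] (P : Measure Ω)
    (g : Ω → ZMod M → ℂ) : Prop :=
  ∃ u : ZMod M × Bool → Ω → ℝ,
    (∀ i, Measurable (u i)) ∧
    iIndepFun u P ∧
    (∀ i, Measure.map (u i) P = gaussianReal 0 (1 / (2 * M) : NNReal)) ∧
    (∀ ω m, g ω m = (u (m, false) ω : ℂ) + (u (m, true) ω : ℂ) * Complex.I)




/-- `ec r = e^{2πir}`. -/
def ec (r : ℝ) : ℂ := Complex.exp (2 * (Real.pi : ℂ) * Complex.I * r)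

lemma ec_add (r s : ℝ) : ec (r + s) = ec r * ec s := by
  simp [ec, ← Complex.exp_add]; ring_nf

lemma ec_zero : ec 0 = 1 := by simp [ec]

lemma ec_conj (r : ℝ) : (starRingEnd ℂ) (ec r) = ec (-r) := by
  rw [ec, ← Complex.exp_conj, ec]
  congr 1
  simp only [map_mul, map_ofNat, Complex.conj_I, Complex.conj_ofReal]
  push_cast
  ring

lemma ec_int (n : ℤ) : ec n = 1 := by
  rw [ec]
  have h := Complex.exp_int_mul_two_pi_mul_I n
  rw [← h]
  congr 1
  push_cast
  ring

lemma ec_abs (r : ℝ) : ‖ec r‖ = 1 := by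
  rw [ec, Complex.norm_exp]
  have : (2 * (Real.pi : ℂ) * Complex.I * r).re = 0 := by simp
  simp [this]

lemma ec_continuous : Continuous ec := by
  exact Complex.continuous_exp.comp (by continuity)

lemma ec_mul_conj (r : ℝ) : ec r * (starRingEnd ℂ) (ec r) = 1 := by
  rw [ec_conj, ← ec_add]; simp [ec_zero]

/-- ∫_{[0,1)} e^{2πint} dt = [n = 0]. -/
lemma integral_ec_Ico (n : ℤ) :
    ∫ t in Set.Ico (0:ℝ) 1, ec (n * t) = if n = 0 then 1 else 0 := by
  by_cases hn : n = 0
  · simp [hn, ec_zero]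
  · simp only [hn, if_false]
    have h1 : ∫ t in Set.Ico (0:ℝ) 1, ec (n * t) = ∫ t in (0:ℝ)..1, Complex.exp ((2 * (Real.pi : ℂ) * Complex.I * n) * t) := by
      rw [intervalIntegral.integral_of_le zero_le_one,
        ← MeasureTheory.Measure.restrict_congr_set MeasureTheory.Ico_ae_eq_Ioc]
      refine setIntegral_congr_fun measurableSet_Ico fun t _ => ?_
      rw [ec]; push_cast; ring_nf
    have hc : (2 : ℂ) * (Real.pi : ℂ) * Complex.I * n ≠ 0 := by
      have h2 : (2 : ℂ) * (Real.pi : ℂ) * Complex.I ≠ 0 := by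
        simp [Real.pi_ne_zero, Complex.I_ne_zero, Complex.ofReal_ne_zero]
      exact mul_ne_zero h2 (by exact_mod_cast hn)
    rw [h1, integral_exp_mul_complex hc]
    have he : Complex.exp (2 * (Real.pi : ℂ) * Complex.I * n * 1) = 1 := by
      rw [mul_one]
      have h := Complex.exp_int_mul_two_pi_mul_I n
      rw [← h]; ring_nf
    rw [show ((1:ℝ):ℂ) = (1:ℂ) by norm_num, he]
    simp



lemma indep_integral_mul_complex {Ω : Type*} [MeasurableSpace Ω] {P : Measure Ω}
    [IsProbabilityMeasure P] {X Y : Ω → ℂ} (h : IndepFun X Y P)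
    (hX : Measurable X) (hY : Measurable Y) :
    ∫ ω, X ω * Y ω ∂P = (∫ ω, X ω ∂P) * ∫ ω, Y ω ∂P := by
  have hmap : Measure.map (fun ω => (X ω, Y ω)) P
      = (Measure.map X P).prod (Measure.map Y P) :=
    (indepFun_iff_map_prod_eq_prod_map_map hX.aemeasurable hY.aemeasurable).1 h
  haveI : IsProbabilityMeasure (Measure.map X P) := Measure.isProbabilityMeasure_map hX.aemeasurable
  haveI : IsProbabilityMeasure (Measure.map Y P) := Measure.isProbabilityMeasure_map hY.aemeasurable
  have h1 : ∫ ω, X ω * Y ω ∂P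
      = ∫ p : ℂ × ℂ, p.1 * p.2 ∂(Measure.map (fun ω => (X ω, Y ω)) P) := by
    rw [integral_map (hX.prodMk hY).aemeasurable]
    exact (measurable_fst.mul measurable_snd).aestronglyMeasurable
  rw [h1, hmap, integral_prod_mul (fun x : ℂ => x) (fun y : ℂ => y)]
  rw [integral_map hX.aemeasurable, integral_map hY.aemeasurable] <;>
    exact measurable_id.aestronglyMeasurable

lemma iIndep_integral_prod_complex {Ω ι : Type*} [MeasurableSpace Ω] {P : Measure Ω}
    [IsProbabilityMeasure P] {f : ι → Ω → ℂ}
    (h : iIndepFun f P) (hf : ∀ i, Measurable (f i))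
    (s : Finset ι) :
    ∫ ω, ∏ i ∈ s, f i ω ∂P = ∏ i ∈ s, ∫ ω, f i ω ∂P := by
  classical
  induction s using Finset.induction_on with
  | empty => simp
  | insert i s hi ih =>
    have hind : IndepFun (∏ j ∈ s, f j) (f i) P :=
      h.indepFun_finsetProd_of_notMem hf hi
    have hmul : ∀ ω, ∏ j ∈ insert i s, f j ω = (∏ j ∈ s, f j) ω * f i ω := by
      intro ω
      rw [Finset.prod_insert hi]
      simp [mul_comm]
    rw [Finset.prod_insert hi]
    calc ∫ ω, ∏ j ∈ insert i s, f j ω ∂P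
        = ∫ ω, (∏ j ∈ s, f j) ω * f i ω ∂P := by
          exact integral_congr_ae (Filter.Eventually.of_forall hmul)
      _ = (∫ ω, (∏ j ∈ s, f j) ω ∂P) * ∫ ω, f i ω ∂P :=
          indep_integral_mul_complex hind (by
            have heq : (∏ j ∈ s, f j) = fun a => ∏ j ∈ s, f j a :=
              funext fun a => by simp
            rw [heq]
            exact Finset.measurable_prod s fun j _ => hf j) (hf i)
      _ = (∫ ω, ∏ j ∈ s, f j ω ∂P) * ∫ ω, f i ω ∂P := by
          congr 1
          exact integral_congr_ae (Filter.Eventually.of_forall fun ω => by simp)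
      _ = (∏ j ∈ s, ∫ ω, f j ω ∂P) * ∫ ω, f i ω ∂P := by rw [ih]
      _ = (∫ ω, f i ω ∂P) * ∏ j ∈ s, ∫ ω, f j ω ∂P := by ring



lemma steinhaus_char {Ω ι : Type*} [Fintype ι] [MeasurableSpace Ω] {P : Measure Ω}
    [IsProbabilityMeasure P] {y : ι → Ω → ℝ}
    (hym : ∀ m, Measurable (y m))
    (hyi : iIndepFun y P)
    (hyl : ∀ m, Measure.map (y m) P = volume.restrict (Set.Ico (0 : ℝ) 1))
    (c : ι → ℤ) :
    ∫ ω, ∏ m : ι, ec (c m * y m ω) ∂P = if ∀ m, c m = 0 then 1 else 0 := by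
  have hfm : ∀ m : ι, Measurable fun ω => ec (c m * y m ω) := fun m =>
    (ec_continuous.measurable.comp (measurable_const.mul measurable_id)).comp (hym m)
  have hfi : iIndepFun (fun m ω => ec (c m * y m ω)) P := by
    have := hyi.comp (fun m (t : ℝ) => ec (c m * t))
      (fun m => ec_continuous.measurable.comp (measurable_const.mul measurable_id))
    exact this
  rw [iIndep_integral_prod_complex hfi hfm Finset.univ]
  have hone : ∀ m : ι, ∫ ω, ec (c m * y m ω) ∂P = if c m = 0 then 1 else 0 := by
    intro m
    have : ∫ ω, ec (c m * y m ω) ∂P = ∫ t, ec (c m * t) ∂(Measure.map (y m) P) := by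
      rw [integral_map (hym m).aemeasurable]
      exact (ec_continuous.measurable.comp
        (measurable_const.mul measurable_id)).aestronglyMeasurable
    rw [this, hyl m, integral_ec_Ico]
  simp_rw [hone]
  by_cases hall : ∀ m : ι, c m = 0
  · simp [hall]
  · push_neg at hall
    obtain ⟨m, hm⟩ := hall
    rw [if_neg (by push_neg; exact ⟨m, hm⟩)]
    exact Finset.prod_eq_zero (Finset.mem_univ m) (by simp [hm])



lemma ec_sum {ι : Type*} (s : Finset ι) (f : ι → ℝ) :
    ec (∑ i ∈ s, f i) = ∏ i ∈ s, ec (f i) := by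
  rw [ec]
  push_cast
  rw [Finset.mul_sum, Complex.exp_sum]
  rfl

lemma quadE {Ω ι : Type*} [Fintype ι] [MeasurableSpace Ω] {P : Measure Ω}
    [IsProbabilityMeasure P] {y : ι → Ω → ℝ}
    (hym : ∀ m, Measurable (y m))
    (hyi : iIndepFun y P)
    (hyl : ∀ m, Measure.map (y m) P = volume.restrict (Set.Ico (0 : ℝ) 1))
    (a b a' b' : ι) (hab : a ≠ b) (hab' : a' ≠ b') :
    ∫ ω, ec (y a ω - y b ω + y b' ω - y a' ω) ∂P
      = if a = a' ∧ b = b' then 1 else 0 := by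
  set c : ι → ℤ := fun m => (if a = m then 1 else 0) + (if b' = m then 1 else 0)
    - (if b = m then 1 else 0) - (if a' = m then 1 else 0) with hc
  have hpt : ∀ ω, ec (y a ω - y b ω + y b' ω - y a' ω) = ∏ m : ι, ec (c m * y m ω) := by
    intro ω
    rw [← ec_sum]
    congr 1
    simp only [hc]
    push_cast
    simp only [add_mul, sub_mul, ite_mul, one_mul, zero_mul]
    rw [Finset.sum_sub_distrib, Finset.sum_sub_distrib, Finset.sum_add_distrib]
    simp only [Finset.sum_ite_eq, Finset.mem_univ, if_true]
    ring
  rw [integral_congr_ae (Filter.Eventually.of_forall hpt), steinhaus_char hym hyi hyl c]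
  congr 1
  simp only [eq_iff_iff]
  constructor
  · intro h
    have hba : ¬ (b = a) := fun e => hab e.symm
    have haa' : a = a' := by
      by_contra hne
      have h1 := h a
      simp only [hc, if_pos rfl, if_neg hba] at h1
      have : ¬ (a' = a) := fun e => hne e.symm
      rw [if_neg this] at h1
      split_ifs at h1 <;> omega
    refine ⟨haa', ?_⟩
    by_contra hne
    have h2 := h b
    have hnab : ¬ (a = b) := hab
    have hnb'b : ¬ (b' = b) := fun e => hne e.symm
    have hna'b : ¬ (a' = b) := fun e => hab (haa'.trans e)
    simp only [hc, if_pos rfl, if_neg hnab, if_neg hnb'b, if_neg hna'b,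
      eq_self_iff_true, if_true] at h2
    omega
  · rintro ⟨rfl, rfl⟩
    intro m
    simp only [hc]
    ring



lemma ec_nat_mul (r : ℝ) (k : ℕ) : ec (k * r) = ec r ^ k := by
  rw [ec, ec]
  push_cast
  rw [← Complex.exp_nat_mul]
  ring_nf

lemma ec_ne_one_of_not_dvd (M : ℕ) [NeZero M] (n : ℤ) (h : ¬ (M:ℤ) ∣ n) :
    ec (n / M) ≠ 1 := by
  intro he
  rw [ec, Complex.exp_eq_one_iff] at he
  obtain ⟨k, hk⟩ := he
  apply h
  have hM : (M:ℝ) ≠ 0 := Nat.cast_ne_zero.mpr (NeZero.ne M)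
  have h2 : (2 : ℂ) * (Real.pi : ℂ) * Complex.I ≠ 0 := by
    simp [Real.pi_ne_zero, Complex.I_ne_zero, Complex.ofReal_ne_zero]
  have hx : ((n / M : ℝ) : ℂ) = (k : ℂ) := by
    have hk' : (2 * (Real.pi:ℂ) * Complex.I) * ((n / M : ℝ) : ℂ)
        = (2 * (Real.pi:ℂ) * Complex.I) * (k : ℂ) := by rw [hk]; ring
    exact mul_left_cancel₀ h2 hk'
  have hr : (n / M : ℝ) = (k : ℝ) := by exact_mod_cast hx
  have : (n : ℝ) = k * M := by field_simp at hr; linarith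
  exact ⟨k, by rw [mul_comm]; exact_mod_cast this⟩

lemma geom_ec (M : ℕ) [NeZero M] (n : ℤ) :
    ∑ m : ZMod M, ec (n * m.val / M) = if (M:ℤ) ∣ n then (M:ℂ) else 0 := by
  have hM : (M:ℝ) ≠ 0 := Nat.cast_ne_zero.mpr (NeZero.ne M)
  have hconv : ∑ m : ZMod M, ec (n * m.val / M) = ∑ j ∈ Finset.range M, ec (n * j / M) := by
    apply Finset.sum_nbij' (i := fun m => (ZMod.val m : ℕ)) (j := fun j => (j : ZMod M))
    · intro m _; exact Finset.mem_range.mpr (ZMod.val_lt m)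
    · intro j _; exact Finset.mem_univ _
    · intro m _; exact ZMod.natCast_zmod_val m
    · intro j hj; exact ZMod.val_natCast_of_lt (Finset.mem_range.mp hj)
    · intro m _; rfl
  rw [hconv]
  by_cases hdvd : (M:ℤ) ∣ n
  · obtain ⟨t, rfl⟩ := hdvd
    rw [if_pos ⟨t, rfl⟩]
    have : ∀ j ∈ Finset.range M, ec ((M * t : ℤ) * j / M) = 1 := by
      intro j _
      have : ((M * t : ℤ) : ℝ) * j / M = ((t * j : ℤ) : ℝ) := by push_cast; field_simp
      rw [this, ec_int]
    rw [Finset.sum_congr rfl this]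
    simp
  · rw [if_neg hdvd]
    have hterm : ∀ j ∈ Finset.range M, ec (n * j / M) = ec (n / M) ^ j := by
      intro j _
      rw [← ec_nat_mul]
      congr 1
      ring
    rw [Finset.sum_congr rfl hterm, geom_sum_eq (ec_ne_one_of_not_dvd M n hdvd)]
    have : ec (n / M) ^ M = 1 := by
      rw [← ec_nat_mul]
      have : (M:ℝ) * ((n:ℝ) / M) = ((n:ℤ):ℝ) := by field_simp
      rw [this, ec_int]
    rw [this]
    simp

/-- deterministic phase -/
def rho (M : ℕ) (m1 m2 : ZMod M) (p q : ZMod M × ZMod M) : ℝ :=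
  (p.2.val : ℝ) * m1.val / M - (p.2.val : ℝ) * m2.val / M
    + (q.2.val : ℝ) * m2.val / M - (q.2.val : ℝ) * m1.val / M

lemma ec_quad_comb (s θ1 θ2 θ3 θ4 r q : ℝ) (h : r + q = θ1 - θ2 + (θ3 - θ4)) :
    ((s:ℂ) * ec θ1) * (starRingEnd ℂ) ((s:ℂ) * ec θ2) *
      (((s:ℂ) * ec θ3) * (starRingEnd ℂ) ((s:ℂ) * ec θ4))
      = ((s^4 : ℝ) : ℂ) * ec r * ec q := by
  rw [map_mul, map_mul, Complex.conj_ofReal, ec_conj, ec_conj]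
  have e1 : ec θ1 * ec (-θ2) * (ec θ3 * ec (-θ4)) = ec (θ1 - θ2 + (θ3 - θ4)) := by
    rw [show θ1 - θ2 + (θ3 - θ4) = (θ1 + -θ2) + (θ3 + -θ4) by ring, ec_add, ec_add, ec_add]
  calc ((s:ℂ) * ec θ1) * ((s:ℂ) * ec (-θ2)) * (((s:ℂ) * ec θ3) * ((s:ℂ) * ec (-θ4)))
      = (s:ℂ)^4 * (ec θ1 * ec (-θ2) * (ec θ3 * ec (-θ4))) := by ring
    _ = (s:ℂ)^4 * ec (θ1 - θ2 + (θ3 - θ4)) := by rw [e1]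
    _ = (s:ℂ)^4 * ec (r + q) := by rw [h]
    _ = ((s^4 : ℝ) : ℂ) * ec r * ec q := by rw [ec_add]; push_cast; ring


/-- E[Tr(H²)] = (1/M)·Σ_k |A_k|(M − |A_k|) ≤ |Λ|(1 − |Λ|/M²),
where H = Φ_Λ Φ_Λ* − (|Λ|/M)·I and A_k = {ℓ : (k,ℓ) ∈ Λ}. -/
theorem stmt1 (M : ℕ) [NeZero M] {Ω : Type*} [MeasurableSpace Ω] (P : Measure Ω)
    [IsProbabilityMeasure P] (g : Ω → ZMod M → ℂ) (hg : IsSteinhaus M P g)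
    (Λ : Finset (ZMod M × ZMod M))
    (H : Ω → Matrix (ZMod M) (ZMod M) ℂ)
    (hH : ∀ ω, H ω = frameOp M Λ (g ω) - ((Λ.card : ℂ) / (M : ℂ)) • 1)
    (A : ZMod M → Finset (ZMod M))
    (hA : ∀ k, A k = Finset.univ.filter fun l => (k, l) ∈ Λ) :
    (∫ ω, Matrix.trace ((H ω) ^ 2) ∂P) =
        ((1 / (M : ℝ) * ∑ k : ZMod M, ((A k).card : ℝ) * ((M : ℝ) - (A k).card) : ℝ) : ℂ) ∧
      1 / (M : ℝ) * ∑ k : ZMod M, ((A k).card : ℝ) * ((M : ℝ) - (A k).card) ≤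
        (Λ.card : ℝ) * (1 - (Λ.card : ℝ) / (M : ℝ) ^ 2) := by
  classical
  obtain ⟨y, hym, hyi, hyl, hgy⟩ := hg
  have hM0 : (0:ℝ) < M := by exact_mod_cast Nat.pos_of_ne_zero (NeZero.ne M)
  have hMne : (M:ℝ) ≠ 0 := ne_of_gt hM0
  have hMCne : (M:ℂ) ≠ 0 := Nat.cast_ne_zero.mpr (NeZero.ne M)
  set sM : ℝ := 1 / Real.sqrt M with hsM
  set C : ℂ := ((sM ^ 4 : ℝ) : ℂ) with hCdef
  have hsM2 : sM ^ 2 = 1 / M := by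
    rw [hsM, div_pow, one_pow, Real.sq_sqrt hM0.le]
  have hC : C = 1 / (M:ℂ)^2 := by
    rw [hCdef, show sM^4 = (sM^2)^2 by ring, hsM2]
    push_cast
    rw [div_pow, one_pow]
  -- tfShift formula
  have htf : ∀ (ω : Ω) (k l m : ZMod M),
      tfShift M k l (g ω) m
        = (sM : ℂ) * ec (((l.val : ℝ) * m.val / M) + y (m - k) ω) := by
    intro ω k l m
    rw [tfShift, hgy ω (m - k), ec_add, ec, ec]
    push_cast
    ring_nf
  -- diagonal of frame operator
  have hdiag : ∀ (ω : Ω) (m : ZMod M), frameOp M Λ (g ω) m m = (Λ.card : ℂ) / M := by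
    intro ω m
    rw [frameOp]
    have hterm : ∀ p ∈ Λ, tfShift M p.1 p.2 (g ω) m
        * (starRingEnd ℂ) (tfShift M p.1 p.2 (g ω) m) = 1 / (M:ℂ) := by
      intro p _
      rw [htf ω p.1 p.2 m, map_mul, Complex.conj_ofReal, ec_conj]
      have h2 : (sM:ℂ) * ec ((p.2.val : ℝ) * m.val / M + y (m - p.1) ω)
          * ((sM:ℂ) * ec (-((p.2.val : ℝ) * m.val / M + y (m - p.1) ω)))
          = (sM:ℂ)^2 * (ec (((p.2.val : ℝ) * m.val / M + y (m - p.1) ω))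
              * ec (-((p.2.val : ℝ) * m.val / M + y (m - p.1) ω))) := by
        ring
      rw [h2, ← ec_add, add_neg_cancel, ec_zero, mul_one]
      rw [show ((sM:ℂ))^2 = ((sM^2 : ℝ) : ℂ) by push_cast; ring, hsM2]
      push_cast
      ring
    rw [Finset.sum_congr rfl hterm, Finset.sum_const, nsmul_eq_mul, mul_one_div]
  have hHdiag : ∀ (ω : Ω) (m : ZMod M), H ω m m = 0 := by
    intro ω m
    rw [hH, Matrix.sub_apply, Matrix.smul_apply, Matrix.one_apply_eq, smul_eq_mul, mul_one,
      hdiag, sub_self]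
  have hHoff : ∀ (ω : Ω) (m1 m2 : ZMod M), m1 ≠ m2 →
      H ω m1 m2 = frameOp M Λ (g ω) m1 m2 := by
    intro ω m1 m2 h
    rw [hH, Matrix.sub_apply, Matrix.smul_apply, Matrix.one_apply_ne h, smul_eq_mul, mul_zero,
      sub_zero]
  -- pointwise trace identity
  have key : ∀ ω, Matrix.trace (H ω ^ 2) = ∑ m1 : ZMod M, ∑ m2 : ZMod M,
      if m1 = m2 then 0 else ∑ p ∈ Λ, ∑ q ∈ Λ,
        C * ec (rho M m1 m2 p q)
          * ec (y (m1 - p.1) ω - y (m2 - p.1) ω + y (m2 - q.1) ω - y (m1 - q.1) ω) := by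
    intro ω
    rw [pow_two, Matrix.trace]
    simp only [Matrix.diag, Matrix.mul_apply]
    refine Finset.sum_congr rfl fun m1 _ => Finset.sum_congr rfl fun m2 _ => ?_
    by_cases h : m1 = m2
    · rw [if_pos h, h, hHdiag, zero_mul]
    · rw [if_neg h, hHoff ω m1 m2 h, hHoff ω m2 m1 (Ne.symm h), frameOp, frameOp,
        Finset.sum_mul_sum]
      refine Finset.sum_congr rfl fun p _ => Finset.sum_congr rfl fun q _ => ?_
      rw [htf ω p.1 p.2 m1, htf ω p.1 p.2 m2, htf ω q.1 q.2 m2, htf ω q.1 q.2 m1]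
      exact ec_quad_comb sM _ _ _ _ _ _ (by simp only [rho]; ring)
  -- integrability
  have hQm : ∀ (a b c d : ZMod M),
      Measurable (fun ω => ec (y a ω - y b ω + y c ω - y d ω)) := fun a b c d =>
    ec_continuous.measurable.comp ((((hym a).sub (hym b)).add (hym c)).sub (hym d))
  have hQi : ∀ (a b c d : ZMod M),
      Integrable (fun ω => ec (y a ω - y b ω + y c ω - y d ω)) P := fun a b c d =>
    (integrable_const (1:ℝ)).mono' (hQm a b c d).aestronglyMeasurable
      (Filter.Eventually.of_forall fun ω =>
        le_of_eq (by rw [ec_abs]))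
  -- integral computation
  have hIterm : ∀ (m1 m2 : ZMod M), m1 ≠ m2 → ∀ (p q : ZMod M × ZMod M),
      ∫ ω, ec (y (m1 - p.1) ω - y (m2 - p.1) ω + y (m2 - q.1) ω - y (m1 - q.1) ω) ∂P
        = if p.1 = q.1 then 1 else 0 := by
    intro m1 m2 hne p q
    rw [quadE hym hyi hyl _ _ _ _
      (fun h => hne (sub_left_inj.mp h)) (fun h => hne (sub_left_inj.mp h))]
    by_cases hpq : p.1 = q.1
    · rw [if_pos (⟨by rw [hpq], by rw [hpq]⟩ : _ ∧ _), if_pos hpq]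
    · rw [if_neg (fun hc : _ ∧ _ => hpq (sub_right_inj.mp hc.1)), if_neg hpq]
  have hInt : (∫ ω, Matrix.trace (H ω ^ 2) ∂P) = ∑ m1 : ZMod M, ∑ m2 : ZMod M,
      if m1 = m2 then 0 else ∑ p ∈ Λ, ∑ q ∈ Λ,
        C * ec (rho M m1 m2 p q) * (if p.1 = q.1 then 1 else 0) := by
    rw [integral_congr_ae (Filter.Eventually.of_forall key)]
    rw [integral_finset_sum _ (fun m1 _ => ?_)]
    swap
    · apply integrable_finset_sum
      intro m2 _
      by_cases h : m1 = m2
      · simp only [if_pos h]; exact integrable_const 0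
      · simp only [if_neg h]
        apply integrable_finset_sum
        intro p _
        apply integrable_finset_sum
        intro q _
        exact (hQi _ _ _ _).const_mul _
    refine Finset.sum_congr rfl fun m1 _ => ?_
    rw [integral_finset_sum _ (fun m2 _ => ?_)]
    swap
    · by_cases h : m1 = m2
      · simp only [if_pos h]; exact integrable_const 0
      · simp only [if_neg h]
        apply integrable_finset_sum
        intro p _
        apply integrable_finset_sum
        intro q _
        exact (hQi _ _ _ _).const_mul _
    refine Finset.sum_congr rfl fun m2 _ => ?_
    by_cases h : m1 = m2
    · simp only [if_pos h, integral_zero]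
    · simp only [if_neg h]
      rw [integral_finset_sum _ (fun p _ => integrable_finset_sum _
        (fun q _ => (hQi _ _ _ _).const_mul _))]
      refine Finset.sum_congr rfl fun p _ => ?_
      rw [integral_finset_sum _ (fun q _ => (hQi _ _ _ _).const_mul _)]
      refine Finset.sum_congr rfl fun q _ => ?_
      rw [integral_const_mul, hIterm m1 m2 h p q]

  -- fiber decomposition
  have hfiber : ∀ (f : ZMod M × ZMod M → ℂ), ∑ p ∈ Λ, f p
      = ∑ k : ZMod M, ∑ l ∈ A k, f (k, l) := by
    intro f
    rw [← Finset.sum_fiberwise Λ (fun p => p.1) f]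
    refine Finset.sum_congr rfl fun k _ => ?_
    rw [hA k]
    refine Finset.sum_nbij' (i := fun p => p.2) (j := fun l => (k, l)) ?_ ?_ ?_ ?_ ?_
    · intro p hp
      rcases Finset.mem_filter.mp hp with ⟨hpΛ, hpk⟩
      simp only [Finset.mem_filter, Finset.mem_univ, true_and]
      rwa [← hpk, Prod.mk.eta]
    · intro l hl
      rcases Finset.mem_filter.mp hl with ⟨-, hlm⟩
      exact Finset.mem_filter.mpr ⟨hlm, rfl⟩
    · intro p hp
      rcases Finset.mem_filter.mp hp with ⟨-, hpk⟩
      show (k, p.2) = p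
      rw [← hpk]
    · intro l _; rfl
    · intro p hp
      rcases Finset.mem_filter.mp hp with ⟨-, hpk⟩
      show f p = f (k, p.2)
      rw [← hpk]
  -- geometric double sum
  have hsumrho : ∀ p q : ZMod M × ZMod M,
      (∑ m1 : ZMod M, ∑ m2 : ZMod M, ec (rho M m1 m2 p q))
        = if p.2 = q.2 then ((M:ℂ))^2 else 0 := by
    intro p q
    have hsplit : ∀ m1 m2 : ZMod M, ec (rho M m1 m2 p q)
        = ec ((((p.2.val : ℤ) - (q.2.val : ℤ) : ℤ) : ℝ) * m1.val / M)
          * ec (((-((p.2.val : ℤ) - (q.2.val : ℤ)) : ℤ) : ℝ) * m2.val / M) := by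
      intro m1 m2
      rw [← ec_add]
      congr 1
      simp only [rho]
      push_cast
      ring
    have hdvd : ((M:ℤ) ∣ ((p.2.val : ℤ) - (q.2.val : ℤ))) ↔ p.2 = q.2 := by
      constructor
      · rintro ⟨t, ht⟩
        have h1 : (p.2.val : ℤ) < M := by exact_mod_cast ZMod.val_lt p.2
        have h2 : (q.2.val : ℤ) < M := by exact_mod_cast ZMod.val_lt q.2
        have h3 : (0:ℤ) ≤ (p.2.val : ℤ) := by positivity
        have h4 : (0:ℤ) ≤ (q.2.val : ℤ) := by positivity
        have hMZ : (0:ℤ) < M := by exact_mod_cast Nat.pos_of_ne_zero (NeZero.ne M)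
        have ht1 : t < 1 := by nlinarith
        have ht2 : -1 < t := by nlinarith
        have ht0 : t = 0 := by omega
        rw [ht0, mul_zero] at ht
        have hv : p.2.val = q.2.val := by omega
        exact ZMod.val_injective M hv
      · intro h
        rw [h, sub_self]
        exact dvd_zero _
    calc (∑ m1 : ZMod M, ∑ m2 : ZMod M, ec (rho M m1 m2 p q))
        = ∑ m1 : ZMod M, ∑ m2 : ZMod M,
            ec ((((p.2.val : ℤ) - (q.2.val : ℤ) : ℤ) : ℝ) * m1.val / M)
              * ec (((-((p.2.val : ℤ) - (q.2.val : ℤ)) : ℤ) : ℝ) * m2.val / M) :=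
          Finset.sum_congr rfl fun m1 _ => Finset.sum_congr rfl fun m2 _ => hsplit m1 m2
      _ = (∑ m1 : ZMod M, ec ((((p.2.val : ℤ) - (q.2.val : ℤ) : ℤ) : ℝ) * m1.val / M))
            * ∑ m2 : ZMod M, ec (((-((p.2.val : ℤ) - (q.2.val : ℤ)) : ℤ) : ℝ) * m2.val / M) :=
          (Finset.sum_mul_sum _ _ _ _).symm
      _ = (if (M:ℤ) ∣ ((p.2.val : ℤ) - (q.2.val : ℤ)) then (M:ℂ) else 0)
            * (if (M:ℤ) ∣ (-((p.2.val : ℤ) - (q.2.val : ℤ))) then (M:ℂ) else 0) := by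
          rw [geom_ec, geom_ec]
      _ = if p.2 = q.2 then ((M:ℂ))^2 else 0 := by
          simp only [dvd_neg, hdvd]
          by_cases h : p.2 = q.2
          · simp [h, pow_two]
          · simp [h]
  have hdiagrho : ∀ (m : ZMod M) (p q : ZMod M × ZMod M), ec (rho M m m p q) = 1 := by
    intro m p q
    rw [show rho M m m p q = 0 by simp only [rho]; ring, ec_zero]
  -- sum swap
  have swap4 : ∀ (F : ZMod M → ZMod M → (ZMod M × ZMod M) → (ZMod M × ZMod M) → ℂ),
      (∑ m1 : ZMod M, ∑ m2 : ZMod M, ∑ p ∈ Λ, ∑ q ∈ Λ, F m1 m2 p q)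
        = ∑ p ∈ Λ, ∑ q ∈ Λ, ∑ m1 : ZMod M, ∑ m2 : ZMod M, F m1 m2 p q := by
    intro F
    calc (∑ m1 : ZMod M, ∑ m2 : ZMod M, ∑ p ∈ Λ, ∑ q ∈ Λ, F m1 m2 p q)
        = ∑ m1 : ZMod M, ∑ p ∈ Λ, ∑ m2 : ZMod M, ∑ q ∈ Λ, F m1 m2 p q :=
          Finset.sum_congr rfl fun m1 _ => Finset.sum_comm
      _ = ∑ p ∈ Λ, ∑ m1 : ZMod M, ∑ m2 : ZMod M, ∑ q ∈ Λ, F m1 m2 p q := Finset.sum_comm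
      _ = ∑ p ∈ Λ, ∑ m1 : ZMod M, ∑ q ∈ Λ, ∑ m2 : ZMod M, F m1 m2 p q :=
          Finset.sum_congr rfl fun p _ => Finset.sum_congr rfl fun m1 _ => Finset.sum_comm
      _ = ∑ p ∈ Λ, ∑ q ∈ Λ, ∑ m1 : ZMod M, ∑ m2 : ZMod M, F m1 m2 p q :=
          Finset.sum_congr rfl fun p _ => Finset.sum_comm
  -- main transformation
  have hT : (∑ m1 : ZMod M, ∑ m2 : ZMod M,
      if m1 = m2 then 0 else ∑ p ∈ Λ, ∑ q ∈ Λ,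
        C * ec (rho M m1 m2 p q) * (if p.1 = q.1 then 1 else 0))
      = ∑ p ∈ Λ, ∑ q ∈ Λ,
          C * (if p.1 = q.1 then 1 else 0) * ((if p.2 = q.2 then ((M:ℂ))^2 else 0) - M) := by
    calc (∑ m1 : ZMod M, ∑ m2 : ZMod M,
        if m1 = m2 then 0 else ∑ p ∈ Λ, ∑ q ∈ Λ,
          C * ec (rho M m1 m2 p q) * (if p.1 = q.1 then 1 else 0))
        = ∑ m1 : ZMod M, ∑ m2 : ZMod M, ∑ p ∈ Λ, ∑ q ∈ Λ,
            (C * ec (rho M m1 m2 p q) * (if p.1 = q.1 then 1 else 0)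
              - (if m1 = m2 then C * (if p.1 = q.1 then 1 else 0) else 0)) := by
          refine Finset.sum_congr rfl fun m1 _ => Finset.sum_congr rfl fun m2 _ => ?_
          by_cases h : m1 = m2
          · rw [if_pos h]
            symm
            refine Finset.sum_eq_zero fun p _ => Finset.sum_eq_zero fun q _ => ?_
            rw [if_pos h, h, hdiagrho, mul_one, sub_self]
          · simp only [if_neg h, sub_zero]
      _ = ∑ p ∈ Λ, ∑ q ∈ Λ, ∑ m1 : ZMod M, ∑ m2 : ZMod M,
            (C * ec (rho M m1 m2 p q) * (if p.1 = q.1 then 1 else 0)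
              - (if m1 = m2 then C * (if p.1 = q.1 then 1 else 0) else 0)) := swap4 _
      _ = ∑ p ∈ Λ, ∑ q ∈ Λ,
            C * (if p.1 = q.1 then 1 else 0) * ((if p.2 = q.2 then ((M:ℂ))^2 else 0) - M) := by
          refine Finset.sum_congr rfl fun p _ => Finset.sum_congr rfl fun q _ => ?_
          rw [Finset.sum_congr rfl fun (m1 : ZMod M) (_ : m1 ∈ univ) => Finset.sum_sub_distrib _ _]
          rw [Finset.sum_sub_distrib]
          have e1 : (∑ m1 : ZMod M, ∑ m2 : ZMod M,
              C * ec (rho M m1 m2 p q) * (if p.1 = q.1 then 1 else 0))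
              = C * (if p.1 = q.1 then 1 else 0) * ((if p.2 = q.2 then ((M:ℂ))^2 else 0)) := by
            calc (∑ m1 : ZMod M, ∑ m2 : ZMod M,
                C * ec (rho M m1 m2 p q) * (if p.1 = q.1 then 1 else 0))
                = ∑ m1 : ZMod M, ∑ m2 : ZMod M,
                    C * (if p.1 = q.1 then 1 else 0) * ec (rho M m1 m2 p q) :=
                  Finset.sum_congr rfl fun m1 _ => Finset.sum_congr rfl fun m2 _ => by ring
              _ = C * (if p.1 = q.1 then 1 else 0)
                    * ∑ m1 : ZMod M, ∑ m2 : ZMod M, ec (rho M m1 m2 p q) := by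
                  rw [Finset.mul_sum]
                  refine Finset.sum_congr rfl fun m1 _ => ?_
                  rw [Finset.mul_sum]
              _ = C * (if p.1 = q.1 then 1 else 0)
                    * ((if p.2 = q.2 then ((M:ℂ))^2 else 0)) := by rw [hsumrho]
          have e2 : (∑ m1 : ZMod M, ∑ m2 : ZMod M,
              (if m1 = m2 then C * (if p.1 = q.1 then 1 else 0) else 0))
              = (M:ℂ) * (C * (if p.1 = q.1 then 1 else 0)) := by
            have : ∀ m1 : ZMod M, (∑ m2 : ZMod M,
                (if m1 = m2 then C * (if p.1 = q.1 then 1 else 0) else 0))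
                = C * (if p.1 = q.1 then 1 else 0) := by
              intro m1
              rw [Finset.sum_ite_eq]
              simp
            rw [Finset.sum_congr rfl fun m1 _ => this m1, Finset.sum_const, Finset.card_univ,
              ZMod.card, nsmul_eq_mul]
          rw [e1, e2]
          ring
  -- collapse the k' sum
  have hT2 : (∑ p ∈ Λ, ∑ q ∈ Λ,
      C * (if p.1 = q.1 then 1 else 0) * ((if p.2 = q.2 then ((M:ℂ))^2 else 0) - M))
      = ∑ k : ZMod M, C * (((M:ℂ))^2 * ((A k).card : ℂ) - (M:ℂ) * ((A k).card : ℂ)^2) := by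
    rw [hfiber]
    refine Finset.sum_congr rfl fun k _ => ?_
    have inner1 : ∀ l : ZMod M, (∑ q ∈ Λ,
        C * (if k = q.1 then 1 else 0) * ((if l = q.2 then ((M:ℂ))^2 else 0) - M))
        = ∑ l' ∈ A k, C * ((if l = l' then ((M:ℂ))^2 else 0) - M) := by
      intro l
      rw [hfiber (fun q => C * (if k = q.1 then 1 else 0) * ((if l = q.2 then ((M:ℂ))^2 else 0) - M))]
      have h1 : ∀ k' : ZMod M, (∑ l' ∈ A k',
          C * (if k = k' then 1 else 0) * ((if l = l' then ((M:ℂ))^2 else 0) - M))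
          = if k = k' then (∑ l' ∈ A k', C * ((if l = l' then ((M:ℂ))^2 else 0) - M)) else 0 := by
        intro k'
        by_cases h : k = k'
        · subst h
          simp
        · simp [h]
      rw [Finset.sum_congr rfl fun k' _ => h1 k', Finset.sum_ite_eq]
      simp
    calc (∑ l ∈ A k, ∑ q ∈ Λ,
        C * (if k = q.1 then 1 else 0) * ((if l = q.2 then ((M:ℂ))^2 else 0) - M))
        = ∑ l ∈ A k, ∑ l' ∈ A k, C * ((if l = l' then ((M:ℂ))^2 else 0) - M) :=
          Finset.sum_congr rfl fun l _ => inner1 l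
      _ = ∑ l ∈ A k, C * (((M:ℂ))^2 - ((A k).card : ℂ) * M) := by
          refine Finset.sum_congr rfl fun l hl => ?_
          rw [← Finset.mul_sum, Finset.sum_sub_distrib, Finset.sum_ite_eq, if_pos hl,
            Finset.sum_const, nsmul_eq_mul]
      _ = ((A k).card : ℂ) * (C * (((M:ℂ))^2 - ((A k).card : ℂ) * M)) := by
          rw [Finset.sum_const, nsmul_eq_mul]
      _ = C * (((M:ℂ))^2 * ((A k).card : ℂ) - (M:ℂ) * ((A k).card : ℂ)^2) := by ring
  constructor
  · rw [hInt, hT, hT2]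
    push_cast
    rw [Finset.mul_sum]
    refine Finset.sum_congr rfl fun k _ => ?_
    rw [hC]
    field_simp
  · -- inequality
    have hAcard : ∀ k, (Λ.filter fun p => p.1 = k).card = (A k).card := by
      intro k
      rw [hA]
      refine Finset.card_nbij' (i := fun p => p.2) (j := fun l => (k, l)) ?_ ?_ ?_ ?_
      · intro p hp
        rcases Finset.mem_filter.mp hp with ⟨hpΛ, hpk⟩
        simp only [Finset.coe_filter, Finset.mem_filter, Finset.mem_univ, true_and, Set.mem_setOf_eq]
        rwa [← hpk, Prod.mk.eta]
      · intro l hl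
        rcases Finset.mem_filter.mp hl with ⟨-, hlm⟩
        exact Finset.mem_filter.mpr ⟨hlm, rfl⟩
      · intro p hp
        rcases Finset.mem_filter.mp hp with ⟨-, hpk⟩
        show (k, p.2) = p
        rw [← hpk]
      · intro l _; rfl
    have hcardR : (Λ.card : ℝ) = ∑ k : ZMod M, ((A k).card : ℝ) := by
      have h1 : Λ.card = ∑ k : ZMod M, (Λ.filter fun p => p.1 = k).card :=
        Finset.card_eq_sum_card_fiberwise (fun p _ => Finset.mem_univ p.1)
      rw [h1]
      push_cast
      exact Finset.sum_congr rfl fun k _ => by rw [hAcard]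
    have hCS : (∑ k : ZMod M, ((A k).card : ℝ))^2
        ≤ (M:ℝ) * ∑ k : ZMod M, ((A k).card : ℝ)^2 := by
      have h := sq_sum_le_card_mul_sum_sq (s := (univ : Finset (ZMod M)))
        (f := fun k => ((A k).card : ℝ))
      simpa [Finset.card_univ, ZMod.card] using h
    have hexpand : (∑ k : ZMod M, ((A k).card : ℝ) * ((M:ℝ) - ((A k).card : ℝ)))
        = (M:ℝ) * (∑ k : ZMod M, ((A k).card : ℝ))
          - ∑ k : ZMod M, ((A k).card : ℝ)^2 := by
      rw [Finset.mul_sum, ← Finset.sum_sub_distrib]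
      exact Finset.sum_congr rfl fun k _ => by ring
    rw [hexpand, ← hcardR]
    set L : ℝ := (Λ.card : ℝ) with hL
    set S : ℝ := ∑ k : ZMod M, ((A k).card : ℝ)^2 with hS
    have hLS : L^2 ≤ (M:ℝ) * S := by rw [hcardR]; exact hCS
    have h2 : 1 / (M:ℝ) * ((M:ℝ) * L - S) = L - S / M := by field_simp
    have h3 : L * (1 - L/(M:ℝ)^2) = L - L^2/(M:ℝ)^2 := by ring
    rw [h2, h3]
    have h4 : L^2/(M:ℝ)^2 ≤ S / M := by
      rw [div_le_div_iff₀ (by positivity) hM0]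
      nlinarith [hLS, hM0]
    linarith
end
end

section
/- Let g be a Steinhaus window, Λ ⊆ ℤ_M × ℤ_M, H = Φ_Λ Φ_Λ* − (|Λ|/M)·I_M, and for k ∈ ℤ_M set A_k = {ℓ ∈ ℤ_M : (k,ℓ) ∈ Λ}. Fix an integer m ≥ 1 and L > 0, and suppose that for every k ∈ ℤ_M and every q ∈ ℤ_M with q ≠ 0 one has |Σ_{ℓ∈A_k} e^{2πiℓq/M}| ≤ L. Then |E[Tr(H^m)]| ≤ L^m · m! · M. (In the paper this is applied with L = C'·log M, giving E[Tr(H^m)] ≤ C'^m · m! · M · (log M)^m.) -/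
open MeasureTheory ProbabilityTheory Complex Finset
open scoped Real BigOperators Classical

noncomputable section

set_option linter.unusedSectionVars false

namespace Stmt4Aux


/-- `e(t) = exp(2πi t)` for real `t`. -/
def eC (t : ℝ) : ℂ := Complex.exp (2 * Real.pi * Complex.I * t)

lemma eC_def (t : ℝ) : eC t = Complex.exp (2 * Real.pi * Complex.I * t) := rfl

lemma eC_add (s t : ℝ) : eC (s + t) = eC s * eC t := by
  simp only [eC, ← Complex.exp_add]; push_cast; ring_nf

lemma abs_eC (t : ℝ) : ‖eC t‖ = 1 := by
  simp only [eC, Complex.norm_exp]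
  have : (2 * (Real.pi:ℂ) * Complex.I * t).re = 0 := by
    simp [Complex.mul_re, Complex.mul_im]
  rw [this, Real.exp_zero]

lemma conj_eC (t : ℝ) : (starRingEnd ℂ) (eC t) = eC (-t) := by
  simp only [eC, ← Complex.exp_conj]
  congr 1
  simp only [map_mul, Complex.conj_I, map_ofNat]
  rw [Complex.conj_ofReal, Complex.conj_ofReal]
  push_cast
  ring

/-- character `ec M a = exp(2πi a / M)` for integer `a`. -/
def ec (M : ℕ) (a : ℤ) : ℂ := Complex.exp (2 * Real.pi * Complex.I * a / M)

lemma ec_add (M : ℕ) (a b : ℤ) : ec M (a + b) = ec M a * ec M b := by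
  simp only [ec, ← Complex.exp_add]; push_cast; ring_nf

lemma abs_ec (M : ℕ) (a : ℤ) : ‖ec M a‖ = 1 := by
  simp only [ec, Complex.norm_exp]
  have : (2 * (Real.pi:ℂ) * Complex.I * a / M).re = 0 := by
    rw [div_eq_mul_inv]
    simp [Complex.mul_re, Complex.mul_im, Complex.inv_re, Complex.inv_im]
  rw [this, Real.exp_zero]

lemma ec_int_mul (M : ℕ) [NeZero M] (t : ℤ) : ec M ((M:ℤ) * t) = 1 := by
  have hM : (M:ℂ) ≠ 0 := by exact_mod_cast (NeZero.ne M)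
  have h2 : (2 * (Real.pi:ℂ) * Complex.I * ((M:ℤ):ℂ) * ((t:ℤ):ℂ) / M) = t * (2 * Real.pi * Complex.I) := by
    push_cast
    field_simp
  rw [ec]
  push_cast
  push_cast at h2
  rw [show 2 * (Real.pi:ℂ) * Complex.I * ((M:ℂ) * t) / M = 2 * (Real.pi:ℂ) * Complex.I * (M:ℂ) * (t:ℂ) / M by ring, h2, Complex.exp_int_mul_two_pi_mul_I]


lemma ec_zero (M : ℕ) : ec M 0 = 1 := by simp [ec]

lemma eC_zero : eC 0 = 1 := by simp [eC]

lemma conj_ec (M : ℕ) (a : ℤ) : (starRingEnd ℂ) (ec M a) = ec M (-a) := by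
  simp only [ec, ← Complex.exp_conj]
  congr 1
  simp only [map_div₀, map_mul, Complex.conj_I, map_ofNat, Complex.conj_ofReal,
    map_intCast, map_natCast]
  push_cast
  ring

lemma ec_congr (M : ℕ) [NeZero M] {a b : ℤ} (h : (a : ZMod M) = b) : ec M a = ec M b := by
  have hd : ((b - a : ℤ) : ZMod M) = 0 := by push_cast [h]; ring
  rw [ZMod.intCast_zmod_eq_zero_iff_dvd] at hd
  obtain ⟨t, ht⟩ := hd
  have : b = a + (M:ℤ) * t := by omega
  rw [this, ec_add, ec_int_mul, mul_one]



variable {n : Type*} [Fintype n] [DecidableEq n]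

def pathProd {q : ℕ} (A : Matrix n n ℂ) (d : Fin (q + 2) → n) : ℂ :=
  ∏ t : Fin (q + 1), A (d t.castSucc) (d t.succ)

lemma pathProd_snoc {q : ℕ} (A : Matrix n n ℂ) (i j x : n) (c : Fin q → n) :
    pathProd A (Fin.snoc (Fin.cons i (Fin.snoc c x)) j)
      = pathProd A (Fin.snoc (Fin.cons i c) x) * A x j := by
  simp only [pathProd]
  rw [Fin.prod_univ_castSucc]
  have hd : ∀ u : Fin (q + 2),
      (Fin.snoc (Fin.cons i (Fin.snoc c x)) j : Fin (q+3) → n) u.castSucc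
        = (Fin.snoc (Fin.cons i c) x : Fin (q+2) → n) u := by
    intro u
    rw [show (Fin.cons i (Fin.snoc c x) : Fin (q+2) → n) = Fin.snoc (Fin.cons i c) x from
      (Fin.cons_snoc_eq_snoc_cons i c x), Fin.snoc_castSucc]
  congr 1
  · apply Finset.prod_congr rfl
    intro t _
    have h1 := hd t.castSucc
    have h2 : (Fin.snoc (Fin.cons i (Fin.snoc c x)) j : Fin (q+3) → n) (t.castSucc.succ)
        = (Fin.snoc (Fin.cons i c) x : Fin (q+2) → n) t.succ := by
      rw [Fin.succ_castSucc]; exact hd t.succ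
    rw [h1, h2]
  · have h1 := hd (Fin.last (q + 1))
    rw [h1, Fin.snoc_last, Fin.succ_last, Fin.snoc_last]

/-- entries of a matrix power as a sum over paths. -/
lemma pow_succ_apply (A : Matrix n n ℂ) : ∀ (q : ℕ) (i j : n),
    (A ^ (q + 1)) i j = ∑ c : Fin q → n, pathProd A (Fin.snoc (Fin.cons i c) j) := by
  intro q
  induction q with
  | zero =>
    intro i j
    have h1 : ∀ c : Fin 0 → n, pathProd A (Fin.snoc (Fin.cons i c) j) = A i j := by
      intro c
      simp [pathProd, Fin.prod_univ_one, Fin.snoc, Fin.cons]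
    simp only [h1]
    simp [pow_one]
  | succ q ih =>
    intro i j
    rw [pow_succ, Matrix.mul_apply]
    have lhs_eq : ∑ x : n, (A ^ (q+1)) i x * A x j
        = ∑ x : n, ∑ c : Fin q → n, pathProd A (Fin.snoc (Fin.cons i c) x) * A x j := by
      apply Finset.sum_congr rfl
      intro x _
      rw [ih, Finset.sum_mul]
    rw [lhs_eq]
    have reindex : ∑ c : Fin (q+1) → n, pathProd A (Fin.snoc (Fin.cons i c) j)
        = ∑ p : n × (Fin q → n),
            pathProd A (Fin.snoc (Fin.cons i ((Fin.snocEquiv (fun _ => n)) p)) j) := by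
      rw [Equiv.sum_comp (Fin.snocEquiv (fun _ => n))
        (fun c => pathProd A (Fin.snoc (Fin.cons i c) j))]
    rw [reindex, Fintype.sum_prod_type]
    apply Finset.sum_congr rfl
    intro x _
    apply Finset.sum_congr rfl
    intro c _
    have : (Fin.snocEquiv (fun _ : Fin (q+1) => n)) (x, c) = Fin.snoc c x := by
      funext u
      simp [Fin.snocEquiv]
    rw [this, pathProd_snoc]

/-- trace of a matrix power as a sum over cyclic paths. -/
lemma trace_pow (A : Matrix n n ℂ) (q : ℕ) :
    Matrix.trace (A ^ (q + 1)) = ∑ f : Fin (q + 1) → n, ∏ t : Fin (q + 1), A (f t) (f (t + 1)) := by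
  rw [Matrix.trace]
  have h1 : ∀ i : n, Matrix.diag (A ^ (q+1)) i
      = ∑ c : Fin q → n, pathProd A (Fin.snoc (Fin.cons i c) i) :=
    fun i => pow_succ_apply A q i i
  simp only [h1]
  have reindex : ∑ f : Fin (q+1) → n, ∏ t : Fin (q+1), A (f t) (f (t + 1))
      = ∑ p : n × (Fin q → n), ∏ t : Fin (q+1),
          A ((Fin.consEquiv (fun _ => n)) p t) ((Fin.consEquiv (fun _ => n)) p (t + 1)) := by
    rw [Equiv.sum_comp (Fin.consEquiv (fun _ => n))
      (fun f => ∏ t : Fin (q+1), A (f t) (f (t + 1)))]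
  rw [reindex, Fintype.sum_prod_type]
  apply Finset.sum_congr rfl
  intro i _
  apply Finset.sum_congr rfl
  intro c _
  have hc : (Fin.consEquiv (fun _ : Fin (q+1) => n)) (i, c) = Fin.cons i c := by
    funext u; simp [Fin.consEquiv]
  rw [hc]
  -- pathProd A (snoc (cons i c) i) = ∏ t, A ((cons i c) t) ((cons i c) (t+1))
  simp only [pathProd]
  apply Finset.prod_congr rfl
  intro t _
  set f : Fin (q+1) → n := Fin.cons i c with hf
  have h1 : (Fin.snoc f (f 0) : Fin (q+2) → n) t.castSucc = f t := Fin.snoc_castSucc _ _ _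
  have h2 : (Fin.snoc f (f 0) : Fin (q+2) → n) t.succ = f (t + 1) := by
    rcases Fin.eq_castSucc_or_eq_last t with ⟨u, hu⟩ | hu
    · subst hu
      rw [Fin.succ_castSucc, Fin.snoc_castSucc, Fin.coeSucc_eq_succ]
    · subst hu
      rw [Fin.succ_last, Fin.snoc_last, Fin.last_add_one]
  have hf0 : f 0 = i := by simp [hf]
  rw [show (Fin.snoc f i : Fin (q+2) → n) = Fin.snoc f (f 0) by rw [hf0], h1, h2]



lemma exists_perm_of_counts {α ι : Type*} [Fintype α] [DecidableEq α] [Fintype ι] [DecidableEq ι]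
    (a b : ι → α)
    (h : ∀ x : α, (univ.filter fun j => a j = x).card = (univ.filter fun j => b j = x).card) :
    ∃ σ : Equiv.Perm ι, ∀ j, b (σ j) = a j := by
  have hcard : ∀ x : α, Fintype.card {j // a j = x} = Fintype.card {j // b j = x} := by
    intro x
    rw [Fintype.card_subtype, Fintype.card_subtype, h x]
  let E : ∀ x : α, {j // a j = x} ≃ {j // b j = x} := fun x => Fintype.equivOfCardEq (hcard x)
  refine ⟨(Equiv.sigmaFiberEquiv a).symm.trans
    ((Equiv.sigmaCongrRight E).trans (Equiv.sigmaFiberEquiv b)), fun j => ?_⟩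
  simp only [Equiv.trans_apply, Equiv.sigmaFiberEquiv, Equiv.sigmaCongrRight,
    Equiv.coe_fn_symm_mk, Equiv.coe_fn_mk]
  exact (E (a j) ⟨j, rfl⟩).2

open Fin.NatCast in
lemma card_solutions_le (M m : ℕ) [NeZero M] [NeZero m] (σ : Equiv.Perm (Fin m)) :
    ((univ : Finset ((Fin m → ZMod M) × (Fin m → ZMod M))).filter
      (fun p => ∀ j, p.1 j - p.2 j = p.1 (σ j + 1) - p.2 (σ j))).card
      ≤ M ^ m * M := by
  have hinj : Set.InjOn
      (fun p : (Fin m → ZMod M) × (Fin m → ZMod M) => ((fun j => p.1 j - p.2 j), p.2 0))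
      ((univ : Finset ((Fin m → ZMod M) × (Fin m → ZMod M))).filter
        (fun p => ∀ j, p.1 j - p.2 j = p.1 (σ j + 1) - p.2 (σ j))) := by
    intro p hp p' hp' heq
    simp only [Finset.coe_filter, Set.mem_setOf_eq] at hp hp'
    obtain ⟨-, hp⟩ := hp
    obtain ⟨-, hp'⟩ := hp'
    have ha : ∀ j, p.1 j - p.2 j = p'.1 j - p'.2 j := by
      intro j
      exact congrFun (congrArg Prod.fst heq) j
    have h0 : p.2 0 = p'.2 0 := congrArg Prod.snd heq
    have recp : ∀ (pp : (Fin m → ZMod M) × (Fin m → ZMod M)),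
        (∀ j, pp.1 j - pp.2 j = pp.1 (σ j + 1) - pp.2 (σ j)) →
        ∀ i : Fin m, pp.2 (i + 1)
          = pp.2 i + (pp.1 (σ.symm i) - pp.2 (σ.symm i)) - (pp.1 (i+1) - pp.2 (i+1)) := by
      intro pp hpp i
      have t1 := hpp (σ.symm i)
      rw [Equiv.apply_symm_apply] at t1
      rw [t1]
      ring
    have hk : ∀ j, p.2 j = p'.2 j := by
      have hN : ∀ N : ℕ, p.2 ((N : Fin m)) = p'.2 ((N : Fin m)) := by
        intro N
        induction N with
        | zero => simpa using h0
        | succ N ihN =>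
          have hcast : ((N + 1 : ℕ) : Fin m) = ((N : ℕ) : Fin m) + 1 := by push_cast; ring
          rw [hcast, recp p hp ((N : ℕ) : Fin m), recp p' hp' ((N : ℕ) : Fin m), ihN,
            ha (σ.symm ((N : ℕ) : Fin m)), ha (((N : ℕ) : Fin m) + 1)]
      intro j
      have : j = ((j.val : ℕ) : Fin m) := by simp [Fin.cast_val_eq_self]
      rw [this]
      exact hN j.val
    have h1 : ∀ j, p.1 j = p'.1 j := by
      intro j
      have := ha j
      rw [hk j] at this
      exact sub_left_inj.mp this
    exact Prod.ext (funext h1) (funext hk)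
  calc ((univ : Finset ((Fin m → ZMod M) × (Fin m → ZMod M))).filter
      (fun p => ∀ j, p.1 j - p.2 j = p.1 (σ j + 1) - p.2 (σ j))).card
      ≤ ((univ : Finset ((Fin m → ZMod M) × ZMod M))).card :=
        Finset.card_le_card_of_injOn _ (fun p _ => Finset.mem_univ _) hinj
    _ = M ^ m * M := by
        rw [Finset.card_univ, Fintype.card_prod, Fintype.card_fun, ZMod.card,
          Fintype.card_fin]

lemma total_count (M m : ℕ) [NeZero M] [NeZero m] :
    ((univ : Finset ((Fin m → ZMod M) × (Fin m → ZMod M))).filter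
      (fun p => ∀ x : ZMod M, (univ.filter fun j => p.1 j - p.2 j = x).card
        = (univ.filter fun j => p.1 (j+1) - p.2 j = x).card)).card
      ≤ m.factorial * (M ^ m * M) := by
  have hsub : ((univ : Finset ((Fin m → ZMod M) × (Fin m → ZMod M))).filter
      (fun p => ∀ x : ZMod M, (univ.filter fun j => p.1 j - p.2 j = x).card
        = (univ.filter fun j => p.1 (j+1) - p.2 j = x).card))
      ⊆ (univ : Finset (Equiv.Perm (Fin m))).biUnion (fun σ =>
          (univ : Finset ((Fin m → ZMod M) × (Fin m → ZMod M))).filter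
            (fun p => ∀ j, p.1 j - p.2 j = p.1 (σ j + 1) - p.2 (σ j))) := by
    intro p hp
    rw [Finset.mem_filter] at hp
    obtain ⟨-, hp⟩ := hp
    obtain ⟨σ, hσ⟩ := exists_perm_of_counts (fun j => p.1 j - p.2 j)
      (fun j => p.1 (j+1) - p.2 j) hp
    rw [Finset.mem_biUnion]
    exact ⟨σ, Finset.mem_univ _, Finset.mem_filter.mpr ⟨Finset.mem_univ _,
      fun j => (hσ j).symm⟩⟩
  calc _ ≤ _ := Finset.card_le_card hsub
    _ ≤ ∑ σ : Equiv.Perm (Fin m), ((univ : Finset ((Fin m → ZMod M) × (Fin m → ZMod M))).filter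
          (fun p => ∀ j, p.1 j - p.2 j = p.1 (σ j + 1) - p.2 (σ j))).card :=
        Finset.card_biUnion_le
    _ ≤ ∑ _σ : Equiv.Perm (Fin m), M ^ m * M :=
        Finset.sum_le_sum fun σ _ => card_solutions_le M m σ
    _ = m.factorial * (M ^ m * M) := by
        rw [Finset.sum_const, Finset.card_univ, Fintype.card_perm, Fintype.card_fin, smul_eq_mul]



variable {Ω : Type*} [MeasurableSpace Ω] {P : Measure Ω} [IsProbabilityMeasure P]


lemma integral_complex_decomp (f : Ω → ℂ) (hf : Integrable f P) :
    ∫ ω, f ω ∂P = ((∫ ω, (f ω).re ∂P : ℝ) : ℂ) + ((∫ ω, (f ω).im ∂P : ℝ) : ℂ) * Complex.I := by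
  have h1 : Integrable (fun ω => ((f ω).re : ℂ)) P := hf.re.ofReal
  have h2 : Integrable (fun ω => ((f ω).im : ℂ) * Complex.I) P := hf.im.ofReal.mul_const _
  calc ∫ ω, f ω ∂P = ∫ ω, (((f ω).re : ℂ) + ((f ω).im : ℂ) * Complex.I) ∂P := by
        congr 1; funext ω; rw [Complex.re_add_im]
    _ = (∫ ω, ((f ω).re : ℂ) ∂P) + ∫ ω, ((f ω).im : ℂ) * Complex.I ∂P := integral_add h1 h2
    _ = (∫ ω, ((f ω).re : ℂ) ∂P) + (∫ ω, ((f ω).im : ℂ) ∂P) * Complex.I := by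
        rw [integral_mul_const]
    _ = ((∫ ω, (f ω).re ∂P : ℝ) : ℂ) + ((∫ ω, (f ω).im ∂P : ℝ) : ℂ) * Complex.I := by
        have key : ∀ g : Ω → ℝ, Integrable g P →
            ∫ ω, ((g ω : ℝ) : ℂ) ∂P = ((∫ ω, g ω ∂P : ℝ) : ℂ) := by
          intro g hg
          rw [← Complex.ofRealCLM_apply, ← ContinuousLinearMap.integral_comp_comm _ hg]
          simp
        have hre' : Integrable (fun ω => (f ω).re) P := hf.re
        have him' : Integrable (fun ω => (f ω).im) P := hf.im
        rw [key _ hre', key _ him']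

/-- complex version of `IndepFun.integral_mul`. -/
lemma indep_integral_mul_complex {X Y : Ω → ℂ} (h : IndepFun X Y P)
    (hX : Integrable X P) (hY : Integrable Y P) :
    ∫ ω, X ω * Y ω ∂P = (∫ ω, X ω ∂P) * ∫ ω, Y ω ∂P := by
  have hXY : Integrable (fun ω => X ω * Y ω) P := h.integrable_mul hX hY
  set Xr := fun ω => (X ω).re with hXr
  set Xi := fun ω => (X ω).im with hXi
  set Yr := fun ω => (Y ω).re with hYr
  set Yi := fun ω => (Y ω).im with hYi
  have iXr : Integrable Xr P := hX.re
  have iXi : Integrable Xi P := hX.im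
  have iYr : Integrable Yr P := hY.re
  have iYi : Integrable Yi P := hY.im
  have h1 : IndepFun Xr Yr P := h.comp Complex.measurable_re Complex.measurable_re
  have h2 : IndepFun Xr Yi P := h.comp Complex.measurable_re Complex.measurable_im
  have h3 : IndepFun Xi Yr P := h.comp Complex.measurable_im Complex.measurable_re
  have h4 : IndepFun Xi Yi P := h.comp Complex.measurable_im Complex.measurable_im
  have e1 : ∫ ω, Xr ω * Yr ω ∂P = (∫ ω, Xr ω ∂P) * ∫ ω, Yr ω ∂P :=
    h1.integral_fun_mul_eq_mul_integral iXr.aestronglyMeasurable iYr.aestronglyMeasurable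
  have e2 : ∫ ω, Xr ω * Yi ω ∂P = (∫ ω, Xr ω ∂P) * ∫ ω, Yi ω ∂P :=
    h2.integral_fun_mul_eq_mul_integral iXr.aestronglyMeasurable iYi.aestronglyMeasurable
  have e3 : ∫ ω, Xi ω * Yr ω ∂P = (∫ ω, Xi ω ∂P) * ∫ ω, Yr ω ∂P :=
    h3.integral_fun_mul_eq_mul_integral iXi.aestronglyMeasurable iYr.aestronglyMeasurable
  have e4 : ∫ ω, Xi ω * Yi ω ∂P = (∫ ω, Xi ω ∂P) * ∫ ω, Yi ω ∂P :=
    h4.integral_fun_mul_eq_mul_integral iXi.aestronglyMeasurable iYi.aestronglyMeasurable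
  have hXeq : ∫ ω, X ω ∂P = (∫ ω, Xr ω ∂P : ℝ) + (∫ ω, Xi ω ∂P : ℝ) * Complex.I :=
    integral_complex_decomp X hX
  have hYeq : ∫ ω, Y ω ∂P = (∫ ω, Yr ω ∂P : ℝ) + (∫ ω, Yi ω ∂P : ℝ) * Complex.I :=
    integral_complex_decomp Y hY
  have hXYeq : ∫ ω, X ω * Y ω ∂P
      = ((∫ ω, Xr ω * Yr ω ∂P : ℝ) - (∫ ω, Xi ω * Yi ω ∂P : ℝ))
        + ((∫ ω, Xr ω * Yi ω ∂P : ℝ) + (∫ ω, Xi ω * Yr ω ∂P : ℝ)) * Complex.I := by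
    rw [integral_complex_decomp _ hXY]
    have hre : (fun ω => ((fun ω => X ω * Y ω) ω).re) = fun ω => Xr ω * Yr ω - Xi ω * Yi ω := by
      funext ω; simp [Complex.mul_re, Xr, Xi, Yr, Yi]
    have him : (fun ω => ((fun ω => X ω * Y ω) ω).im) = fun ω => Xr ω * Yi ω + Xi ω * Yr ω := by
      funext ω; simp [Complex.mul_im, Xr, Xi, Yr, Yi]
    rw [show (fun x => (X x * Y x).re) = fun ω => Xr ω * Yr ω - Xi ω * Yi ω from hre,
        show (fun x => (X x * Y x).im) = fun ω => Xr ω * Yi ω + Xi ω * Yr ω from him]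
    have iA : Integrable (fun ω => Xr ω * Yr ω) P := h1.integrable_mul iXr iYr
    have iB : Integrable (fun ω => Xi ω * Yi ω) P := h4.integrable_mul iXi iYi
    have iC : Integrable (fun ω => Xr ω * Yi ω) P := h2.integrable_mul iXr iYi
    have iD : Integrable (fun ω => Xi ω * Yr ω) P := h3.integrable_mul iXi iYr
    rw [integral_sub iA iB, integral_add iC iD]
    push_cast
    ring
  rw [hXeq, hYeq, hXYeq, e1, e2, e3, e4]
  push_cast
  ring_nf
  rw [Complex.I_sq]
  ring

/-- integral of a product of independent, uniformly bounded complex random variables. -/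
lemma iIndep_integral_prod {ι : Type*} [Fintype ι] (X : ι → Ω → ℂ)
    (hmeas : ∀ i, Measurable (X i))
    (hindep : iIndepFun X P)
    (hnorm : ∀ i ω, ‖X i ω‖ ≤ 1) :
    ∫ ω, ∏ i, X i ω ∂P = ∏ i, ∫ ω, X i ω ∂P := by
  have hint : ∀ (s : Finset ι), Integrable (fun ω => ∏ i ∈ s, X i ω) P := by
    intro s
    refine (integrable_const (1:ℝ)).mono' ?_ (ae_of_all _ fun ω => ?_)
    · exact (Finset.measurable_prod s fun i _ => hmeas i).aestronglyMeasurable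
    · calc ‖∏ i ∈ s, X i ω‖ ≤ ∏ i ∈ s, ‖X i ω‖ := norm_prod_le _ _
        _ ≤ ∏ i ∈ s, 1 := Finset.prod_le_prod (fun _ _ => norm_nonneg _) (fun i _ => hnorm i ω)
        _ = 1 := by simp
  have hone : ∀ i, Integrable (X i) P := by
    intro i
    refine (integrable_const (1:ℝ)).mono' (hmeas i).aestronglyMeasurable
      (ae_of_all _ fun ω => hnorm i ω)
  suffices h : ∀ s : Finset ι, ∫ ω, ∏ i ∈ s, X i ω ∂P = ∏ i ∈ s, ∫ ω, X i ω ∂P from h univ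
  intro s
  induction s using Finset.induction_on with
  | empty => simp
  | insert _ _ hi =>
    rename_i a s ih
    have hIF : IndepFun (∏ j ∈ s, X j) (X a) P :=
      hindep.indepFun_finsetProd_of_notMem hmeas hi
    have hfn : (∏ j ∈ s, X j) = fun ω => ∏ j ∈ s, X j ω := by funext ω; simp
    have key := indep_integral_mul_complex hIF (by rw [hfn]; exact hint s) (hone a)
    simp only [hfn] at key
    have comm : ∫ ω, X a ω * ∏ i ∈ s, X i ω ∂P = ∫ ω, (∏ i ∈ s, X i ω) * X a ω ∂P := by
      congr 1; funext ω; ring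
    calc ∫ ω, ∏ i ∈ insert a s, X i ω ∂P = ∫ ω, X a ω * ∏ i ∈ s, X i ω ∂P := by
          congr 1; funext ω; rw [Finset.prod_insert hi]
      _ = (∫ ω, ∏ i ∈ s, X i ω ∂P) * ∫ ω, X a ω ∂P := by rw [comm, key]
      _ = ∏ i ∈ insert a s, ∫ ω, X i ω ∂P := by rw [Finset.prod_insert hi, ih]; ring



lemma eC_sum {ι : Type*} [Fintype ι] (f : ι → ℝ) : ∏ i, eC (f i) = eC (∑ i, f i) := by
  simp only [eC]
  rw [← Complex.exp_sum]
  congr 1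
  push_cast
  rw [Finset.mul_sum]

lemma eC_int_mul' (nn : ℤ) (t : ℝ) :
    eC ((nn : ℝ) * t) = Complex.exp (2 * Real.pi * Complex.I * nn * t) := by
  simp only [eC]; congr 1; push_cast; ring

lemma abs_exp_two_pi_int (nn : ℤ) (t : ℝ) :
    ‖Complex.exp (2 * Real.pi * Complex.I * nn * t)‖ = 1 := by
  rw [Complex.norm_exp]
  have : (2 * (Real.pi:ℂ) * Complex.I * nn * t).re = 0 := by
    simp [Complex.mul_re, Complex.mul_im]
  rw [this, Real.exp_zero]

variable {Ω : Type*} [MeasurableSpace Ω] {P : Measure Ω} [IsProbabilityMeasure P]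

lemma integral_eC_uniform (nn : ℤ) (yv : Ω → ℝ) (hy : Measurable yv)
    (hmap : Measure.map yv P = volume.restrict (Set.Ico (0:ℝ) 1)) :
    ∫ ω, Complex.exp (2 * Real.pi * Complex.I * nn * (yv ω)) ∂P
      = if nn = 0 then 1 else 0 := by
  have hφcont : Continuous (fun t : ℝ => Complex.exp (2 * Real.pi * Complex.I * nn * t)) := by
    apply Complex.continuous_exp.comp
    exact continuous_const.mul Complex.continuous_ofReal
  have hmapint : ∫ ω, Complex.exp (2 * Real.pi * Complex.I * nn * (yv ω)) ∂P
      = ∫ t, Complex.exp (2 * Real.pi * Complex.I * nn * t) ∂(Measure.map yv P) := by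
    rw [integral_map hy.aemeasurable hφcont.aestronglyMeasurable]
  rw [hmapint, hmap]
  by_cases hn : nn = 0
  · subst hn
    simp only [Int.cast_zero, mul_zero, zero_mul, Complex.exp_zero]
    rw [integral_const]
    simp [Real.volume_Ico]
  · rw [if_neg hn]
    have hc : (2 * (Real.pi:ℂ) * Complex.I * nn) ≠ 0 := by
      apply mul_ne_zero
      apply mul_ne_zero
      apply mul_ne_zero
      · norm_num
      · exact_mod_cast Real.pi_ne_zero
      · exact Complex.I_ne_zero
      · exact_mod_cast hn
    have h1 : ∫ t in Set.Ico (0:ℝ) 1, Complex.exp (2 * Real.pi * Complex.I * nn * t)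
        = ∫ t in Set.Ioo (0:ℝ) 1, Complex.exp (2 * Real.pi * Complex.I * nn * t) :=
      integral_Ico_eq_integral_Ioo
    have h2 : ∫ t in Set.Ioc (0:ℝ) 1, Complex.exp (2 * Real.pi * Complex.I * nn * t)
        = ∫ t in Set.Ioo (0:ℝ) 1, Complex.exp (2 * Real.pi * Complex.I * nn * t) :=
      integral_Ioc_eq_integral_Ioo
    rw [h1, ← h2, ← intervalIntegral.integral_of_le (zero_le_one' ℝ)]
    rw [integral_exp_mul_complex hc]
    simp only [Complex.ofReal_one, Complex.ofReal_zero, mul_one, mul_zero, Complex.exp_zero]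
    have : Complex.exp (2 * Real.pi * Complex.I * nn) = 1 := by
      rw [show (2 * (Real.pi:ℂ) * Complex.I * nn) = nn * (2 * Real.pi * Complex.I) by ring]
      exact Complex.exp_int_mul_two_pi_mul_I nn
    rw [this]
    simp


/-- Expectation of a product of Steinhaus phases. -/
lemma expectation_term {m : ℕ} (M : ℕ) [NeZero M] (y : ZMod M → Ω → ℝ)
    (hymeas : ∀ x, Measurable (y x))
    (hyindep : iIndepFun y P)
    (hymap : ∀ x, Measure.map (y x) P = volume.restrict (Set.Ico (0:ℝ) 1))
    (a b : Fin m → ZMod M) :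
    ∫ ω, ∏ j, eC (y (a j) ω - y (b j) ω) ∂P
      = if (∀ x : ZMod M, (univ.filter fun j => a j = x).card
          = (univ.filter fun j => b j = x).card) then 1 else 0 := by
  set n : ZMod M → ℤ := fun x => ((univ.filter fun j => a j = x).card : ℤ)
    - ((univ.filter fun j => b j = x).card : ℤ) with hn
  have hsum_fiber : ∀ (c : Fin m → ZMod M) (ω : Ω),
      ∑ j, y (c j) ω = ∑ x : ZMod M, ((univ.filter fun j => c j = x).card : ℝ) * y x ω := by
    intro c ω
    have h1 : ∀ j, y (c j) ω = ∑ x : ZMod M, if c j = x then y x ω else 0 := by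
      intro j
      rw [Finset.sum_ite_eq univ (c j) (fun x => y x ω)]
      simp
    calc ∑ j, y (c j) ω = ∑ j, ∑ x : ZMod M, if c j = x then y x ω else 0 :=
          Finset.sum_congr rfl fun j _ => h1 j
      _ = ∑ x : ZMod M, ∑ j, if c j = x then y x ω else 0 := Finset.sum_comm
      _ = ∑ x : ZMod M, ((univ.filter fun j => c j = x).card : ℝ) * y x ω := by
          apply Finset.sum_congr rfl
          intro x _
          rw [Finset.sum_ite, Finset.sum_const, Finset.sum_const_zero, add_zero, nsmul_eq_mul]
  have hstep : ∀ ω, ∏ j, eC (y (a j) ω - y (b j) ω)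
      = ∏ x : ZMod M, Complex.exp (2 * Real.pi * Complex.I * (n x) * y x ω) := by
    intro ω
    rw [eC_sum]
    have : ∑ j, (y (a j) ω - y (b j) ω) = ∑ x : ZMod M, ((n x : ℝ) * y x ω) := by
      rw [Finset.sum_sub_distrib, hsum_fiber a ω, hsum_fiber b ω, ← Finset.sum_sub_distrib]
      apply Finset.sum_congr rfl
      intro x _
      rw [hn]
      push_cast
      ring
    rw [this, ← eC_sum]
    apply Finset.prod_congr rfl
    intro x _
    exact eC_int_mul' (n x) (y x ω)
  have hXmeas : ∀ x : ZMod M, Measurable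
      (fun ω => Complex.exp (2 * Real.pi * Complex.I * (n x) * y x ω)) := by
    intro x
    apply Measurable.comp (Complex.measurable_exp)
    exact (measurable_const.mul (Complex.measurable_ofReal.comp (hymeas x)))
  have hXindep : iIndepFun
      (fun x ω => Complex.exp (2 * Real.pi * Complex.I * (n x) * y x ω)) P := by
    have := hyindep.comp (fun x t => Complex.exp (2 * Real.pi * Complex.I * (n x) * t))
      (fun x => Complex.measurable_exp.comp
        (measurable_const.mul Complex.measurable_ofReal))
    exact this
  have hXnorm : ∀ (x : ZMod M) ω,
      ‖Complex.exp (2 * Real.pi * Complex.I * (n x) * y x ω)‖ ≤ 1 := by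
    intro x ω
    rw [abs_exp_two_pi_int]
  calc ∫ ω, ∏ j, eC (y (a j) ω - y (b j) ω) ∂P
      = ∫ ω, ∏ x : ZMod M, Complex.exp (2 * Real.pi * Complex.I * (n x) * y x ω) ∂P := by
        congr 1; funext ω; exact hstep ω
    _ = ∏ x : ZMod M, ∫ ω, Complex.exp (2 * Real.pi * Complex.I * (n x) * y x ω) ∂P :=
        iIndep_integral_prod _ hXmeas hXindep hXnorm
    _ = ∏ x : ZMod M, if n x = 0 then (1:ℂ) else 0 := by
        apply Finset.prod_congr rfl
        intro x _
        exact integral_eC_uniform (n x) (y x) (hymeas x) (hymap x)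
    _ = if (∀ x : ZMod M, n x = 0) then 1 else 0 := Fintype.prod_boole
    _ = if (∀ x : ZMod M, (univ.filter fun j => a j = x).card
          = (univ.filter fun j => b j = x).card) then 1 else 0 := by
        congr 1
        simp only [eq_iff_iff]
        constructor
        · intro h x
          have h2 := sub_eq_zero.mp (h x)
          exact_mod_cast h2
        · intro h x
          rw [hn]
          simp only [h x, sub_self]

end Stmt4Aux

/-- If every nonzero-frequency exponential sum over each fiber A_k = {ℓ : (k,ℓ)∈Λ} is
bounded by L, then |E[Tr(H^m)]| ≤ L^m · m! · M for H = Φ_Λ Φ_Λ* − (|Λ|/M)·I. -/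
theorem stmt4 (M : ℕ) [NeZero M] {Ω : Type*} [MeasurableSpace Ω] (P : Measure Ω)
    [IsProbabilityMeasure P] (g : Ω → ZMod M → ℂ) (hg : IsSteinhaus M P g)
    (Λ : Finset (ZMod M × ZMod M))
    (H : Ω → Matrix (ZMod M) (ZMod M) ℂ)
    (hH : ∀ ω, H ω = frameOp M Λ (g ω) - ((Λ.card : ℂ) / (M : ℂ)) • 1)
    (A : ZMod M → Finset (ZMod M))
    (hA : ∀ k, A k = Finset.univ.filter fun l => (k, l) ∈ Λ)
    (m : ℕ) (hm : 1 ≤ m) (L : ℝ) (hL : 0 < L)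
    (hbound : ∀ k q : ZMod M, q ≠ 0 →
      ‖∑ l ∈ A k,
          Complex.exp (2 * (Real.pi : ℂ) * Complex.I * (l.val : ℂ) * (q.val : ℂ) / (M : ℂ))‖
        ≤ L) :
    ‖∫ ω, Matrix.trace ((H ω) ^ m) ∂P‖ ≤ L ^ m * (m.factorial : ℝ) * M := by
  classical
  obtain ⟨y, hymeas, hyindep, hymap, hgdef⟩ := hg
  obtain ⟨q, rfl⟩ : ∃ q, m = q + 1 := ⟨m - 1, by omega⟩
  haveI : NeZero (q + 1) := ⟨Nat.succ_ne_zero q⟩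
  have hMpos : (0:ℝ) < M := by
    have := Nat.pos_of_ne_zero (NeZero.ne M); exact_mod_cast this
  have hMC : (M:ℂ) ≠ 0 := by exact_mod_cast (NeZero.ne M)
  set c : ZMod M → ZMod M → ℂ := fun k p => ∑ l ∈ A k, Stmt4Aux.ec M ((l.val : ℤ) * p.val)
    with hcdef
  have hc : ∀ k p, p ≠ 0 → ‖c k p‖ ≤ L := by
    intro k p hp
    have heq : c k p = ∑ l ∈ A k, Complex.exp
        (2 * (Real.pi : ℂ) * Complex.I * (l.val : ℂ) * (p.val : ℂ) / (M : ℂ)) := by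
      rw [hcdef]
      apply Finset.sum_congr rfl
      intro l _
      rw [Stmt4Aux.ec]
      congr 1
      push_cast
      ring
    rw [heq]
    exact hbound k p hp
  -- step 1: explicit formula for tfShift
  have tf_eq : ∀ ω (k l x : ZMod M), tfShift M k l (g ω) x
      = Stmt4Aux.ec M ((l.val : ℤ) * x.val)
        * (((1 / Real.sqrt M : ℝ) : ℂ) * Stmt4Aux.eC (y (x - k) ω)) := by
    intro ω k l x
    have e1 : Complex.exp (2 * (Real.pi:ℂ) * Complex.I * (l.val : ℂ) * (x.val : ℂ) / (M:ℂ))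
        = Stmt4Aux.ec M ((l.val : ℤ) * x.val) := by
      rw [Stmt4Aux.ec]; congr 1; push_cast; ring
    calc tfShift M k l (g ω) x
        = Complex.exp (2 * (Real.pi:ℂ) * Complex.I * (l.val : ℂ) * (x.val : ℂ) / (M:ℂ))
          * g ω (x - k) := rfl
      _ = _ := by
          rw [e1, hgdef ω (x - k)]
          congr 2
  -- step 2: frame operator entries
  have frame_eq : ∀ ω (m₁ m₂ : ZMod M), frameOp M Λ (g ω) m₁ m₂
      = ∑ kl ∈ Λ, Stmt4Aux.ec M ((kl.2.val : ℤ) * m₁.val - (kl.2.val : ℤ) * m₂.val)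
          * ((M:ℂ)⁻¹ * Stmt4Aux.eC (y (m₁ - kl.1) ω - y (m₂ - kl.1) ω)) := by
    intro ω m₁ m₂
    apply Finset.sum_congr rfl
    intro kl _
    rw [tf_eq ω kl.1 kl.2 m₁, tf_eq ω kl.1 kl.2 m₂]
    rw [map_mul, map_mul, Stmt4Aux.conj_ec, Stmt4Aux.conj_eC, Complex.conj_ofReal]
    have h3 : Stmt4Aux.ec M ((kl.2.val : ℤ) * m₁.val - (kl.2.val : ℤ) * m₂.val)
        = Stmt4Aux.ec M ((kl.2.val : ℤ) * m₁.val) * Stmt4Aux.ec M (-((kl.2.val : ℤ) * m₂.val)) := by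
      rw [sub_eq_add_neg, Stmt4Aux.ec_add]
    have h4 : Stmt4Aux.eC (y (m₁ - kl.1) ω - y (m₂ - kl.1) ω)
        = Stmt4Aux.eC (y (m₁ - kl.1) ω) * Stmt4Aux.eC (-(y (m₂ - kl.1) ω)) := by
      rw [sub_eq_add_neg, Stmt4Aux.eC_add]
    have h5 : ((1 / Real.sqrt M : ℝ) : ℂ) * ((1 / Real.sqrt M : ℝ) : ℂ) = (M:ℂ)⁻¹ := by
      rw [← Complex.ofReal_mul]
      have : (1 / Real.sqrt M) * (1 / Real.sqrt M) = (M:ℝ)⁻¹ := by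
        rw [div_mul_div_comm, one_mul, Real.mul_self_sqrt (by positivity)]
        rw [one_div]
      rw [this, Complex.ofReal_inv, Complex.ofReal_natCast]
    rw [h3, h4, ← h5]
    ring
  -- step 3: diagonal entries vanish
  have hdiag : ∀ ω x, H ω x x = 0 := by
    intro ω x
    rw [hH ω]
    simp only [Matrix.sub_apply, Matrix.smul_apply, Matrix.one_apply_eq, smul_eq_mul, mul_one]
    rw [frame_eq]
    have hterm : ∀ kl ∈ Λ, Stmt4Aux.ec M ((kl.2.val : ℤ) * x.val - (kl.2.val : ℤ) * x.val)
        * ((M:ℂ)⁻¹ * Stmt4Aux.eC (y (x - kl.1) ω - y (x - kl.1) ω)) = (M:ℂ)⁻¹ := by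
      intro kl _
      rw [sub_self, sub_self, Stmt4Aux.ec_zero, Stmt4Aux.eC_zero]
      ring
    rw [Finset.sum_congr rfl hterm, Finset.sum_const, nsmul_eq_mul, div_eq_mul_inv]
    ring
  -- step 4: off-diagonal entries
  have hoff : ∀ ω (m₁ m₂ : ZMod M), m₁ ≠ m₂ → H ω m₁ m₂
      = ∑ k : ZMod M, c k (m₁ - m₂)
          * ((M:ℂ)⁻¹ * Stmt4Aux.eC (y (m₁ - k) ω - y (m₂ - k) ω)) := by
    intro ω m₁ m₂ hne
    rw [hH ω]
    simp only [Matrix.sub_apply, Matrix.smul_apply, smul_eq_mul]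
    rw [Matrix.one_apply_ne hne, mul_zero, sub_zero, frame_eq]
    have fib : ∀ F : ZMod M × ZMod M → ℂ, ∑ kl ∈ Λ, F kl = ∑ k : ZMod M, ∑ l ∈ A k, F (k, l) := by
      intro F
      have h1 : ∑ kl ∈ Λ, F kl
          = ∑ kl ∈ (univ : Finset (ZMod M × ZMod M)), if kl ∈ Λ then F kl else 0 := by
        rw [Finset.sum_ite_mem, Finset.univ_inter]
      rw [h1, ← Finset.univ_product_univ, Finset.sum_product]
      apply Finset.sum_congr rfl
      intro k _
      rw [hA k, Finset.sum_filter]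
    rw [fib]
    apply Finset.sum_congr rfl
    intro k _
    rw [hcdef, Finset.sum_mul]
    apply Finset.sum_congr rfl
    intro l _
    have harg : Stmt4Aux.ec M ((l.val : ℤ) * m₁.val - (l.val : ℤ) * m₂.val)
        = Stmt4Aux.ec M ((l.val : ℤ) * (m₁ - m₂).val) := by
      apply Stmt4Aux.ec_congr
      push_cast [ZMod.natCast_val, ZMod.cast_id]
      ring
    rw [harg]
  -- step 5: expand the trace
  set D : Finset (Fin (q+1) → ZMod M) := univ.filter (fun f => ∀ t, f t ≠ f (t + 1)) with hD
  have htrace : ∀ ω, Matrix.trace ((H ω) ^ (q+1))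
      = ∑ f ∈ D, ∑ κ : Fin (q+1) → ZMod M,
          (((M:ℂ)⁻¹) ^ (q+1) * ∏ t, c (κ t) (f t - f (t+1))) *
            ∏ t, Stmt4Aux.eC (y (f t - κ t) ω - y (f (t+1) - κ t) ω) := by
    intro ω
    rw [Stmt4Aux.trace_pow]
    have hsplit := Finset.sum_filter_add_sum_filter_not (univ : Finset (Fin (q+1) → ZMod M))
      (fun f => ∀ t, f t ≠ f (t+1)) (fun f => ∏ t, H ω (f t) (f (t+1)))
    rw [← hsplit]
    have hzero : ∑ f ∈ univ.filter (fun f : Fin (q+1) → ZMod M => ¬ ∀ t, f t ≠ f (t+1)),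
        ∏ t, H ω (f t) (f (t+1)) = 0 := by
      apply Finset.sum_eq_zero
      intro f hf
      rw [Finset.mem_filter] at hf
      push_neg at hf
      obtain ⟨t, ht⟩ := hf.2
      refine Finset.prod_eq_zero (Finset.mem_univ t) ?_
      rw [ht]
      exact hdiag ω (f (t+1))
    rw [hzero, add_zero]
    apply Finset.sum_congr rfl
    intro f hf
    rw [Finset.mem_filter] at hf
    have hf2 := hf.2
    have hent : ∀ t : Fin (q+1), H ω (f t) (f (t+1))
        = ∑ k, c k (f t - f (t+1)) * ((M:ℂ)⁻¹ * Stmt4Aux.eC (y (f t - k) ω - y (f (t+1) - k) ω)) :=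
      fun t => hoff ω _ _ (hf2 t)
    rw [Finset.prod_congr rfl (fun t _ => hent t)]
    rw [Finset.prod_univ_sum]
    rw [Fintype.piFinset_univ]
    apply Finset.sum_congr rfl
    intro κ _
    rw [Finset.prod_mul_distrib, Finset.prod_mul_distrib, Finset.prod_const, Finset.card_univ,
      Fintype.card_fin]
    ring
  -- step 6: integrability
  have hInt : ∀ (a b : Fin (q+1) → ZMod M) (C : ℂ),
      Integrable (fun ω => C * ∏ t, Stmt4Aux.eC (y (a t) ω - y (b t) ω)) P := by
    intro a b C
    apply Integrable.const_mul
    refine (integrable_const (1:ℝ)).mono' ?_ (ae_of_all _ fun ω => ?_)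
    · apply Measurable.aestronglyMeasurable
      apply Finset.measurable_prod
      intro t _
      simp only [Stmt4Aux.eC]
      exact Complex.measurable_exp.comp (measurable_const.mul
        (Complex.measurable_ofReal.comp ((hymeas (a t)).sub (hymeas (b t)))))
    · calc ‖∏ t, Stmt4Aux.eC (y (a t) ω - y (b t) ω)‖
          ≤ ∏ t, ‖Stmt4Aux.eC (y (a t) ω - y (b t) ω)‖ := norm_prod_le _ _
        _ = 1 := by
            apply Finset.prod_eq_one
            intro t _
            rw [Stmt4Aux.abs_eC]
  -- step 7: the expectation
  have hE : ∫ ω, Matrix.trace ((H ω) ^ (q+1)) ∂P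
      = ∑ f ∈ D, ∑ κ : Fin (q+1) → ZMod M,
          (((M:ℂ)⁻¹) ^ (q+1) * ∏ t, c (κ t) (f t - f (t+1))) *
            (if (∀ x : ZMod M, (univ.filter fun j => f j - κ j = x).card
              = (univ.filter fun j => f (j+1) - κ j = x).card) then 1 else 0) := by
    have h0 : ∫ ω, Matrix.trace ((H ω) ^ (q+1)) ∂P
        = ∫ ω, (∑ f ∈ D, ∑ κ : Fin (q+1) → ZMod M,
            (((M:ℂ)⁻¹) ^ (q+1) * ∏ t, c (κ t) (f t - f (t+1))) *
              ∏ t, Stmt4Aux.eC (y (f t - κ t) ω - y (f (t+1) - κ t) ω)) ∂P := by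
      congr 1
      funext ω
      exact htrace ω
    rw [h0]
    rw [integral_finset_sum D (fun f _ => integrable_finset_sum _ (fun κ _ => hInt _ _ _))]
    apply Finset.sum_congr rfl
    intro f _
    rw [integral_finset_sum _ (fun κ _ => hInt _ _ _)]
    apply Finset.sum_congr rfl
    intro κ _
    rw [MeasureTheory.integral_const_mul]
    congr 1
    exact Stmt4Aux.expectation_term M y hymeas hyindep hymap
      (fun t => f t - κ t) (fun t => f (t+1) - κ t)
  rw [hE]
  -- step 8: the estimate
  have habs : ∀ f ∈ D, ∀ κ : Fin (q+1) → ZMod M,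
      ‖(((M:ℂ)⁻¹) ^ (q+1) * ∏ t, c (κ t) (f t - f (t+1))) *
          (if (∀ x : ZMod M, (univ.filter fun j => f j - κ j = x).card
            = (univ.filter fun j => f (j+1) - κ j = x).card) then 1 else 0)‖
        ≤ ((M:ℝ)⁻¹) ^ (q+1) * L ^ (q+1) *
          (if (∀ x : ZMod M, (univ.filter fun j => f j - κ j = x).card
            = (univ.filter fun j => f (j+1) - κ j = x).card) then 1 else 0) := by
    intro f hf κ
    rw [hD, Finset.mem_filter] at hf
    rw [norm_mul, norm_mul, norm_pow, norm_inv, Complex.norm_natCast]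
    have h1 : ‖∏ t, c (κ t) (f t - f (t+1))‖ ≤ L ^ (q+1) := by
      rw [norm_prod]
      calc ∏ t, ‖c (κ t) (f t - f (t+1))‖
          ≤ ∏ _t : Fin (q+1), L := by
            apply Finset.prod_le_prod
            · intro t _; exact norm_nonneg _
            · intro t _
              exact hc _ _ (sub_ne_zero.mpr (hf.2 t))
        _ = L ^ (q+1) := by rw [Finset.prod_const, Finset.card_univ, Fintype.card_fin]
    have h2 : ‖(if (∀ x : ZMod M, (univ.filter fun j => f j - κ j = x).card
        = (univ.filter fun j => f (j+1) - κ j = x).card) then (1:ℂ) else 0)‖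
        = (if (∀ x : ZMod M, (univ.filter fun j => f j - κ j = x).card
        = (univ.filter fun j => f (j+1) - κ j = x).card) then (1:ℝ) else 0) := by
      split <;> simp
    rw [h2]
    have hnn : (0:ℝ) ≤ (if (∀ x : ZMod M, (univ.filter fun j => f j - κ j = x).card
        = (univ.filter fun j => f (j+1) - κ j = x).card) then (1:ℝ) else 0) := by positivity
    have hMn : (0:ℝ) ≤ ((M:ℝ))⁻¹ ^ (q+1) := by positivity
    calc ((M:ℝ))⁻¹ ^ (q+1) * ‖∏ t, c (κ t) (f t - f (t+1))‖ * _
        ≤ ((M:ℝ))⁻¹ ^ (q+1) * L ^ (q+1) * _ := by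
          apply mul_le_mul_of_nonneg_right _ hnn
          exact mul_le_mul_of_nonneg_left h1 hMn
      _ = _ := rfl
  calc ‖∑ f ∈ D, ∑ κ : Fin (q+1) → ZMod M,
        (((M:ℂ)⁻¹) ^ (q+1) * ∏ t, c (κ t) (f t - f (t+1))) *
          (if (∀ x : ZMod M, (univ.filter fun j => f j - κ j = x).card
            = (univ.filter fun j => f (j+1) - κ j = x).card) then 1 else 0)‖
      ≤ ∑ f ∈ D, ∑ κ : Fin (q+1) → ZMod M, ((M:ℝ)⁻¹) ^ (q+1) * L ^ (q+1) *
          (if (∀ x : ZMod M, (univ.filter fun j => f j - κ j = x).card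
            = (univ.filter fun j => f (j+1) - κ j = x).card) then 1 else 0) := by
        refine le_trans (norm_sum_le _ _) ?_
        apply Finset.sum_le_sum
        intro f hf
        refine le_trans (norm_sum_le _ _) ?_
        apply Finset.sum_le_sum
        intro κ _
        exact habs f hf κ
    _ = ((M:ℝ)⁻¹) ^ (q+1) * L ^ (q+1) * ∑ f ∈ D, ∑ κ : Fin (q+1) → ZMod M,
          (if (∀ x : ZMod M, (univ.filter fun j => f j - κ j = x).card
            = (univ.filter fun j => f (j+1) - κ j = x).card) then 1 else 0) := by
        rw [Finset.mul_sum]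
        apply Finset.sum_congr rfl
        intro f _
        rw [Finset.mul_sum]
    _ ≤ ((M:ℝ)⁻¹) ^ (q+1) * L ^ (q+1) *
          (((q+1).factorial : ℝ) * ((M:ℝ) ^ (q+1) * (M:ℝ))) := by
        apply mul_le_mul_of_nonneg_left _ (by positivity)
        have hsub : ∑ f ∈ D, ∑ κ : Fin (q+1) → ZMod M,
            (if (∀ x : ZMod M, (univ.filter fun j => f j - κ j = x).card
              = (univ.filter fun j => f (j+1) - κ j = x).card) then (1:ℝ) else 0)
            ≤ ∑ f : Fin (q+1) → ZMod M, ∑ κ : Fin (q+1) → ZMod M,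
              (if (∀ x : ZMod M, (univ.filter fun j => f j - κ j = x).card
                = (univ.filter fun j => f (j+1) - κ j = x).card) then (1:ℝ) else 0) := by
          apply Finset.sum_le_sum_of_subset_of_nonneg (Finset.filter_subset _ _)
          intro f _ _
          apply Finset.sum_nonneg
          intro κ _
          positivity
        refine le_trans hsub ?_
        have hprod : ∑ f : Fin (q+1) → ZMod M, ∑ κ : Fin (q+1) → ZMod M,
            (if (∀ x : ZMod M, (univ.filter fun j => f j - κ j = x).card
              = (univ.filter fun j => f (j+1) - κ j = x).card) then (1:ℝ) else 0)
            = ∑ p : (Fin (q+1) → ZMod M) × (Fin (q+1) → ZMod M),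
              (if (∀ x : ZMod M, (univ.filter fun j => p.1 j - p.2 j = x).card
                = (univ.filter fun j => p.1 (j+1) - p.2 j = x).card) then (1:ℝ) else 0) := by
          rw [Fintype.sum_prod_type]
        rw [hprod, Finset.sum_boole]
        have := Stmt4Aux.total_count M (q+1)
        calc ((Finset.filter _ Finset.univ).card : ℝ)
            ≤ (((q+1).factorial * (M ^ (q+1) * M) : ℕ) : ℝ) := by exact_mod_cast this
          _ = ((q+1).factorial : ℝ) * ((M:ℝ) ^ (q+1) * (M:ℝ)) := by push_cast; ring
    _ = L ^ (q+1) * (((q+1).factorial : ℝ)) * (M:ℝ) := by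
        have hMq : ((M:ℝ)⁻¹) ^ (q+1) * (M:ℝ) ^ (q+1) = 1 := by
          rw [← mul_pow, inv_mul_cancel₀ hMpos.ne', one_pow]
        linear_combination (L ^ (q+1) * ((q+1).factorial : ℝ) * (M:ℝ)) * hMq
end
end

section
/- Let g ∈ ℂ^M be a window and Λ = F × ℤ_M for some nonempty F ⊆ ℤ_M. Then the Gabor system (g,Λ) = {π(k,ℓ)g}_{(k,ℓ)∈Λ} spans ℂ^M if and only if for every m ∈ ℤ_M one has Σ_{k∈F} |g(m−k)|² ≠ 0 (that is, min_{m∈ℤ_M} ‖g_{F_m}‖₂ ≠ 0, where F_m = {m−k : k∈F} and g_{F_m} is the restriction of g to F_m). -/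
open MeasureTheory ProbabilityTheory Complex Finset
open scoped Real BigOperators Classical

noncomputable section

lemma zsum_val {M : ℕ} [NeZero M] (f : ℕ → ℂ) :
    ∑ l : ZMod M, f l.val = ∑ j ∈ Finset.range M, f j := by
  refine Finset.sum_nbij' (fun l => l.val) (fun j => (j : ZMod M)) ?_ ?_ ?_ ?_ ?_
  · intro l _; exact Finset.mem_range.2 (ZMod.val_lt l)
  · intro j _; exact Finset.mem_univ _
  · intro l _; exact ZMod.natCast_rightInverse l
  · intro j hj; exact ZMod.val_cast_of_lt (Finset.mem_range.1 hj)
  · intro l _; rfl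

lemma rou_sum {M : ℕ} [NeZero M] (a b : ZMod M) :
    ∑ j ∈ Finset.range M, Complex.exp (2 * (Real.pi : ℂ) * Complex.I *
      (((a.val : ℂ) - (b.val : ℂ)) / (M : ℂ))) ^ j = if a = b then (M : ℂ) else 0 := by
  have hM : (M : ℂ) ≠ 0 := Nat.cast_ne_zero.2 (NeZero.ne M)
  by_cases hab : a = b
  · simp [hab]
  · rw [if_neg hab]
    set z : ℤ := (a.val : ℤ) - (b.val : ℤ) with hz
    have hz0 : z ≠ 0 := by
      simp only [hz, sub_ne_zero]
      exact_mod_cast fun h => hab (ZMod.val_injective M h)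
    have hzlt : |z| < (M : ℤ) := by
      have ha := ZMod.val_lt a; have hb := ZMod.val_lt b
      rw [abs_lt]; omega
    set ζ : ℂ := Complex.exp (2 * (Real.pi : ℂ) * Complex.I *
      (((a.val : ℂ) - (b.val : ℂ)) / (M : ℂ))) with hζ
    have hζ1 : ζ ≠ 1 := by
      intro hone
      rw [hζ, Complex.exp_eq_one_iff] at hone
      obtain ⟨n, hn⟩ := hone
      have h2 : (2 : ℂ) * Real.pi * Complex.I ≠ 0 := by
        simp [Real.pi_ne_zero, Complex.I_ne_zero]
      have hX : ((a.val : ℂ) - (b.val : ℂ)) / (M : ℂ) = n := by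
        apply mul_left_cancel₀ h2
        rw [hn]; ring
      have hC : ((a.val : ℂ) - (b.val : ℂ)) = n * M := by
        rw [div_eq_iff hM] at hX; exact hX
      have hzz : z = n * M := by
        have : (z : ℂ) = ((n * (M : ℤ) : ℤ) : ℂ) := by push_cast [hz]; exact hC
        exact_mod_cast this
      rcases eq_or_ne n 0 with h0 | h0
      · rw [h0] at hzz; simp at hzz; exact hz0 hzz
      · have h1 : 1 ≤ |n| := Int.one_le_abs h0
        have hMle : (M : ℤ) ≤ |z| := by
          rw [hzz, abs_mul, abs_of_nonneg (by positivity : (0:ℤ) ≤ (M:ℤ))]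
          calc (M : ℤ) = 1 * M := (one_mul _).symm
            _ ≤ |n| * M := mul_le_mul_of_nonneg_right h1 (by positivity)
        omega
    have hζM : ζ ^ M = 1 := by
      rw [hζ, ← Complex.exp_nat_mul, Complex.exp_eq_one_iff]
      refine ⟨z, ?_⟩
      push_cast [hz]
      field_simp
    rw [geom_sum_eq hζ1, hζM, sub_self, zero_div]

/-- For Λ = F × ℤ_M, the Gabor system (g,Λ) spans ℂ^M iff
Σ_{k∈F}|g(m−k)|² ≠ 0 for every m. -/
theorem stmt8 (M : ℕ) [NeZero M] (g : ZMod M → ℂ) (F : Finset (ZMod M)) (hF : F.Nonempty) :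
    Submodule.span ℂ
        {v : ZMod M → ℂ | ∃ kl ∈ F ×ˢ (Finset.univ : Finset (ZMod M)),
          v = tfShift M kl.1 kl.2 g} = ⊤ ↔
      ∀ m : ZMod M, ∑ k ∈ F, ‖g (m - k)‖ ^ 2 ≠ 0 := by
  constructor
  · intro hspan m hsum
    have hg : ∀ k ∈ F, g (m - k) = 0 := by
      intro k hk
      have := (Finset.sum_eq_zero_iff_of_nonneg (fun k _ => by positivity)).1 hsum k hk
      have := pow_eq_zero_iff (n := 2) (by norm_num) |>.1 this
      exact norm_eq_zero.1 this
    have hker : Submodule.span ℂ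
        {v : ZMod M → ℂ | ∃ kl ∈ F ×ˢ (Finset.univ : Finset (ZMod M)),
          v = tfShift M kl.1 kl.2 g} ≤ LinearMap.ker (LinearMap.proj (R := ℂ)
            (φ := fun _ : ZMod M => ℂ) m) := by
      rw [Submodule.span_le]
      rintro v ⟨kl, hkl, rfl⟩
      have hk : kl.1 ∈ F := (Finset.mem_product.1 hkl).1
      simp [LinearMap.mem_ker, tfShift, hg kl.1 hk]
    have hmem : (Pi.single m 1 : ZMod M → ℂ) ∈ Submodule.span ℂ
        {v : ZMod M → ℂ | ∃ kl ∈ F ×ˢ (Finset.univ : Finset (ZMod M)),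
          v = tfShift M kl.1 kl.2 g} := hspan ▸ Submodule.mem_top
    have := hker hmem
    simp [LinearMap.mem_ker] at this
  · intro h
    rw [eq_top_iff]
    intro x _
    have hsingle : ∀ m : ZMod M, (Pi.single m 1 : ZMod M → ℂ) ∈ Submodule.span ℂ
        {v : ZMod M → ℂ | ∃ kl ∈ F ×ˢ (Finset.univ : Finset (ZMod M)),
          v = tfShift M kl.1 kl.2 g} := by
      intro m
      obtain ⟨k, hk, hgk⟩ : ∃ k ∈ F, g (m - k) ≠ 0 := by
        by_contra hc
        push_neg at hc
        exact h m (Finset.sum_eq_zero fun k hk => by simp [hc k hk])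
      have hc0 : (M : ℂ) * g (m - k) ≠ 0 :=
        mul_ne_zero (Nat.cast_ne_zero.2 (NeZero.ne M)) hgk
      have hmem : (∑ l : ZMod M,
          Complex.exp (-(2 * (Real.pi : ℂ) * Complex.I) * (l.val : ℂ) * (m.val : ℂ) / (M : ℂ))
            • tfShift M k l g) ∈ Submodule.span ℂ
          {v : ZMod M → ℂ | ∃ kl ∈ F ×ˢ (Finset.univ : Finset (ZMod M)),
            v = tfShift M kl.1 kl.2 g} := by
        refine Submodule.sum_mem _ fun l _ => Submodule.smul_mem _ _ ?_
        exact Submodule.subset_span ⟨(k, l), Finset.mem_product.2 ⟨hk, Finset.mem_univ _⟩, rfl⟩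
      have key : (∑ l : ZMod M,
          Complex.exp (-(2 * (Real.pi : ℂ) * Complex.I) * (l.val : ℂ) * (m.val : ℂ) / (M : ℂ))
            • tfShift M k l g) = ((M : ℂ) * g (m - k)) • (Pi.single m 1 : ZMod M → ℂ) := by
        funext m'
        rw [Finset.sum_apply]
        simp only [Pi.smul_apply, smul_eq_mul, tfShift]
        have step : ∀ l : ZMod M,
            Complex.exp (-(2 * (Real.pi : ℂ) * Complex.I) * (l.val : ℂ) * (m.val : ℂ) / (M : ℂ))
              * (Complex.exp (2 * (Real.pi : ℂ) * Complex.I * (l.val : ℂ) * (m'.val : ℂ) / (M : ℂ))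
                * g (m' - k))
            = Complex.exp (2 * (Real.pi : ℂ) * Complex.I *
                (((m'.val : ℂ) - (m.val : ℂ)) / (M : ℂ))) ^ l.val * g (m' - k) := by
          intro l
          rw [← mul_assoc, ← Complex.exp_add, ← Complex.exp_nat_mul]
          congr 2
          have hM : (M : ℂ) ≠ 0 := Nat.cast_ne_zero.2 (NeZero.ne M)
          field_simp
          ring
        rw [Finset.sum_congr rfl fun l _ => step l, ← Finset.sum_mul,
          zsum_val (fun j => Complex.exp (2 * (Real.pi : ℂ) * Complex.I *
            (((m'.val : ℂ) - (m.val : ℂ)) / (M : ℂ))) ^ j), rou_sum m' m]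
        by_cases hmm : m' = m
        · subst hmm; simp [Pi.single_apply]
        · simp [Pi.single_apply, hmm]
      rw [key] at hmem
      have := Submodule.smul_mem _ ((M : ℂ) * g (m - k))⁻¹ hmem
      rwa [smul_smul, inv_mul_cancel₀ hc0, one_smul] at this
    have hx : x = ∑ m : ZMod M, x m • (Pi.single m 1 : ZMod M → ℂ) := by
      funext j
      simp [Finset.sum_apply, Pi.single_apply]
    rw [hx]
    exact Submodule.sum_mem _ fun m _ => Submodule.smul_mem _ _ (hsingle m)
end
end

section
/- Let g ∈ ℂ^M be a window and Λ = F × ℤ_M for some nonempty F ⊆ ℤ_M. Set A = M·min_{m∈ℤ_M} Σ_{k∈F}|g(m−k)|² and B = M·max_{m∈ℤ_M} Σ_{k∈F}|g(m−k)|². Then for every x ∈ ℂ^M, A·‖x‖₂² ≤ Σ_{(k,ℓ)∈Λ} |⟨x, π(k,ℓ)g⟩|² ≤ B·‖x‖₂², and these bounds are optimal: there exist nonzero x, x' ∈ ℂ^M with Σ_{λ∈Λ}|⟨x,π(λ)g⟩|² = A·‖x‖₂² and Σ_{λ∈Λ}|⟨x',π(λ)g⟩|² = B·‖x'‖₂².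 -/
open MeasureTheory ProbabilityTheory Complex Finset
open scoped Real BigOperators Classical

noncomputable section

lemma my_sum_zmod_val {M : ℕ} [NeZero M] (f : ℕ → ℂ) :
    ∑ ℓ : ZMod M, f ℓ.val = ∑ j ∈ Finset.range M, f j := by
  refine Finset.sum_nbij' (fun ℓ => ℓ.val) (fun j => (j : ZMod M)) ?_ ?_ ?_ ?_ ?_
  · intro a _; exact Finset.mem_range.mpr (ZMod.val_lt a)
  · intro a _; exact Finset.mem_univ _
  · intro a _; exact ZMod.natCast_zmod_val a
  · intro a ha; exact ZMod.val_cast_of_lt (Finset.mem_range.mp ha)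
  · intro a _; rfl

lemma my_expsum (M : ℕ) [NeZero M] (m m' : ZMod M) :
    ∑ ℓ : ZMod M,
      (starRingEnd ℂ) (Complex.exp (2 * (Real.pi:ℂ) * Complex.I * (ℓ.val:ℂ) * (m.val:ℂ) / M)) *
        Complex.exp (2 * (Real.pi:ℂ) * Complex.I * (ℓ.val:ℂ) * (m'.val:ℂ) / M)
      = if m = m' then (M:ℂ) else 0 := by
  have hM : (M:ℂ) ≠ 0 := Nat.cast_ne_zero.mpr (NeZero.ne M)
  set c : ℂ := 2 * (Real.pi:ℂ) * Complex.I * ((m'.val:ℂ) - (m.val:ℂ)) / M with hc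
  have hterm : ∀ ℓ : ZMod M,
      (starRingEnd ℂ) (Complex.exp (2 * (Real.pi:ℂ) * Complex.I * (ℓ.val:ℂ) * (m.val:ℂ) / M)) *
        Complex.exp (2 * (Real.pi:ℂ) * Complex.I * (ℓ.val:ℂ) * (m'.val:ℂ) / M)
      = Complex.exp c ^ (ℓ.val) := by
    intro ℓ
    rw [← Complex.exp_conj, ← Complex.exp_add, ← Complex.exp_nat_mul]
    congr 1
    have hconj : (starRingEnd ℂ) (2 * (Real.pi:ℂ) * Complex.I * (ℓ.val:ℂ) * (m.val:ℂ) / M)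
        = -(2 * (Real.pi:ℂ) * Complex.I * (ℓ.val:ℂ) * (m.val:ℂ) / M) := by
      simp only [map_div₀, map_mul, map_ofNat, Complex.conj_I, Complex.conj_ofReal,
        map_natCast]
      ring
    rw [hconj, hc]
    field_simp
    ring
  rw [Finset.sum_congr rfl (fun ℓ _ => hterm ℓ), my_sum_zmod_val (fun j => Complex.exp c ^ j)]
  by_cases h : m = m'
  · subst h
    simp [hc]
  · rw [if_neg h]
    have ht : ¬ ((M:ℤ) ∣ ((m'.val:ℤ) - (m.val:ℤ))) := by
      intro hd
      have h0 : (((m'.val:ℤ) - (m.val:ℤ) : ℤ) : ZMod M) = 0 :=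
        (ZMod.intCast_zmod_eq_zero_iff_dvd _ _).mpr hd
      rw [Int.cast_sub, Int.cast_natCast, Int.cast_natCast,
        ZMod.natCast_zmod_val, ZMod.natCast_zmod_val] at h0
      exact h (sub_eq_zero.mp h0).symm
    have hprim := Complex.isPrimitiveRoot_exp M (NeZero.ne M)
    have hzpow : Complex.exp c = Complex.exp (2*(Real.pi:ℂ)*Complex.I/M) ^ ((m'.val:ℤ) - (m.val:ℤ)) := by
      rw [← Complex.exp_int_mul]
      congr 1
      rw [Int.cast_sub, Int.cast_natCast, Int.cast_natCast]
      ring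
    have hw1 : Complex.exp c ≠ 1 := by
      rw [hzpow]
      intro hcon
      exact ht ((hprim.zpow_eq_one_iff_dvd _).mp hcon)
    have hwM : Complex.exp c ^ M = 1 := by
      rw [← Complex.exp_nat_mul]
      have : (M:ℂ) * c = (((m'.val:ℤ) - (m.val:ℤ) : ℤ):ℂ) * (2*(Real.pi:ℂ)*Complex.I) := by
        rw [hc, Int.cast_sub, Int.cast_natCast, Int.cast_natCast, mul_comm ((M:ℂ)),
          div_mul_cancel₀ _ hM]; ring
      rw [this, Complex.exp_int_mul_two_pi_mul_I]
    rw [geom_sum_eq hw1, hwM]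
    simp


lemma my_core (M : ℕ) [NeZero M] (g x : ZMod M → ℂ) (F : Finset (ZMod M)) :
    ∑ kl ∈ F ×ˢ (Finset.univ : Finset (ZMod M)),
        ‖inn M x (tfShift M kl.1 kl.2 g)‖ ^ 2
      = ∑ m : ZMod M, ‖x m‖ ^ 2 *
          ((M:ℝ) * ∑ k ∈ F, ‖g (m - k)‖ ^ 2) := by
  have hre : ∀ z : ℂ, ‖z‖ ^ 2 = (z * (starRingEnd ℂ) z).re := fun z => by
    rw [Complex.mul_conj, Complex.ofReal_re, ← Complex.sq_norm]
  have hk : ∀ k : ZMod M, ∑ ℓ : ZMod M, ‖inn M x (tfShift M k ℓ g)‖ ^ 2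
      = ∑ m : ZMod M, ‖x m‖ ^ 2 * ((M:ℝ) * ‖g (m - k)‖ ^ 2) := by
    intro k
    have hC : ∑ ℓ : ZMod M,
        inn M x (tfShift M k ℓ g) * (starRingEnd ℂ) (inn M x (tfShift M k ℓ g))
        = ∑ m : ZMod M, (x m * (starRingEnd ℂ) (x m)) *
            ((g (m-k)) * (starRingEnd ℂ) (g (m-k))) * (M:ℂ) := by
      have expand : ∀ ℓ : ZMod M,
          inn M x (tfShift M k ℓ g) * (starRingEnd ℂ) (inn M x (tfShift M k ℓ g))
          = ∑ m : ZMod M, ∑ m' : ZMod M,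
            (x m * (starRingEnd ℂ) (g (m-k)) * ((starRingEnd ℂ) (x m') * g (m'-k))) *
            ((starRingEnd ℂ)
                (Complex.exp (2*(Real.pi:ℂ)*Complex.I*(ℓ.val:ℂ)*(m.val:ℂ)/M)) *
              Complex.exp (2*(Real.pi:ℂ)*Complex.I*(ℓ.val:ℂ)*(m'.val:ℂ)/M)) := by
        intro ℓ
        simp only [inn, tfShift, map_sum, map_mul, Complex.conj_conj]
        rw [Finset.sum_mul_sum]
        apply Finset.sum_congr rfl; intro m _
        apply Finset.sum_congr rfl; intro m' _
        ring
      rw [Finset.sum_congr rfl (fun ℓ _ => expand ℓ), Finset.sum_comm]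
      apply Finset.sum_congr rfl; intro m _
      rw [Finset.sum_comm]
      have inner : ∀ m' : ZMod M,
          (∑ ℓ : ZMod M,
            (x m * (starRingEnd ℂ) (g (m-k)) * ((starRingEnd ℂ) (x m') * g (m'-k))) *
            ((starRingEnd ℂ)
                (Complex.exp (2*(Real.pi:ℂ)*Complex.I*(ℓ.val:ℂ)*(m.val:ℂ)/M)) *
              Complex.exp (2*(Real.pi:ℂ)*Complex.I*(ℓ.val:ℂ)*(m'.val:ℂ)/M)))
          = (x m * (starRingEnd ℂ) (g (m-k)) * ((starRingEnd ℂ) (x m') * g (m'-k))) *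
              (if m = m' then (M:ℂ) else 0) := by
        intro m'
        rw [← Finset.mul_sum, my_expsum]
      rw [Finset.sum_congr rfl (fun m' _ => inner m')]
      rw [Finset.sum_eq_single m
        (fun b _ hb => by rw [if_neg (fun hh => hb hh.symm), mul_zero])
        (fun hm => absurd (Finset.mem_univ m) hm), if_pos rfl]
      ring
    calc ∑ ℓ : ZMod M, ‖inn M x (tfShift M k ℓ g)‖ ^ 2
        = ∑ ℓ : ZMod M,
            (inn M x (tfShift M k ℓ g) * (starRingEnd ℂ) (inn M x (tfShift M k ℓ g))).re :=
          Finset.sum_congr rfl (fun ℓ _ => hre _)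
      _ = (∑ ℓ : ZMod M,
            inn M x (tfShift M k ℓ g) * (starRingEnd ℂ) (inn M x (tfShift M k ℓ g))).re :=
          (Complex.re_sum _ _).symm
      _ = (∑ m : ZMod M, (x m * (starRingEnd ℂ) (x m)) *
            ((g (m-k)) * (starRingEnd ℂ) (g (m-k))) * (M:ℂ)).re := by rw [hC]
      _ = ∑ m : ZMod M, ‖x m‖ ^ 2 * ((M:ℝ) * ‖g (m - k)‖ ^ 2) := by
          rw [Complex.re_sum]
          apply Finset.sum_congr rfl; intro m _
          rw [Complex.mul_conj, Complex.mul_conj, ← Complex.ofReal_mul,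
            ← Complex.ofReal_natCast, ← Complex.ofReal_mul, Complex.ofReal_re,
            Complex.normSq_eq_norm_sq, Complex.normSq_eq_norm_sq]
          ring
  rw [Finset.sum_product, Finset.sum_congr rfl (fun k _ => hk k), Finset.sum_comm]
  apply Finset.sum_congr rfl; intro m _
  rw [Finset.mul_sum, ← Finset.mul_sum]


/-- For Λ = F × ℤ_M, A = M·min_m Σ_{k∈F}|g(m−k)|² and B = M·max_m Σ_{k∈F}|g(m−k)|²
are frame bounds for (g,Λ), and they are attained (optimal). -/
theorem stmt9 (M : ℕ) [NeZero M] (g : ZMod M → ℂ) (F : Finset (ZMod M)) (hF : F.Nonempty)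
    (A B : ℝ)
    (hA : A = (M : ℝ) * Finset.univ.inf' ⟨(0 : ZMod M), Finset.mem_univ _⟩
      (fun m : ZMod M => ∑ k ∈ F, ‖g (m - k)‖ ^ 2))
    (hB : B = (M : ℝ) * Finset.univ.sup' ⟨(0 : ZMod M), Finset.mem_univ _⟩
      (fun m : ZMod M => ∑ k ∈ F, ‖g (m - k)‖ ^ 2)) :
    (∀ x : ZMod M → ℂ,
        A * nsq M x ≤
            ∑ kl ∈ F ×ˢ (Finset.univ : Finset (ZMod M)),
              ‖inn M x (tfShift M kl.1 kl.2 g)‖ ^ 2 ∧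
          ∑ kl ∈ F ×ˢ (Finset.univ : Finset (ZMod M)),
              ‖inn M x (tfShift M kl.1 kl.2 g)‖ ^ 2 ≤ B * nsq M x) ∧
      (∃ x : ZMod M → ℂ, x ≠ 0 ∧
        ∑ kl ∈ F ×ˢ (Finset.univ : Finset (ZMod M)),
            ‖inn M x (tfShift M kl.1 kl.2 g)‖ ^ 2 = A * nsq M x) ∧
      (∃ x' : ZMod M → ℂ, x' ≠ 0 ∧
        ∑ kl ∈ F ×ˢ (Finset.univ : Finset (ZMod M)),
            ‖inn M x' (tfShift M kl.1 kl.2 g)‖ ^ 2 = B * nsq M x')     := by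
  classical
  set f : ZMod M → ℝ := fun m => ∑ k ∈ F, ‖g (m - k)‖ ^ 2 with hf
  have hne : (Finset.univ : Finset (ZMod M)).Nonempty := ⟨0, Finset.mem_univ _⟩
  have hcore : ∀ x : ZMod M → ℂ,
      ∑ kl ∈ F ×ˢ (Finset.univ : Finset (ZMod M)),
          ‖inn M x (tfShift M kl.1 kl.2 g)‖ ^ 2
        = ∑ m : ZMod M, ‖x m‖ ^ 2 * ((M:ℝ) * f m) := fun x => my_core M g x F
  have hMnn : (0:ℝ) ≤ (M:ℝ) := Nat.cast_nonneg M
  have hAle : ∀ m : ZMod M, A ≤ (M:ℝ) * f m := by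
    intro m
    rw [hA]
    exact mul_le_mul_of_nonneg_left (Finset.inf'_le f (Finset.mem_univ m)) hMnn
  have hBge : ∀ m : ZMod M, (M:ℝ) * f m ≤ B := by
    intro m
    rw [hB]
    exact mul_le_mul_of_nonneg_left (Finset.le_sup' f (Finset.mem_univ m)) hMnn
  refine ⟨fun x => ?_, ?_, ?_⟩
  · constructor
    · rw [hcore x, nsq, Finset.mul_sum]
      apply Finset.sum_le_sum
      intro m _
      rw [mul_comm]
      exact mul_le_mul_of_nonneg_left (hAle m) (sq_nonneg _)
    · rw [hcore x, nsq, Finset.mul_sum]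
      apply Finset.sum_le_sum
      intro m _
      rw [mul_comm B]
      exact mul_le_mul_of_nonneg_left (hBge m) (sq_nonneg _)
  · obtain ⟨m0, _, hm0⟩ := Finset.exists_mem_eq_inf' hne f
    refine ⟨fun m => if m = m0 then 1 else 0, ?_, ?_⟩
    · intro h
      have := congrFun h m0
      simp at this
    · rw [hcore]
      have hnsq : nsq M (fun m => if m = m0 then (1:ℂ) else 0) = 1 := by
        simp [nsq, apply_ite (norm : ℂ → ℝ)]
      rw [hnsq, mul_one]
      have : ∀ m : ZMod M,
          ‖(fun m => if m = m0 then (1:ℂ) else 0) m‖ ^ 2 * ((M:ℝ) * f m)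
          = if m = m0 then (M:ℝ) * f m0 else 0 := by
        intro m
        by_cases h : m = m0 <;> simp [h]
      rw [Finset.sum_congr rfl (fun m _ => this m), Finset.sum_ite_eq' Finset.univ m0]
      simp [hA, hm0]
  · obtain ⟨m0, _, hm0⟩ := Finset.exists_mem_eq_sup' hne f
    refine ⟨fun m => if m = m0 then 1 else 0, ?_, ?_⟩
    · intro h
      have := congrFun h m0
      simp at this
    · rw [hcore]
      have hnsq : nsq M (fun m => if m = m0 then (1:ℂ) else 0) = 1 := by
        simp [nsq, apply_ite (norm : ℂ → ℝ)]
      rw [hnsq, mul_one]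
      have : ∀ m : ZMod M,
          ‖(fun m => if m = m0 then (1:ℂ) else 0) m‖ ^ 2 * ((M:ℝ) * f m)
          = if m = m0 then (M:ℝ) * f m0 else 0 := by
        intro m
        by_cases h : m = m0 <;> simp [h]
      rw [Finset.sum_congr rfl (fun m _ => this m), Finset.sum_ite_eq' Finset.univ m0]
      simp [hB, hm0]
end
end

section
/- Let g be a complex Gaussian window in ℂ^M, let F ⊆ ℤ_M be nonempty, and let Λ = F × ℤ_M. Then with probability at least 1 − M·(e^{−2|F|} + e^{−|F|/8}), for every x ∈ ℂ^M: (|F|/2)·‖x‖₂² ≤ Σ_{(k,ℓ)∈Λ} |⟨x, π(k,ℓ)g⟩|² ≤ 5|F|·‖x‖₂². -/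
open MeasureTheory ProbabilityTheory Complex Finset
open scoped Real BigOperators Classical

noncomputable section

/- ### Auxiliary lemmas -/

lemma sum_zmod_val (M : ℕ) [NeZero M] (f : ℕ → ℂ) :
    ∑ l : ZMod M, f l.val = ∑ j ∈ Finset.range M, f j := by
  obtain ⟨m, rfl⟩ := Nat.exists_eq_succ_of_ne_zero (NeZero.ne M)
  exact Fin.sum_univ_eq_sum_range (fun j => f j) (m+1)

lemma charSum (M : ℕ) [NeZero M] (a b : ZMod M) :
    ∑ l : ZMod M, Complex.exp (2 * (Real.pi:ℂ) * Complex.I * (l.val:ℂ) * (a.val:ℂ) / M) *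
      (starRingEnd ℂ) (Complex.exp (2 * (Real.pi:ℂ) * Complex.I * (l.val:ℂ) * (b.val:ℂ) / M)) =
    if a = b then (M:ℂ) else 0 := by
  have hM : (M:ℂ) ≠ 0 := Nat.cast_ne_zero.mpr (NeZero.ne M)
  set d : ℤ := (a.val : ℤ) - (b.val : ℤ) with hd
  set ζ : ℂ := Complex.exp (2 * (Real.pi:ℂ) * Complex.I * (d:ℂ) / M) with hζ
  have hterm : ∀ l : ZMod M,
      Complex.exp (2 * (Real.pi:ℂ) * Complex.I * (l.val:ℂ) * (a.val:ℂ) / M) *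
        (starRingEnd ℂ) (Complex.exp (2 * (Real.pi:ℂ) * Complex.I * (l.val:ℂ) * (b.val:ℂ) / M))
      = ζ ^ (l.val) := by
    intro l
    rw [← Complex.exp_conj]
    rw [← Complex.exp_add, hζ, ← Complex.exp_nat_mul]
    congr 1
    have : (starRingEnd ℂ) (2 * (Real.pi:ℂ) * Complex.I * (l.val:ℂ) * (b.val:ℂ) / M)
        = -(2 * (Real.pi:ℂ) * Complex.I * (l.val:ℂ) * (b.val:ℂ) / M) := by
      simp only [map_div₀, map_mul, Complex.conj_I, map_ofNat, map_natCast,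
        Complex.conj_ofReal]
      ring
    rw [this]
    push_cast [hd]
    ring
  simp_rw [hterm, sum_zmod_val M (fun j => ζ ^ j)]
  by_cases hab : a = b
  · simp [hab, hζ, hd, Finset.sum_const, Finset.card_range]
  · have hdne : d ≠ 0 := by
      simp only [hd, sub_ne_zero]
      exact_mod_cast fun h => hab (ZMod.val_injective M (by exact_mod_cast h))
    have hdlt : d.natAbs < M := by
      have ha := ZMod.val_lt a
      have hb := ZMod.val_lt b
      omega
    have hζM : ζ ^ M = 1 := by
      rw [hζ, ← Complex.exp_nat_mul]
      have : (M:ℂ) * (2 * (Real.pi:ℂ) * Complex.I * (d:ℂ) / M)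
          = (d:ℂ) * (2 * Real.pi * Complex.I) := by
        field_simp
      rw [this, Complex.exp_int_mul_two_pi_mul_I]
    have hζ1 : ζ ≠ 1 := by
      intro h
      rw [hζ, Complex.exp_eq_one_iff] at h
      obtain ⟨n, hn⟩ := h
      have hπ : (2 * (Real.pi:ℂ) * Complex.I) ≠ 0 := by
        simp [Real.pi_ne_zero, Complex.I_ne_zero]
      have hdn : (d:ℂ) = (n:ℂ) * M := by
        field_simp at hn
        have h2 : (d:ℂ) * (2 * (Real.pi:ℂ) * Complex.I)
            = ((n:ℂ) * M) * (2 * (Real.pi:ℂ) * Complex.I) := by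
          linear_combination (2 * (Real.pi:ℂ) * Complex.I) * hn
        exact mul_right_cancel₀ hπ h2
      have hdn' : d = n * (M:ℤ) := by exact_mod_cast hdn
      have hn0 : n ≠ 0 := by rintro rfl; simp at hdn'; exact hdne hdn'
      have : (M:ℤ) ≤ |d| := by
        rw [hdn', abs_mul, abs_of_nonneg (by positivity : (0:ℤ) ≤ (M:ℤ))]
        calc (M:ℤ) = 1 * M := (one_mul _).symm
        _ ≤ |n| * M := by
          have : (1:ℤ) ≤ |n| := Int.one_le_abs hn0
          exact mul_le_mul_of_nonneg_right this (by positivity)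
      have : (M:ℤ) ≤ d.natAbs := by rwa [Int.abs_eq_natAbs] at this
      omega
    rw [geom_sum_eq hζ1, hζM, if_neg hab]
    simp

lemma gabor_line_eq (M : ℕ) [NeZero M] (k : ZMod M) (g x : ZMod M → ℂ) :
    ∑ l : ZMod M, ‖inn M x (tfShift M k l g)‖ ^ 2
      = (M:ℝ) * ∑ m : ZMod M, Complex.normSq (x m) * Complex.normSq (g (m - k)) := by
  set E : ZMod M → ZMod M → ℂ :=
    fun l m => Complex.exp (2 * (Real.pi:ℂ) * Complex.I * (l.val:ℂ) * (m.val:ℂ) / M) with hE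
  set c : ZMod M → ℂ := fun m => x m * (starRingEnd ℂ) (g (m - k)) with hc
  have hA : ∀ l, inn M x (tfShift M k l g) = ∑ m : ZMod M, c m * (starRingEnd ℂ) (E l m) := by
    intro l
    unfold inn tfShift
    refine Finset.sum_congr rfl fun m _ => ?_
    simp only [map_mul, hc, hE]
    ring
  have key : ((∑ l : ZMod M, ‖inn M x (tfShift M k l g)‖ ^ 2 : ℝ) : ℂ)
      = (M:ℂ) * ∑ m : ZMod M, ((Complex.normSq (x m) * Complex.normSq (g (m - k)) : ℝ) : ℂ) := by
    have h1 : ((∑ l : ZMod M, ‖inn M x (tfShift M k l g)‖ ^ 2 : ℝ) : ℂ)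
        = ∑ l : ZMod M, (inn M x (tfShift M k l g)) *
            (starRingEnd ℂ) (inn M x (tfShift M k l g)) := by
      push_cast
      simp only [Complex.mul_conj]
      simp only [← Complex.ofReal_pow, Complex.sq_norm]
    rw [h1]
    simp_rw [hA]
    have h2 : ∀ l : ZMod M,
        (∑ m : ZMod M, c m * (starRingEnd ℂ) (E l m)) *
          (starRingEnd ℂ) (∑ m : ZMod M, c m * (starRingEnd ℂ) (E l m))
        = ∑ m : ZMod M, ∑ m' : ZMod M,
            (c m * (starRingEnd ℂ) (c m')) * (E l m' * (starRingEnd ℂ) (E l m)) := by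
      intro l
      rw [map_sum, Finset.sum_mul_sum]
      refine Finset.sum_congr rfl fun m _ => Finset.sum_congr rfl fun m' _ => ?_
      simp only [map_mul, RingHomCompTriple.comp_apply, RingHom.id_apply,
        Complex.conj_conj]
      ring
    simp_rw [h2]
    rw [Finset.sum_comm]
    have h3 : ∀ m : ZMod M, (∑ l : ZMod M, ∑ m' : ZMod M,
        (c m * (starRingEnd ℂ) (c m')) * (E l m' * (starRingEnd ℂ) (E l m)))
        = (M:ℂ) * (c m * (starRingEnd ℂ) (c m)) := by
      intro m
      rw [Finset.sum_comm]
      have h4 : ∀ m' : ZMod M, ∑ l : ZMod M,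
          (c m * (starRingEnd ℂ) (c m')) * (E l m' * (starRingEnd ℂ) (E l m))
          = (c m * (starRingEnd ℂ) (c m')) * (if m' = m then (M:ℂ) else 0) := by
        intro m'
        rw [← Finset.mul_sum, charSum M m' m]
      simp_rw [h4]
      simp only [mul_ite, mul_zero]
      rw [Finset.sum_ite_eq' Finset.univ m (fun m' => c m * (starRingEnd ℂ) (c m') * (M:ℂ))]
      simp [mul_comm]
    simp_rw [h3]
    rw [← Finset.mul_sum]
    congr 1
    refine Finset.sum_congr rfl fun m _ => ?_
    rw [Complex.mul_conj]
    simp only [hc]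
    push_cast [Complex.normSq_mul, Complex.normSq_conj]
    ring
  exact_mod_cast key

lemma mgf_M_sq {Ω : Type*} [MeasurableSpace Ω] (P : Measure Ω) [IsProbabilityMeasure P]
    (M : ℕ) [NeZero M] (u : Ω → ℝ) (hu : Measurable u)
    (hmap : Measure.map u P = gaussianReal 0 (1 / (2 * M) : NNReal)) {t : ℝ} (ht : t < 1) :
    Integrable (fun ω => Real.exp (t * ((M:ℝ) * u ω ^ 2))) P ∧
    mgf (fun ω => (M:ℝ) * u ω ^ 2) P t = (Real.sqrt (1 - t))⁻¹ := by
  have hM0 : (0:ℝ) < M := Nat.cast_pos.mpr (Nat.pos_of_ne_zero (NeZero.ne M))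
  set v : NNReal := (1 / (2 * M) : NNReal) with hv
  have hvval : (v:ℝ) = 1 / (2 * (M:ℝ)) := by
    rw [hv]; push_cast; norm_num
  have hvne : v ≠ 0 := by
    rw [hv]
    exact one_div_ne_zero (mul_ne_zero two_ne_zero (Nat.cast_ne_zero.mpr (NeZero.ne M)))
  set f : ℝ → ℝ := fun x => Real.exp (t * ((M:ℝ) * x ^ 2)) with hf
  have hfc : Continuous f := by
    apply Real.continuous_exp.comp
    continuity
  set b : ℝ := (M:ℝ) * (1 - t) with hb
  have hb0 : 0 < b := by nlinarith
  have hprod : ∀ x : ℝ, (gaussianPDFReal 0 v x) * f x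
      = (Real.sqrt (2 * π * v))⁻¹ * Real.exp (-b * x^2) := by
    intro x
    simp only [gaussianPDFReal, hf]
    rw [mul_assoc, ← Real.exp_add]
    congr 2
    rw [hvval, hb]
    have : (M:ℝ) ≠ 0 := ne_of_gt hM0
    field_simp
    ring
  set ρ : ℝ → NNReal := fun x => (gaussianPDFReal 0 v x).toNNReal with hρ
  have hρm : Measurable ρ := (measurable_gaussianPDFReal 0 v).real_toNNReal
  have hdens : gaussianReal 0 v = volume.withDensity (fun x => (ρ x : ENNReal)) := by
    rw [gaussianReal_of_var_ne_zero 0 hvne]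
    rfl
  have hsmul : ∀ x : ℝ, ρ x • f x = (Real.sqrt (2 * π * v))⁻¹ * Real.exp (-b * x^2) := by
    intro x
    rw [← hprod x]
    simp only [hρ, NNReal.smul_def, smul_eq_mul,
      Real.coe_toNNReal _ (gaussianPDFReal_nonneg 0 v x)]
  have hint_gauss : Integrable f (gaussianReal 0 v) := by
    rw [hdens, integrable_withDensity_iff_integrable_smul hρm]
    have : Integrable (fun x => (Real.sqrt (2 * π * v))⁻¹ * Real.exp (-b * x^2)) volume :=
      (integrable_exp_neg_mul_sq hb0).const_mul _
    exact this.congr (Filter.Eventually.of_forall fun x => (hsmul x).symm)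
  have hint : Integrable (fun ω => Real.exp (t * ((M:ℝ) * u ω ^ 2))) P := by
    have := (integrable_map_measure hfc.aestronglyMeasurable hu.aemeasurable).mp
      (by rwa [hmap])
    exact this
  refine ⟨hint, ?_⟩
  have h1 : mgf (fun ω => (M:ℝ) * u ω ^ 2) P t = ∫ x, f x ∂(Measure.map u P) := by
    rw [mgf, integral_map hu.aemeasurable hfc.aestronglyMeasurable]
  rw [h1, hmap, hdens, integral_withDensity_eq_integral_smul hρm]
  have h2 : ∫ x, ρ x • f x ∂volume
      = (Real.sqrt (2 * π * v))⁻¹ * ∫ x, Real.exp (-b * x^2) ∂volume := by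
    rw [← integral_const_mul]
    exact integral_congr_ae (Filter.Eventually.of_forall hsmul)
  rw [h2, integral_gaussian]
  rw [← Real.sqrt_inv, ← Real.sqrt_mul (by positivity)]
  rw [← Real.sqrt_inv]
  congr 1
  rw [hvval, hb]
  have hπ : (π:ℝ) ≠ 0 := Real.pi_ne_zero
  have hM : (M:ℝ) ≠ 0 := ne_of_gt hM0
  have h1t : (1:ℝ) - t ≠ 0 := by linarith
  field_simp

/-- For a complex Gaussian window and Λ = F × ℤ_M, with probability at least
1 − M(e^{−2|F|} + e^{−|F|/8}) the frame bounds |F|/2 and 5|F| hold. -/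
theorem stmt14 (M : ℕ) [NeZero M] {Ω : Type*} [MeasurableSpace Ω] (P : Measure Ω)
    [IsProbabilityMeasure P] (g : Ω → ZMod M → ℂ) (hg : IsGaussianWindow M P g)
    (F : Finset (ZMod M)) (hF : F.Nonempty) :
    P {ω | ∀ x : ZMod M → ℂ,
        (F.card : ℝ) / 2 * nsq M x ≤
            ∑ kl ∈ F ×ˢ (Finset.univ : Finset (ZMod M)),
              ‖inn M x (tfShift M kl.1 kl.2 (g ω))‖ ^ 2 ∧
          ∑ kl ∈ F ×ˢ (Finset.univ : Finset (ZMod M)),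
              ‖inn M x (tfShift M kl.1 kl.2 (g ω))‖ ^ 2 ≤
            5 * (F.card : ℝ) * nsq M x} ≥
      ENNReal.ofReal
        (1 - (M : ℝ) * (Real.exp (-2 * F.card) + Real.exp (-(F.card : ℝ) / 8))) := by
  obtain ⟨u, humeas, huindep, humap, hurepr⟩ := hg
  set n : ℕ := F.card with hn
  have hn1 : 1 ≤ n := hF.card_pos
  -- the random variables X i = M * u_i^2 and their partial sums
  set X : ZMod M × Bool → Ω → ℝ := fun i ω => (M:ℝ) * u i ω ^ 2 with hX
  have hXmeas : ∀ i, Measurable (X i) := fun i => ((humeas i).pow_const 2).const_mul _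
  have hXindep : iIndepFun X P := by
    have := huindep.comp (fun _ x => (M:ℝ) * x ^ 2)
      (fun _ => (measurable_id.pow_const 2).const_mul _)
    exact this
  set s : ZMod M → Finset (ZMod M × Bool) :=
    fun m => (F.image (fun k => m - k)) ×ˢ (Finset.univ : Finset Bool) with hs
  have hinj : ∀ m : ZMod M, Function.Injective (fun k : ZMod M => m - k) :=
    fun m => sub_right_injective
  have hscard : ∀ m, (s m).card = 2 * n := by
    intro m
    rw [hs]
    simp [Finset.card_product, Finset.card_image_of_injective _ (hinj m), hn, mul_comm]
  -- Chernoff bounds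
  have hchern : ∀ m : ZMod M,
      P {ω | (∑ i ∈ s m, X i) ω ≤ (n:ℝ)/2} ≤ ENNReal.ofReal (Real.exp (-(n:ℝ)/8)) ∧
      P {ω | 5*(n:ℝ) ≤ (∑ i ∈ s m, X i) ω} ≤ ENNReal.ofReal (Real.exp (-2*(n:ℝ))) := by
    intro m
    have toE : ∀ (A : Set Ω) (r : ℝ), (P A).toReal ≤ r → P A ≤ ENNReal.ofReal r := by
      intro A r h
      rw [← ENNReal.ofReal_toReal (measure_ne_top P A)]
      exact ENNReal.ofReal_le_ofReal h
    constructor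
    · -- lower tail, t = -1
      have hmgf : mgf (∑ i ∈ s m, X i) P (-1) = ((Real.sqrt 2)⁻¹) ^ (2*n) := by
        rw [hXindep.mgf_sum hXmeas (s m)]
        rw [Finset.prod_congr rfl (fun i _ =>
          (mgf_M_sq P M (u i) (humeas i) (humap i) (by norm_num : (-1:ℝ) < 1)).2)]
        rw [Finset.prod_const, hscard m]
        norm_num
      have hint : Integrable (fun ω => Real.exp ((-1) * (∑ i ∈ s m, X i) ω)) P := by
        apply hXindep.integrable_exp_mul_sum hXmeas
        intro i _
        exact (mgf_M_sq P M (u i) (humeas i) (humap i) (by norm_num : (-1:ℝ) < 1)).1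
      have hC := measure_le_le_exp_mul_mgf (μ := P) (X := ∑ i ∈ s m, X i)
        ((n:ℝ)/2) (by norm_num : (-1:ℝ) ≤ 0) hint
      apply toE
      refine hC.trans ?_
      rw [hmgf]
      have h1 : ((Real.sqrt 2)⁻¹ : ℝ)^(2*n) = ((2:ℝ)⁻¹)^n := by
        rw [pow_mul, inv_pow, Real.sq_sqrt (by norm_num : (0:ℝ) ≤ 2)]
      have h2 : Real.exp (-(-1) * ((n:ℝ)/2)) = (Real.exp ((1:ℝ)/2))^n := by
        rw [← Real.exp_nat_mul]; congr 1; push_cast; ring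
      have h4 : Real.exp (-(n:ℝ)/8) = (Real.exp (-(1:ℝ)/8))^n := by
        rw [← Real.exp_nat_mul]; congr 1; push_cast; ring
      rw [h1, h2, ← mul_pow, h4]
      apply pow_le_pow_left₀ (by positivity)
      have h58 : Real.exp ((5:ℝ)/8) ≤ 2 := by
        have hlog : (5/8 : ℝ) ≤ Real.log 2 := by
          have := Real.log_two_gt_d9
          linarith
        calc Real.exp ((5:ℝ)/8) ≤ Real.exp (Real.log 2) := Real.exp_le_exp.mpr hlog
        _ = 2 := Real.exp_log (by norm_num)
      have hsplit : Real.exp ((1:ℝ)/2) = Real.exp (-(1:ℝ)/8) * Real.exp ((5:ℝ)/8) := by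
        rw [← Real.exp_add]; norm_num
      nlinarith [Real.exp_pos (-(1:ℝ)/8)]
    · -- upper tail, t = 4/5
      have hmgf : mgf (∑ i ∈ s m, X i) P (4/5)
          = ((Real.sqrt (1/5 : ℝ))⁻¹) ^ (2*n) := by
        rw [hXindep.mgf_sum hXmeas (s m)]
        rw [Finset.prod_congr rfl (fun i _ =>
          (mgf_M_sq P M (u i) (humeas i) (humap i) (by norm_num : (4/5:ℝ) < 1)).2)]
        rw [Finset.prod_const, hscard m]
        norm_num
      have hint : Integrable (fun ω => Real.exp ((4/5) * (∑ i ∈ s m, X i) ω)) P := by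
        apply hXindep.integrable_exp_mul_sum hXmeas
        intro i _
        exact (mgf_M_sq P M (u i) (humeas i) (humap i) (by norm_num : (4/5:ℝ) < 1)).1
      have hC := measure_ge_le_exp_mul_mgf (μ := P) (X := ∑ i ∈ s m, X i)
        (5*(n:ℝ)) (by norm_num : (0:ℝ) ≤ 4/5) hint
      apply toE
      refine hC.trans ?_
      rw [hmgf]
      have h1 : ((Real.sqrt (1/5:ℝ))⁻¹)^(2*n) = ((5:ℝ))^n := by
        rw [pow_mul, inv_pow, Real.sq_sqrt (by norm_num : (0:ℝ) ≤ 1/5)]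
        norm_num
      have h2 : Real.exp (-(4/5) * (5*(n:ℝ))) = (Real.exp (-(4:ℝ)))^n := by
        rw [← Real.exp_nat_mul]; congr 1; push_cast; ring
      have h4 : Real.exp (-2*(n:ℝ)) = (Real.exp (-(2:ℝ)))^n := by
        rw [← Real.exp_nat_mul]; congr 1; push_cast; ring
      rw [h1, h2, ← mul_pow, h4]
      apply pow_le_pow_left₀ (by positivity)
      have h5 : (5:ℝ) ≤ Real.exp 2 := by
        have he : Real.exp 2 = Real.exp 1 * Real.exp 1 := by
          rw [← Real.exp_add]; norm_num
        have h1e := Real.exp_one_gt_d9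
        nlinarith
      have hsplit : Real.exp (-(2:ℝ)) = Real.exp (-(4:ℝ)) * Real.exp 2 := by
        rw [← Real.exp_add]; norm_num
      nlinarith [Real.exp_pos (-(4:ℝ))]
  -- good events
  set G : ZMod M → Set Ω := fun m =>
    {ω | (n:ℝ)/2 ≤ (∑ i ∈ s m, X i) ω ∧ (∑ i ∈ s m, X i) ω ≤ 5*(n:ℝ)} with hG
  have hSmeas : ∀ m, Measurable (∑ i ∈ s m, X i) := by
    intro m
    have he : (∑ i ∈ s m, X i) = fun ω => ∑ i ∈ s m, X i ω := by
      ext ω; simp [Finset.sum_apply]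
    rw [he]
    exact Finset.measurable_sum _ (fun i _ => hXmeas i)
  have hGmeas : ∀ m, MeasurableSet (G m) := by
    intro m
    have : G m
        = {ω | (n:ℝ)/2 ≤ (∑ i ∈ s m, X i) ω} ∩ {ω | (∑ i ∈ s m, X i) ω ≤ 5*(n:ℝ)} := rfl
    rw [this]
    exact (measurableSet_le measurable_const (hSmeas m)).inter
      (measurableSet_le (hSmeas m) measurable_const)
  have hGcompl : ∀ m, P (G m)ᶜ ≤
      ENNReal.ofReal (Real.exp (-2*(n:ℝ))) + ENNReal.ofReal (Real.exp (-(n:ℝ)/8)) := by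
    intro m
    have hsub : (G m)ᶜ ⊆ {ω | 5*(n:ℝ) ≤ (∑ i ∈ s m, X i) ω} ∪
        {ω | (∑ i ∈ s m, X i) ω ≤ (n:ℝ)/2} := by
      intro ω hω
      rw [hG] at hω
      simp only [Set.mem_compl_iff, Set.mem_setOf_eq, not_and_or, not_le] at hω
      rcases hω with h | h
      · right; exact le_of_lt h
      · left; exact le_of_lt h
    calc P (G m)ᶜ ≤ P ({ω | 5*(n:ℝ) ≤ (∑ i ∈ s m, X i) ω} ∪
        {ω | (∑ i ∈ s m, X i) ω ≤ (n:ℝ)/2}) := measure_mono hsub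
    _ ≤ P {ω | 5*(n:ℝ) ≤ (∑ i ∈ s m, X i) ω} +
        P {ω | (∑ i ∈ s m, X i) ω ≤ (n:ℝ)/2} := measure_union_le _ _
    _ ≤ ENNReal.ofReal (Real.exp (-2*(n:ℝ))) + ENNReal.ofReal (Real.exp (-(n:ℝ)/8)) :=
        add_le_add (hchern m).2 (hchern m).1
  -- value of the sums S_m
  have hSval : ∀ ω m, (∑ i ∈ s m, X i) ω
      = (M:ℝ) * ∑ k ∈ F, Complex.normSq (g ω (m - k)) := by
    intro ω m
    rw [Finset.sum_apply, hs, Finset.sum_product]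
    rw [Finset.sum_image (fun k _ k' _ h => hinj m h)]
    rw [Finset.mul_sum]
    refine Finset.sum_congr rfl fun k _ => ?_
    rw [hurepr ω (m - k), Complex.normSq_add_mul_I]
    simp only [hX, Fintype.sum_bool]
    ring
  -- deterministic implication
  have hdet : (⋂ m : ZMod M, G m) ⊆ {ω | ∀ x : ZMod M → ℂ,
      (F.card : ℝ) / 2 * nsq M x ≤
          ∑ kl ∈ F ×ˢ (Finset.univ : Finset (ZMod M)),
            ‖inn M x (tfShift M kl.1 kl.2 (g ω))‖ ^ 2 ∧
        ∑ kl ∈ F ×ˢ (Finset.univ : Finset (ZMod M)),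
            ‖inn M x (tfShift M kl.1 kl.2 (g ω))‖ ^ 2 ≤
          5 * (F.card : ℝ) * nsq M x} := by
    intro ω hω
    simp only [Set.mem_iInter] at hω
    intro x
    have hbnd : ∀ m : ZMod M,
        (n:ℝ)/2 ≤ (M:ℝ) * ∑ k ∈ F, Complex.normSq (g ω (m - k)) ∧
        (M:ℝ) * ∑ k ∈ F, Complex.normSq (g ω (m - k)) ≤ 5*(n:ℝ) := by
      intro m
      have := hω m
      rw [hG] at this
      simp only [Set.mem_setOf_eq] at this
      rwa [hSval ω m] at this
    have hsum : ∑ kl ∈ F ×ˢ (Finset.univ : Finset (ZMod M)),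
        ‖inn M x (tfShift M kl.1 kl.2 (g ω))‖ ^ 2
        = ∑ m : ZMod M, Complex.normSq (x m) *
            ((M:ℝ) * ∑ k ∈ F, Complex.normSq (g ω (m - k))) := by
      rw [Finset.sum_product]
      rw [Finset.sum_congr rfl (fun k _ => gabor_line_eq M k (g ω) x)]
      have hpull : ∀ k : ZMod M, (M:ℝ) * ∑ m : ZMod M,
          Complex.normSq (x m) * Complex.normSq (g ω (m - k))
          = ∑ m : ZMod M, (M:ℝ) * (Complex.normSq (x m) * Complex.normSq (g ω (m - k))) :=
        fun k => Finset.mul_sum _ _ _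
      rw [Finset.sum_congr rfl (fun k _ => hpull k), Finset.sum_comm]
      refine Finset.sum_congr rfl fun m _ => ?_
      rw [Finset.mul_sum, Finset.mul_sum]
      exact Finset.sum_congr rfl fun k _ => by ring
    have hnsq : nsq M x = ∑ m : ZMod M, Complex.normSq (x m) := by
      simp [nsq, Complex.sq_norm]
    rw [hsum, hnsq, ← hn]
    constructor
    · have hL : ((n:ℝ)/2) * ∑ m : ZMod M, Complex.normSq (x m)
          = ∑ m : ZMod M, ((n:ℝ)/2) * Complex.normSq (x m) := Finset.mul_sum _ _ _
      rw [hL]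
      refine Finset.sum_le_sum fun m _ => ?_
      have h1 := (hbnd m).1
      have h2 := Complex.normSq_nonneg (x m)
      nlinarith
    · have hR : (5 * (n:ℝ)) * ∑ m : ZMod M, Complex.normSq (x m)
          = ∑ m : ZMod M, (5 * (n:ℝ)) * Complex.normSq (x m) := Finset.mul_sum _ _ _
      rw [hR]
      refine Finset.sum_le_sum fun m _ => ?_
      have h1 := (hbnd m).2
      have h2 := Complex.normSq_nonneg (x m)
      nlinarith
  -- final assembly
  have hGm : MeasurableSet (⋂ m : ZMod M, G m) := MeasurableSet.iInter (fun m => hGmeas m)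
  have hcompl : P (⋂ m : ZMod M, G m)ᶜ ≤
      ENNReal.ofReal ((M:ℝ) * (Real.exp (-2*(n:ℝ)) + Real.exp (-(n:ℝ)/8))) := by
    rw [Set.compl_iInter]
    refine (measure_iUnion_le _).trans ?_
    rw [tsum_fintype]
    have hb : ∀ m : ZMod M, P (G m)ᶜ ≤
        ENNReal.ofReal (Real.exp (-2*(n:ℝ)) + Real.exp (-(n:ℝ)/8)) := by
      intro m
      refine (hGcompl m).trans ?_
      rw [ENNReal.ofReal_add (Real.exp_pos _).le (Real.exp_pos _).le]
    refine (Finset.sum_le_sum fun m _ => hb m).trans ?_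
    rw [Finset.sum_const, Finset.card_univ, ZMod.card M, nsmul_eq_mul]
    rw [ENNReal.ofReal_mul (by positivity : (0:ℝ) ≤ (M:ℝ)), ENNReal.ofReal_natCast]
  have hPG : P (⋂ m : ZMod M, G m) = 1 - P (⋂ m : ZMod M, G m)ᶜ := by
    rw [prob_compl_eq_one_sub hGm, ENNReal.sub_sub_cancel ENNReal.one_ne_top prob_le_one]
  refine le_trans ?_ (measure_mono hdet)
  rw [hPG]
  calc ENNReal.ofReal (1 - (M:ℝ) * (Real.exp (-2*(n:ℝ)) + Real.exp (-(n:ℝ)/8)))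
      = ENNReal.ofReal 1 -
        ENNReal.ofReal ((M:ℝ) * (Real.exp (-2*(n:ℝ)) + Real.exp (-(n:ℝ)/8))) :=
        ENNReal.ofReal_sub _ (by positivity)
    _ = 1 - ENNReal.ofReal ((M:ℝ) * (Real.exp (-2*(n:ℝ)) + Real.exp (-(n:ℝ)/8))) := by
        rw [ENNReal.ofReal_one]
    _ ≤ 1 - P (⋂ m : ZMod M, G m)ᶜ := tsub_le_tsub_left hcompl 1
end
end

section
/- Let h be a complex Gaussian vector in ℂ^M (so h ∼ 𝒞𝒩(0,(1/M)I_M)), and on the event h ≠ 0 let g = h/‖h‖₂ (so that g is uniformly distributed on the unit sphere of ℂ^M). Let F ⊆ ℤ_M be nonempty and Λ = F × ℤ_M. Then with probability at least 1 − e^{−M/2} − e^{−9M/32} − M·(e^{−2|F|} + e^{−|F|/8}), for every x ∈ ℂ^M: (|F|/8)·‖x‖₂² ≤ Σ_{(k,ℓ)∈Λ} |⟨x, π(k,ℓ)g⟩|² ≤ 20|F|·‖x‖₂². -/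
open MeasureTheory ProbabilityTheory Complex Finset
open scoped Real BigOperators Classical NNReal ENNReal

noncomputable section

/-! ### Auxiliary lemmas -/

lemma char_sum (M : ℕ) [NeZero M] (d : ℤ) :
    ∑ l : ZMod M, Complex.exp (2 * (Real.pi : ℂ) * Complex.I * (l.val : ℂ) * (d : ℂ) / (M : ℂ))
      = if (d : ZMod M) = 0 then (M : ℂ) else 0 := by
  have hM : (M : ℂ) ≠ 0 := Nat.cast_ne_zero.mpr (NeZero.ne M)
  set ζ : ℂ := Complex.exp (2 * (Real.pi : ℂ) * Complex.I * (d : ℂ) / (M : ℂ)) with hζdef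
  have hterm : ∀ l : ZMod M,
      Complex.exp (2 * (Real.pi : ℂ) * Complex.I * (l.val : ℂ) * (d : ℂ) / (M : ℂ))
        = ζ ^ (l.val) := by
    intro l
    rw [hζdef, ← Complex.exp_nat_mul]
    ring_nf
  have hbij : ∑ l : ZMod M, ζ ^ (l.val) = ∑ j ∈ Finset.range M, ζ ^ j := by
    refine Finset.sum_nbij' (fun l => l.val) (fun j => (j : ZMod M))
      (fun l _ => Finset.mem_range.mpr (ZMod.val_lt l)) (fun j _ => Finset.mem_univ _)
      (fun l _ => by simp [ZMod.natCast_val, ZMod.cast_id])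
      (fun j hj => ZMod.val_cast_of_lt (Finset.mem_range.mp hj))
      (fun l _ => rfl)
  rw [Finset.sum_congr rfl (fun l _ => hterm l), hbij]
  by_cases hd : (d : ZMod M) = 0
  · rw [if_pos hd]
    obtain ⟨n, hn⟩ := (ZMod.intCast_zmod_eq_zero_iff_dvd d M).mp hd
    have hζ1 : ζ = 1 := by
      rw [hζdef, hn]
      have : 2 * (Real.pi : ℂ) * Complex.I * ((M : ℂ) * (n : ℂ)) / (M : ℂ)
          = (n : ℂ) * (2 * (Real.pi : ℂ) * Complex.I) := by field_simp
      rw [show (((M : ℤ) * n : ℤ) : ℂ) = (M : ℂ) * (n : ℂ) by push_cast; ring, this]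
      exact Complex.exp_int_mul_two_pi_mul_I n
    simp [hζ1]
  · rw [if_neg hd]
    have hζM : ζ ^ M = 1 := by
      rw [hζdef, ← Complex.exp_nat_mul]
      have : (M : ℂ) * (2 * (Real.pi : ℂ) * Complex.I * (d : ℂ) / (M : ℂ))
          = (d : ℂ) * (2 * (Real.pi : ℂ) * Complex.I) := by field_simp
      rw [this]
      exact Complex.exp_int_mul_two_pi_mul_I d
    have hζ1 : ζ ≠ 1 := by
      intro h1
      obtain ⟨n, hn⟩ := Complex.exp_eq_one_iff.mp (hζdef ▸ h1)
      apply hd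
      have hdn : (d : ℂ) = (n : ℂ) * (M : ℂ) := by
        field_simp at hn
        have h2 : 2 * (Real.pi : ℂ) * Complex.I * (d : ℂ)
            = 2 * (Real.pi : ℂ) * Complex.I * ((n : ℂ) * (M : ℂ)) := by rw [hn]; ring
        exact mul_left_cancel₀ Complex.two_pi_I_ne_zero h2
      have hdnz : d = n * M := by exact_mod_cast hdn
      rw [hdnz]
      push_cast
      simp
    rw [geom_sum_eq hζ1, hζM, sub_self, zero_div]

lemma lat_sum (M : ℕ) [NeZero M] (x g : ZMod M → ℂ) (k : ZMod M) :
    ∑ l : ZMod M, ‖inn M x (tfShift M k l g)‖ ^ 2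
      = M * ∑ m : ZMod M, ‖x m‖ ^ 2 * ‖g (m - k)‖ ^ 2 := by
  set e : ZMod M → ZMod M → ℂ := fun l m =>
    Complex.exp (2 * (Real.pi : ℂ) * Complex.I * (l.val : ℂ) * (m.val : ℂ) / (M : ℂ)) with he
  set a : ZMod M → ℂ := fun m => x m * (starRingEnd ℂ) (g (m - k)) with ha
  have hconj : ∀ (l m : ZMod M), (starRingEnd ℂ) (e l m)
      = Complex.exp (-(2 * (Real.pi : ℂ) * Complex.I * (l.val : ℂ) * (m.val : ℂ) / (M : ℂ))) := by
    intro l m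
    rw [he, ← Complex.exp_conj]
    congr 1
    simp only [map_div₀, map_mul, Complex.conj_I, Complex.conj_ofReal, map_ofNat,
      Complex.conj_natCast]
    ring
  have horth : ∀ m m' : ZMod M,
      ∑ l : ZMod M, (starRingEnd ℂ) (e l m) * e l m' = if m = m' then (M : ℂ) else 0 := by
    intro m m'
    have hterm : ∀ l : ZMod M, (starRingEnd ℂ) (e l m) * e l m'
        = Complex.exp (2 * (Real.pi : ℂ) * Complex.I * (l.val : ℂ)
            * ((((m'.val : ℤ) - (m.val : ℤ)) : ℤ) : ℂ) / (M : ℂ)) := by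
      intro l
      rw [hconj, he, ← Complex.exp_add]
      congr 1
      push_cast
      ring
    rw [Finset.sum_congr rfl (fun l _ => hterm l), char_sum]
    have hiff : ((((m'.val : ℤ) - (m.val : ℤ)) : ℤ) : ZMod M) = 0 ↔ m = m' := by
      push_cast
      simp [ZMod.natCast_val, ZMod.cast_id, sub_eq_zero, eq_comm]
    rw [if_congr hiff rfl rfl]
  have hc : ∀ l, inn M x (tfShift M k l g) = ∑ m, a m * (starRingEnd ℂ) (e l m) := by
    intro l
    unfold inn tfShift
    refine Finset.sum_congr rfl fun m _ => ?_
    rw [ha]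
    simp only [map_mul, he]
    ring
  have habs : ∀ z : ℂ, ((‖z‖ : ℝ) : ℂ) ^ 2 = z * (starRingEnd ℂ) z := fun z => by
    rw [← Complex.ofReal_pow, ← Complex.normSq_eq_norm_sq, Complex.mul_conj]
  apply Complex.ofReal_injective
  push_cast
  calc (∑ l : ZMod M, ((‖inn M x (tfShift M k l g)‖ : ℝ) : ℂ) ^ 2)
      = ∑ l : ZMod M, (∑ m, a m * (starRingEnd ℂ) (e l m))
          * (starRingEnd ℂ) (∑ m', a m' * (starRingEnd ℂ) (e l m')) := by
        refine Finset.sum_congr rfl fun l _ => ?_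
        rw [habs, hc]
    _ = ∑ l : ZMod M, ∑ m, ∑ m', (a m * (starRingEnd ℂ) (a m'))
          * ((starRingEnd ℂ) (e l m) * e l m') := by
        refine Finset.sum_congr rfl fun l _ => ?_
        rw [map_sum, Finset.sum_mul_sum]
        refine Finset.sum_congr rfl fun m _ => Finset.sum_congr rfl fun m' _ => ?_
        simp only [map_mul, Complex.conj_conj]
        ring
    _ = ∑ m, ∑ m', (a m * (starRingEnd ℂ) (a m'))
          * ∑ l : ZMod M, (starRingEnd ℂ) (e l m) * e l m' := by
        rw [Finset.sum_comm]
        refine Finset.sum_congr rfl fun m _ => ?_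
        rw [Finset.sum_comm]
        refine Finset.sum_congr rfl fun m' _ => ?_
        rw [Finset.mul_sum]
    _ = ∑ m, ∑ m', (a m * (starRingEnd ℂ) (a m')) * (if m = m' then (M : ℂ) else 0) := by
        refine Finset.sum_congr rfl fun m _ => Finset.sum_congr rfl fun m' _ => ?_
        rw [horth]
    _ = ∑ m, (a m * (starRingEnd ℂ) (a m)) * (M : ℂ) := by
        refine Finset.sum_congr rfl fun m _ => ?_
        simp only [mul_ite, mul_zero]
        rw [Finset.sum_ite_eq]
        simp
    _ = (M : ℂ) * ∑ m : ZMod M, ((‖x m‖ : ℝ) : ℂ) ^ 2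
          * ((‖g (m - k)‖ : ℝ) : ℂ) ^ 2 := by
        rw [Finset.mul_sum]
        refine Finset.sum_congr rfl fun m _ => ?_
        rw [habs, habs, ha]
        simp only [map_mul, Complex.conj_conj]
        ring

lemma gauss_sq_int (v : ℝ≥0) (hv : v ≠ 0) (t : ℝ) (ht : 2 * (v : ℝ) * t < 1) :
    (∫ x, Real.exp (t * x ^ 2) ∂(gaussianReal 0 v) = (Real.sqrt (1 - 2 * (v : ℝ) * t))⁻¹)
    ∧ Integrable (fun x => Real.exp (t * x ^ 2)) (gaussianReal 0 v) := by
  have hvpos : (0 : ℝ) < v := lt_of_le_of_ne v.coe_nonneg (by exact_mod_cast (Ne.symm hv))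
  set b : ℝ := (2 * (v : ℝ))⁻¹ - t with hb
  have hbpos : 0 < b := by
    rw [hb, sub_pos, inv_eq_one_div, lt_div_iff₀ (by positivity : (0 : ℝ) < 2 * (v : ℝ))]
    nlinarith
  have hpdf : ∀ x : ℝ, gaussianPDFReal 0 v x * Real.exp (t * x ^ 2)
      = (Real.sqrt (2 * Real.pi * v))⁻¹ * Real.exp (-b * x ^ 2) := by
    intro x
    rw [gaussianPDFReal]
    rw [mul_assoc, ← Real.exp_add]
    congr 2
    rw [hb]
    field_simp
    ring
  have hmain : ∫ x, gaussianPDFReal 0 v x * Real.exp (t * x ^ 2)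
      = (Real.sqrt (1 - 2 * (v : ℝ) * t))⁻¹ := by
    rw [MeasureTheory.integral_congr_ae (Filter.Eventually.of_forall hpdf),
      MeasureTheory.integral_const_mul, integral_gaussian]
    rw [← Real.sqrt_inv, ← Real.sqrt_mul (by positivity), ← Real.sqrt_inv]
    congr 1
    have h1 : (1 : ℝ) - 2 * v * t = 2 * v * b := by rw [hb]; field_simp
    rw [h1]
    field_simp
  have hint : Integrable (fun x => gaussianPDFReal 0 v x * Real.exp (t * x ^ 2)) volume := by
    refine Integrable.congr ?_ (Filter.Eventually.of_forall fun x => (hpdf x).symm)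
    exact (integrable_exp_neg_mul_sq hbpos).const_mul _
  have hgr : gaussianReal 0 v = volume.withDensity (gaussianPDF 0 v) :=
    gaussianReal_of_var_ne_zero 0 hv
  have hmeas : Measurable (gaussianPDF 0 v) := measurable_gaussianPDF 0 v
  have hlt : ∀ᵐ x ∂(volume : Measure ℝ), gaussianPDF 0 v x < ⊤ :=
    Filter.Eventually.of_forall fun x => ENNReal.ofReal_lt_top
  have hiff := integrable_withDensity_iff hmeas hlt (g := fun x => Real.exp (t * x ^ 2))
  have htoReal : ∀ x : ℝ, (gaussianPDF 0 v x).toReal = gaussianPDFReal 0 v x := fun x =>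
    ENNReal.toReal_ofReal (gaussianPDFReal_nonneg 0 v x)
  constructor
  · rw [hgr]
    rw [show gaussianPDF 0 v = fun x => ((gaussianPDFReal 0 v x).toNNReal : ℝ≥0∞) from rfl]
    rw [integral_withDensity_eq_integral_smul
      ((measurable_gaussianPDFReal 0 v).real_toNNReal) _]
    rw [← hmain]
    refine MeasureTheory.integral_congr_ae (Filter.Eventually.of_forall fun x => ?_)
    simp [NNReal.smul_def, Real.coe_toNNReal _ (gaussianPDFReal_nonneg 0 v x)]
  · rw [hgr]
    rw [hiff]
    refine Integrable.congr hint (Filter.Eventually.of_forall fun x => ?_)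
    simp only []
    rw [htoReal x]
    ring

lemma mgf_sq_gauss {Ω : Type*} [MeasurableSpace Ω] (P : Measure Ω)
    (v : ℝ≥0) (hv : v ≠ 0) (u : Ω → ℝ) (hu : Measurable u)
    (hlaw : Measure.map u P = gaussianReal 0 v) (t : ℝ) (ht : 2 * (v : ℝ) * t < 1) :
    mgf (fun ω => (u ω) ^ 2) P t = (Real.sqrt (1 - 2 * (v : ℝ) * t))⁻¹
    ∧ Integrable (fun ω => Real.exp (t * (u ω) ^ 2)) P := by
  have hsm : AEStronglyMeasurable (fun x : ℝ => Real.exp (t * x ^ 2)) (Measure.map u P) :=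
    (Continuous.aestronglyMeasurable (by continuity))
  have key : ∫ x, Real.exp (t * x ^ 2) ∂(Measure.map u P) = ∫ ω, Real.exp (t * (u ω) ^ 2) ∂P :=
    integral_map hu.aemeasurable hsm
  constructor
  · rw [mgf, ← key, hlaw, (gauss_sq_int v hv t ht).1]
  · have := (gauss_sq_int v hv t ht).2
    rw [← hlaw] at this
    exact (integrable_map_measure hsm hu.aemeasurable).mp this

lemma chisq_tail {Ω ι : Type*} [MeasurableSpace Ω] (P : Measure Ω) [IsProbabilityMeasure P]
    (v : ℝ≥0) (hv : v ≠ 0) (u : ι → Ω → ℝ) (hu : ∀ i, Measurable (u i))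
    (hindep : iIndepFun u P)
    (hlaw : ∀ i, Measure.map (u i) P = gaussianReal 0 v)
    (s : Finset ι) (t ε : ℝ) (ht : 2 * (v : ℝ) * t < 1) :
    (0 ≤ t → (P {ω | ε ≤ ∑ i ∈ s, (u i ω) ^ 2}).toReal
        ≤ Real.exp (-t * ε) * ((Real.sqrt (1 - 2 * (v : ℝ) * t))⁻¹) ^ s.card)
    ∧ (t ≤ 0 → (P {ω | (∑ i ∈ s, (u i ω) ^ 2) ≤ ε}).toReal
        ≤ Real.exp (-t * ε) * ((Real.sqrt (1 - 2 * (v : ℝ) * t))⁻¹) ^ s.card) := by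
  classical
  set q : ι → Ω → ℝ := fun i ω => (u i ω) ^ 2 with hq
  have hq_meas : ∀ i, Measurable (q i) := fun i => (hu i).pow_const 2
  have hq_indep : iIndepFun q P :=
    hindep.comp (fun _ x => x ^ 2) (fun _ => measurable_id.pow_const 2)
  have h_int : ∀ i ∈ s, Integrable (fun ω => Real.exp (t * q i ω)) P := fun i _ =>
    (mgf_sq_gauss P v hv (u i) (hu i) (hlaw i) t ht).2
  have h_int_sum : Integrable (fun ω => Real.exp (t * (∑ i ∈ s, q i) ω)) P :=
    hq_indep.integrable_exp_mul_sum hq_meas h_int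
  have h_mgf : mgf (∑ i ∈ s, q i) P t = ((Real.sqrt (1 - 2 * (v : ℝ) * t))⁻¹) ^ s.card := by
    rw [hq_indep.mgf_sum hq_meas s]
    rw [Finset.prod_congr rfl
      (fun i _ => (mgf_sq_gauss P v hv (u i) (hu i) (hlaw i) t ht).1)]
    exact Finset.prod_const _
  have hset1 : {ω | ε ≤ ∑ i ∈ s, (u i ω) ^ 2} = {ω | ε ≤ (∑ i ∈ s, q i) ω} := by
    ext ω; simp [hq, Finset.sum_apply]
  have hset2 : {ω | (∑ i ∈ s, (u i ω) ^ 2) ≤ ε} = {ω | (∑ i ∈ s, q i) ω ≤ ε} := by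
    ext ω; simp [hq, Finset.sum_apply]
  constructor
  · intro htpos
    rw [hset1, ← h_mgf]
    exact measure_ge_le_exp_mul_mgf ε htpos h_int_sum
  · intro htneg
    rw [hset2, ← h_mgf]
    exact measure_le_le_exp_mul_mgf ε htneg h_int_sum

lemma sqrt_inv_pow (a : ℝ) (ha : 0 < a) (n : ℕ) :
    ((Real.sqrt a)⁻¹) ^ n = Real.exp (-((n : ℝ) * (Real.log a / 2))) := by
  have h1 : Real.sqrt a = Real.exp (Real.log a / 2) := by
    rw [← Real.log_sqrt ha.le, Real.exp_log (Real.sqrt_pos.mpr ha)]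
  rw [h1, ← Real.exp_neg, ← Real.exp_nat_mul]
  congr 1
  ring

set_option maxHeartbeats 1600000 in
/-- For a window g = h/‖h‖₂ uniformly distributed on the sphere (h complex Gaussian)
and Λ = F × ℤ_M, with probability at least
1 − e^{−M/2} − e^{−9M/32} − M(e^{−2|F|} + e^{−|F|/8}) the frame bounds |F|/8 and 20|F| hold. -/
theorem stmt15 (M : ℕ) [NeZero M] {Ω : Type*} [MeasurableSpace Ω] (P : Measure Ω)
    [IsProbabilityMeasure P] (h : Ω → ZMod M → ℂ) (hh : IsGaussianWindow M P h)
    (F : Finset (ZMod M)) (hF : F.Nonempty) :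
    P {ω | h ω ≠ 0 ∧ ∀ x : ZMod M → ℂ,
        (F.card : ℝ) / 8 * nsq M x ≤
            ∑ kl ∈ F ×ˢ (Finset.univ : Finset (ZMod M)),
              ‖inn M x (tfShift M kl.1 kl.2
                (fun m => h ω m / (Real.sqrt (nsq M (h ω)) : ℂ)))‖ ^ 2 ∧
          ∑ kl ∈ F ×ˢ (Finset.univ : Finset (ZMod M)),
              ‖inn M x (tfShift M kl.1 kl.2
                (fun m => h ω m / (Real.sqrt (nsq M (h ω)) : ℂ)))‖ ^ 2 ≤
            20 * (F.card : ℝ) * nsq M x} ≥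
      ENNReal.ofReal
        (1 - Real.exp (-(M : ℝ) / 2) - Real.exp (-9 * (M : ℝ) / 32) -
          (M : ℝ) * (Real.exp (-2 * F.card) + Real.exp (-(F.card : ℝ) / 8))) := by
  obtain ⟨u, hu_meas, hu_indep, hu_law, hu_eq⟩ := hh
  have hMpos : 0 < M := Nat.pos_of_ne_zero (NeZero.ne M)
  have hMR : (0 : ℝ) < M := by exact_mod_cast hMpos
  have hFc : (1 : ℝ) ≤ F.card := by exact_mod_cast hF.card_pos
  set v : ℝ≥0 := (1 / (2 * M) : NNReal) with hvdef
  have hvR : (v : ℝ) = 1 / (2 * (M : ℝ)) := by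
    rw [hvdef]
    push_cast
    ring
  have hvpos : (0 : ℝ) < (v : ℝ) := by rw [hvR]; positivity
  have hvne : v ≠ 0 := by
    intro h0
    rw [h0] at hvpos
    simp at hvpos
  have h2vc : ∀ c : ℝ, 2 * (v : ℝ) * (c * M) = c := by
    intro c
    rw [hvR]
    field_simp
  have hinj : ∀ m : ZMod M, Function.Injective (fun k : ZMod M => m - k) := by
    intro m a b hab
    exact sub_right_inj.mp hab
  set Tm : ZMod M → Finset (ZMod M × Bool) :=
    fun m => (F.image fun k => m - k) ×ˢ (Finset.univ : Finset Bool) with hTmdef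
  -- relating sums of u-squares to h
  have habs2 : ∀ ω m, ‖h ω m‖ ^ 2 = (u (m, false) ω) ^ 2 + (u (m, true) ω) ^ 2 := by
    intro ω m
    rw [hu_eq ω m, Complex.sq_norm, Complex.normSq_add_mul_I]
  have hNtot : ∀ ω : Ω, nsq M (h ω) = ∑ i : ZMod M × Bool, (u i ω) ^ 2 := by
    intro ω
    rw [nsq, Fintype.sum_prod_type]
    refine Finset.sum_congr rfl fun m _ => ?_
    rw [habs2, Fintype.sum_bool]
    ring
  have hS : ∀ (m : ZMod M) (ω : Ω),
      (∑ i ∈ Tm m, (u i ω) ^ 2) = ∑ k ∈ F, ‖h ω (m - k)‖ ^ 2 := by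
    intro m ω
    rw [hTmdef]
    rw [Finset.sum_product, Finset.sum_image (fun a _ b _ hab => hinj m hab)]
    refine Finset.sum_congr rfl fun k _ => ?_
    rw [Fintype.sum_bool, habs2]
    ring
  have hcardT : ∀ m : ZMod M, (Tm m).card = F.card * 2 := by
    intro m
    rw [hTmdef]
    simp only []
    rw [Finset.card_product, Finset.card_image_of_injective _ (hinj m)]
    simp
  have hcardU : (Finset.univ : Finset (ZMod M × Bool)).card = M * 2 := by
    rw [Finset.card_univ, Fintype.card_prod, ZMod.card]
    simp
  -- numeric log facts
  have hlog2lb : (5 : ℝ) / 8 ≤ Real.log 2 := by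
    have := Real.log_two_gt_d9
    linarith
  have hlog2ub : Real.log 2 ≤ 23 / 32 := by
    have := Real.log_two_lt_d9
    linarith
  have hlog4 : Real.log 4 = 2 * Real.log 2 := by
    rw [show (4 : ℝ) = 2 ^ 2 by norm_num, Real.log_pow]
    push_cast
    ring
  have hlog5ub : Real.log 5 ≤ 2 := by
    rw [Real.log_le_iff_le_exp (by norm_num)]
    have h1 : (2.7182818283 : ℝ) < Real.exp 1 := Real.exp_one_gt_d9
    have h2 : Real.exp 2 = Real.exp 1 * Real.exp 1 := by
      rw [← Real.exp_add]; norm_num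
    nlinarith
  have toBound : ∀ (s : Set Ω) (r : ℝ), (P s).toReal ≤ r → P s ≤ ENNReal.ofReal r := by
    intro s r hr
    rw [← ENNReal.ofReal_toReal (measure_ne_top P s)]
    exact ENNReal.ofReal_le_ofReal hr
  -- bad events
  set A : Set Ω := {ω | (∑ i : ZMod M × Bool, (u i ω) ^ 2) ≤ 1 / 4} with hAdef
  set B : Set Ω := {ω | (2 : ℝ) ≤ ∑ i : ZMod M × Bool, (u i ω) ^ 2} with hBdef
  set C : ZMod M → Set Ω :=
    fun m => {ω | (∑ i ∈ Tm m, (u i ω) ^ 2) ≤ (F.card : ℝ) / (2 * M)} with hCdef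
  set D : ZMod M → Set Ω :=
    fun m => {ω | 5 * (F.card : ℝ) / M ≤ ∑ i ∈ Tm m, (u i ω) ^ 2} with hDdef
  -- tail bound (a)
  have hPA : P A ≤ ENNReal.ofReal (Real.exp (-(M : ℝ) / 2)) := by
    refine toBound _ _ ?_
    have ht : 2 * (v : ℝ) * ((-3) * M) < 1 := by rw [h2vc]; norm_num
    have hB := (chisq_tail P v hvne u hu_meas hu_indep hu_law Finset.univ
      ((-3) * (M : ℝ)) (1 / 4) ht).2 (by nlinarith)
    refine le_trans hB ?_
    rw [h2vc, hcardU, show (1 : ℝ) - (-3) = 4 by norm_num,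
      sqrt_inv_pow 4 (by norm_num), ← Real.exp_add, Real.exp_le_exp]
    push_cast
    nlinarith [hMR.le]
  -- tail bound (b)
  have hPB : P B ≤ ENNReal.ofReal (Real.exp (-9 * (M : ℝ) / 32)) := by
    refine toBound _ _ ?_
    have ht : 2 * (v : ℝ) * ((1 / 2) * M) < 1 := by rw [h2vc]; norm_num
    have hB := (chisq_tail P v hvne u hu_meas hu_indep hu_law Finset.univ
      ((1 / 2) * (M : ℝ)) 2 ht).1 (by nlinarith)
    refine le_trans hB ?_
    rw [h2vc, hcardU, show (1 : ℝ) - 1 / 2 = 1 / 2 by norm_num,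
      sqrt_inv_pow (1 / 2) (by norm_num), ← Real.exp_add, Real.exp_le_exp,
      show Real.log (1 / 2) = -Real.log 2 by rw [one_div, Real.log_inv]]
    push_cast
    nlinarith [hMR.le]
  -- tail bound (c)
  have hPC : ∀ m : ZMod M, P (C m) ≤ ENNReal.ofReal (Real.exp (-(F.card : ℝ) / 8)) := by
    intro m
    refine toBound _ _ ?_
    have ht : 2 * (v : ℝ) * ((-1) * M) < 1 := by rw [h2vc]; norm_num
    have hB := (chisq_tail P v hvne u hu_meas hu_indep hu_law (Tm m)
      ((-1) * (M : ℝ)) ((F.card : ℝ) / (2 * M)) ht).2 (by nlinarith)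
    refine le_trans hB ?_
    rw [h2vc, hcardT, show (1 : ℝ) - (-1) = 2 by norm_num,
      sqrt_inv_pow 2 (by norm_num), ← Real.exp_add, Real.exp_le_exp]
    have e1 : -(-1 * (M : ℝ)) * ((F.card : ℝ) / (2 * M)) = (F.card : ℝ) / 2 := by
      field_simp
    rw [e1]
    push_cast
    nlinarith [hFc]
  -- tail bound (d)
  have hPD : ∀ m : ZMod M, P (D m) ≤ ENNReal.ofReal (Real.exp (-2 * (F.card : ℝ))) := by
    intro m
    refine toBound _ _ ?_
    have ht : 2 * (v : ℝ) * ((4 / 5) * M) < 1 := by rw [h2vc]; norm_num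
    have hB := (chisq_tail P v hvne u hu_meas hu_indep hu_law (Tm m)
      ((4 / 5) * (M : ℝ)) (5 * (F.card : ℝ) / M) ht).1 (by nlinarith)
    refine le_trans hB ?_
    rw [h2vc, hcardT, show (1 : ℝ) - 4 / 5 = 1 / 5 by norm_num,
      sqrt_inv_pow (1 / 5) (by norm_num), ← Real.exp_add, Real.exp_le_exp,
      show Real.log (1 / 5) = -Real.log 5 by rw [one_div, Real.log_inv]]
    have e1 : -(4 / 5 * (M : ℝ)) * (5 * (F.card : ℝ) / M) = -4 * F.card := by
      field_simp
    rw [e1]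
    push_cast
    nlinarith [hFc]
  -- the union of bad events
  set Bad : Set Ω := A ∪ B ∪ ⋃ m : ZMod M, (C m ∪ D m) with hBaddef
  have hPBad : P Bad ≤ ENNReal.ofReal
      (Real.exp (-(M : ℝ) / 2) + Real.exp (-9 * (M : ℝ) / 32) +
        (M : ℝ) * (Real.exp (-2 * F.card) + Real.exp (-(F.card : ℝ) / 8))) := by
    have h1 : P Bad ≤ P A + P B + ∑ m : ZMod M, (P (C m) + P (D m)) := by
      rw [hBaddef]
      refine le_trans (measure_union_le _ _) ?_
      refine add_le_add (measure_union_le _ _) ?_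
      refine le_trans (measure_iUnion_le _) ?_
      rw [tsum_fintype]
      exact Finset.sum_le_sum fun m _ => measure_union_le _ _
    refine le_trans h1 ?_
    have h2 : ∑ m : ZMod M, (P (C m) + P (D m))
        ≤ ∑ m : ZMod M, (ENNReal.ofReal (Real.exp (-2 * (F.card : ℝ)))
            + ENNReal.ofReal (Real.exp (-(F.card : ℝ) / 8))) := by
      refine Finset.sum_le_sum fun m _ => ?_
      rw [add_comm (P (C m))]
      exact add_le_add (hPD m) (hPC m)
    have h3 : ∑ m : ZMod M, (ENNReal.ofReal (Real.exp (-2 * (F.card : ℝ)))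
          + ENNReal.ofReal (Real.exp (-(F.card : ℝ) / 8)))
        = ENNReal.ofReal ((M : ℝ) * (Real.exp (-2 * F.card) + Real.exp (-(F.card : ℝ) / 8))) := by
      rw [Finset.sum_const, Finset.card_univ, ZMod.card, nsmul_eq_mul,
        ← ENNReal.ofReal_add (by positivity) (by positivity),
        ← ENNReal.ofReal_natCast M,
        ← ENNReal.ofReal_mul (by positivity)]
    rw [ENNReal.ofReal_add (by positivity) (by positivity),
      ENNReal.ofReal_add (by positivity) (by positivity)]
    exact add_le_add (add_le_add hPA hPB) (le_trans h2 (le_of_eq h3))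
  -- the good event is contained in the target set
  have hsub : Badᶜ ⊆ {ω | h ω ≠ 0 ∧ ∀ x : ZMod M → ℂ,
      (F.card : ℝ) / 8 * nsq M x ≤
          ∑ kl ∈ F ×ˢ (Finset.univ : Finset (ZMod M)),
            ‖inn M x (tfShift M kl.1 kl.2
              (fun m => h ω m / (Real.sqrt (nsq M (h ω)) : ℂ)))‖ ^ 2 ∧
        ∑ kl ∈ F ×ˢ (Finset.univ : Finset (ZMod M)),
            ‖inn M x (tfShift M kl.1 kl.2
              (fun m => h ω m / (Real.sqrt (nsq M (h ω)) : ℂ)))‖ ^ 2 ≤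
          20 * (F.card : ℝ) * nsq M x} := by
    intro ω hω
    rw [hBaddef] at hω
    simp only [Set.compl_union, Set.mem_inter_iff, Set.mem_compl_iff, Set.compl_iUnion,
      Set.mem_iInter, hAdef, hBdef, hCdef, hDdef, Set.mem_setOf_eq, not_le] at hω
    obtain ⟨⟨hA1, hB1⟩, hCD⟩ := hω
    have hN1 : 1 / 4 < nsq M (h ω) := by rw [hNtot ω]; exact hA1
    have hN2 : nsq M (h ω) < 2 := by rw [hNtot ω]; exact hB1
    have hNpos : 0 < nsq M (h ω) := lt_trans (by norm_num) hN1
    constructor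
    · intro h0
      rw [h0] at hN1
      simp only [nsq, Pi.zero_apply, map_zero, norm_zero] at hN1
      norm_num at hN1
    · intro x
      set g : ZMod M → ℂ := fun m => h ω m / (Real.sqrt (nsq M (h ω)) : ℂ) with hgdef
      have hgabs : ∀ j : ZMod M,
          ‖g j‖ ^ 2 = ‖h ω j‖ ^ 2 / nsq M (h ω) := by
        intro j
        rw [hgdef]
        simp only []
        rw [norm_div, Complex.norm_real, Real.norm_of_nonneg (Real.sqrt_nonneg _), div_pow,
          Real.sq_sqrt hNpos.le]
      have key : ∑ kl ∈ F ×ˢ (Finset.univ : Finset (ZMod M)),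
            ‖inn M x (tfShift M kl.1 kl.2 g)‖ ^ 2
          = (M : ℝ) * ∑ m : ZMod M, ‖x m‖ ^ 2
              * ((∑ i ∈ Tm m, (u i ω) ^ 2) / nsq M (h ω)) := by
        rw [Finset.sum_product]
        calc ∑ k ∈ F, ∑ l : ZMod M, ‖inn M x (tfShift M k l g)‖ ^ 2
            = ∑ k ∈ F, ((M : ℝ) * ∑ m : ZMod M,
                ‖x m‖ ^ 2 * ‖g (m - k)‖ ^ 2) :=
              Finset.sum_congr rfl fun k _ => lat_sum M x g k
          _ = (M : ℝ) * ∑ k ∈ F, ∑ m : ZMod M,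
                ‖x m‖ ^ 2 * ‖g (m - k)‖ ^ 2 := by
              rw [Finset.mul_sum]
          _ = (M : ℝ) * ∑ m : ZMod M, ∑ k ∈ F,
                ‖x m‖ ^ 2 * ‖g (m - k)‖ ^ 2 := by
              rw [Finset.sum_comm]
          _ = (M : ℝ) * ∑ m : ZMod M, ‖x m‖ ^ 2
                * ((∑ i ∈ Tm m, (u i ω) ^ 2) / nsq M (h ω)) := by
              congr 1
              refine Finset.sum_congr rfl fun m _ => ?_
              rw [← Finset.mul_sum]
              congr 1
              rw [hS m ω, Finset.sum_div]
              exact Finset.sum_congr rfl fun k _ => hgabs (m - k)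
      have frac_lo : ∀ m : ZMod M,
          (F.card : ℝ) / (4 * M) ≤ (∑ i ∈ Tm m, (u i ω) ^ 2) / nsq M (h ω) := by
        intro m
        obtain ⟨h1, h2⟩ := hCD m
        rw [div_le_div_iff₀ (by positivity) hNpos]
        have e1 : ((F.card : ℝ) / (2 * M)) * (4 * M) = 2 * F.card := by field_simp; ring
        nlinarith [mul_lt_mul_of_pos_right h1 (show (0 : ℝ) < 4 * M by positivity), hN2, hFc]
      have frac_hi : ∀ m : ZMod M,
          (∑ i ∈ Tm m, (u i ω) ^ 2) / nsq M (h ω) ≤ 20 * (F.card : ℝ) / M := by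
        intro m
        obtain ⟨h1, h2⟩ := hCD m
        rw [div_le_div_iff₀ hNpos (by positivity)]
        have e1 : (5 * (F.card : ℝ) / M) * M = 5 * F.card := by field_simp
        nlinarith [mul_lt_mul_of_pos_right h2 hMR, hN1, hFc]
      have hxnn : ∀ m : ZMod M, (0 : ℝ) ≤ ‖x m‖ ^ 2 := fun m => by positivity
      have hnsqx : 0 ≤ nsq M x := Finset.sum_nonneg fun m _ => by positivity
      constructor
      · rw [key]
        have hstep : ∑ m : ZMod M, ‖x m‖ ^ 2 * ((F.card : ℝ) / (4 * M))
            ≤ ∑ m : ZMod M, ‖x m‖ ^ 2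
                * ((∑ i ∈ Tm m, (u i ω) ^ 2) / nsq M (h ω)) :=
          Finset.sum_le_sum fun m _ => mul_le_mul_of_nonneg_left (frac_lo m) (hxnn m)
        have e2 : (M : ℝ) * ∑ m : ZMod M, ‖x m‖ ^ 2 * ((F.card : ℝ) / (4 * M))
            = (F.card : ℝ) / 4 * nsq M x := by
          rw [← Finset.sum_mul, show nsq M x = ∑ m : ZMod M, ‖x m‖ ^ 2 from rfl]
          field_simp
        have h84 : (F.card : ℝ) / 8 * nsq M x ≤ (F.card : ℝ) / 4 * nsq M x := by nlinarith
        refine le_trans h84 ?_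
        rw [← e2]
        exact mul_le_mul_of_nonneg_left hstep hMR.le
      · rw [key]
        have hstep : ∑ m : ZMod M, ‖x m‖ ^ 2
              * ((∑ i ∈ Tm m, (u i ω) ^ 2) / nsq M (h ω))
            ≤ ∑ m : ZMod M, ‖x m‖ ^ 2 * (20 * (F.card : ℝ) / M) :=
          Finset.sum_le_sum fun m _ => mul_le_mul_of_nonneg_left (frac_hi m) (hxnn m)
        have e3 : (M : ℝ) * ∑ m : ZMod M, ‖x m‖ ^ 2 * (20 * (F.card : ℝ) / M)
            = 20 * (F.card : ℝ) * nsq M x := by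
          rw [← Finset.sum_mul, show nsq M x = ∑ m : ZMod M, ‖x m‖ ^ 2 from rfl]
          field_simp
        refine le_trans (mul_le_mul_of_nonneg_left hstep hMR.le) (le_of_eq e3)
  -- final assembly
  refine le_trans ?_ (measure_mono hsub)
  have h1le : (1 : ℝ≥0∞) ≤ P Badᶜ + P Bad := by
    rw [← measure_univ (μ := P), ← Set.compl_union_self Bad]
    exact measure_union_le _ _
  have h2 : 1 - P Bad ≤ P Badᶜ := tsub_le_iff_right.mpr h1le
  refine le_trans ?_ h2
  calc ENNReal.ofReal
        (1 - Real.exp (-(M : ℝ) / 2) - Real.exp (-9 * (M : ℝ) / 32) -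
          (M : ℝ) * (Real.exp (-2 * F.card) + Real.exp (-(F.card : ℝ) / 8)))
      = ENNReal.ofReal (1 - (Real.exp (-(M : ℝ) / 2) + Real.exp (-9 * (M : ℝ) / 32) +
          (M : ℝ) * (Real.exp (-2 * F.card) + Real.exp (-(F.card : ℝ) / 8)))) := by
        congr 1
        ring
    _ = 1 - ENNReal.ofReal (Real.exp (-(M : ℝ) / 2) + Real.exp (-9 * (M : ℝ) / 32) +
          (M : ℝ) * (Real.exp (-2 * F.card) + Real.exp (-(F.card : ℝ) / 8))) := by
        rw [ENNReal.ofReal_sub _ (by positivity), ENNReal.ofReal_one]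
    _ ≤ 1 - P Bad := tsub_le_tsub_left hPBad 1
end
end

section
/- Let h be a random vector in ℂ^M whose real and imaginary parts Re h(m), Im h(m), m ∈ ℤ_M, are 2M independent real Gaussian random variables with mean 0 and variance 1/(2M) (i.e., h ∼ 𝒞𝒩(0,(1/M)I_M)). Then P{ 1/2 < ‖h‖₂ < 2 } ≥ 1 − e^{−M/2} − e^{−9M/32}. In particular, there exists a constant C > 0 such that P{1/2 < ‖h‖₂ < 2} ≥ 1 − e^{−CM}. -/
open MeasureTheory ProbabilityTheory Complex Finset
open scoped Real BigOperators Classical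

set_option maxHeartbeats 1000000

open scoped NNReal ENNReal

noncomputable section

lemma gauss_sq_integral {v : ℝ≥0} (hv : 0 < v) {t : ℝ} (ht : 2 * (v:ℝ) * t < 1) :
    Integrable (fun x => Real.exp (t * x ^ 2)) (gaussianReal 0 v) ∧
    ∫ x, Real.exp (t * x ^ 2) ∂(gaussianReal 0 v) = Real.sqrt (1 / (1 - 2 * (v:ℝ) * t)) := by
  have hv0 : (0:ℝ) < (v:ℝ) := hv
  set b : ℝ := 1 / (2*(v:ℝ)) - t with hb_def
  have hb : 0 < b := by
    rw [hb_def, sub_pos, lt_div_iff₀ (by positivity)]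
    linarith
  have key : ∀ x : ℝ, gaussianPDFReal 0 v x * Real.exp (t * x^2)
      = (Real.sqrt (2*Real.pi*(v:ℝ)))⁻¹ * Real.exp (-b * x^2) := by
    intro x
    rw [gaussianPDFReal, mul_assoc, ← Real.exp_add]
    congr 2
    rw [hb_def]
    ring
  have hmap : gaussianReal 0 v
      = volume.withDensity (fun x => ((Real.toNNReal (gaussianPDFReal 0 v x) : ℝ≥0) : ℝ≥0∞)) := by
    rw [gaussianReal_of_var_ne_zero 0 hv.ne']
    rfl
  have hmeasf : Measurable fun x => Real.toNNReal (gaussianPDFReal 0 v x) :=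
    (measurable_gaussianPDFReal 0 v).real_toNNReal
  have hfun : (fun x => Real.toNNReal (gaussianPDFReal 0 v x) • Real.exp (t * x^2))
      = fun x => (Real.sqrt (2*Real.pi*(v:ℝ)))⁻¹ * Real.exp (-b * x^2) := by
    funext x
    rw [NNReal.smul_def, smul_eq_mul, Real.coe_toNNReal _ (gaussianPDFReal_nonneg 0 v x), key x]
  have hint' : Integrable (fun x => Real.toNNReal (gaussianPDFReal 0 v x) • Real.exp (t * x^2))
      (volume : Measure ℝ) := by
    rw [hfun]
    exact (integrable_exp_neg_mul_sq hb).const_mul _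
  constructor
  · rw [hmap, integrable_withDensity_iff_integrable_smul hmeasf]
    exact hint'
  · rw [hmap, integral_withDensity_eq_integral_smul hmeasf, hfun, integral_const_mul,
      integral_gaussian, ← Real.sqrt_inv, ← Real.sqrt_mul (by positivity)]
    congr 1
    have h2vb : 2 * (v:ℝ) * b = 1 - 2 * (v:ℝ) * t := by
      rw [hb_def]; field_simp
    rw [← h2vb]
    have hpi := Real.pi_pos
    field_simp

/-- Norm concentration for a complex Gaussian vector h ~ CN(0,(1/M)I):
P{1/2 < ‖h‖₂ < 2} ≥ 1 − e^{−M/2} − e^{−9M/32}; in particular ≥ 1 − e^{−CM} for some C > 0. -/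
theorem stmt16 (M : ℕ) [NeZero M] {Ω : Type*} [MeasurableSpace Ω] (P : Measure Ω)
    [IsProbabilityMeasure P] (h : Ω → ZMod M → ℂ) (hh : IsGaussianWindow M P h) :
    P {ω | 1 / 2 < Real.sqrt (nsq M (h ω)) ∧ Real.sqrt (nsq M (h ω)) < 2} ≥
        ENNReal.ofReal (1 - Real.exp (-(M : ℝ) / 2) - Real.exp (-9 * (M : ℝ) / 32)) ∧
      ∃ C : ℝ, 0 < C ∧
        P {ω | 1 / 2 < Real.sqrt (nsq M (h ω)) ∧ Real.sqrt (nsq M (h ω)) < 2} ≥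
          ENNReal.ofReal (1 - Real.exp (-C * M)) := by
  obtain ⟨u, hu_meas, hu_indep, hu_map, hu_eq⟩ := hh
  have hM : (0:ℝ) < M := Nat.cast_pos.mpr (NeZero.pos M)
  have hM1 : (1:ℝ) ≤ M := by exact_mod_cast Nat.one_le_iff_ne_zero.mpr (NeZero.ne M)
  set v : ℝ≥0 := (1 / (2 * M) : NNReal) with hv_def
  have hvr : (v:ℝ) = 1/(2*(M:ℝ)) := by
    rw [hv_def]
    push_cast
    ring
  have hv : 0 < v := by
    have : (0:ℝ) < (v:ℝ) := by rw [hvr]; positivity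
    exact_mod_cast this
  set X : (ZMod M × Bool) → Ω → ℝ := fun i ω => (u i ω)^2 with hX_def
  have hX_meas : ∀ i, Measurable (X i) := fun i => (hu_meas i).pow_const 2
  have hX_indep : iIndepFun X P :=
    hu_indep.comp (fun _ x => x^2) (fun _ => measurable_id.pow_const 2)
  -- per-coordinate mgf
  have hmgf : ∀ (t : ℝ), 2*(v:ℝ)*t < 1 → ∀ i : ZMod M × Bool,
      Integrable (fun ω => Real.exp (t * X i ω)) P ∧
      mgf (X i) P t = Real.sqrt (1/(1-2*(v:ℝ)*t)) := by
    intro t ht i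
    obtain ⟨hint, hval⟩ := gauss_sq_integral hv ht
    have hg : Measurable fun x : ℝ => Real.exp (t * x^2) :=
      ((measurable_id.pow_const 2).const_mul t).exp
    rw [← hu_map i] at hint hval
    refine ⟨(integrable_map_measure hg.aestronglyMeasurable
      (hu_meas i).aemeasurable).mp hint, ?_⟩
    rw [mgf, ← hval, integral_map (hu_meas i).aemeasurable hg.aestronglyMeasurable]
  have hcard : Fintype.card (ZMod M × Bool) = M * 2 := by
    simp [ZMod.card]
  -- sum equals nsq
  have hnsq : ∀ ω, nsq M (h ω) = (∑ i, X i) ω := by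
    intro ω
    simp only [nsq, Finset.sum_apply]
    rw [Fintype.sum_prod_type]
    refine Finset.sum_congr rfl fun m _ => ?_
    rw [hu_eq ω m, Fintype.sum_bool, Complex.sq_norm, Complex.normSq_add_mul_I, hX_def]
    ring
  set S : Ω → ℝ := ∑ i, X i with hS_def
  have hS_nonneg : ∀ ω, 0 ≤ S ω := by
    intro ω
    rw [hS_def]
    simp only [Finset.sum_apply]
    exact Finset.sum_nonneg fun i _ => sq_nonneg _
  have hS_meas : Measurable S := by
    rw [hS_def]
    have : (∑ i, X i) = fun ω => ∑ i, X i ω := by funext ω; simp [Finset.sum_apply]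
    rw [this]
    exact Finset.measurable_sum _ fun i _ => hX_meas i
  set a : ℝ := 3/4 - 2*Real.log 2 with ha_def
  set bb : ℝ := Real.log 2 - 2 with hbb_def
  -- upper tail
  have hup : (P {ω | (4:ℝ) ≤ S ω}).toReal ≤ Real.exp (bb*M) := by
    have htv : 2*(v:ℝ)*((M:ℝ)/2) = 1/2 := by rw [hvr]; field_simp
    have ht : 2*(v:ℝ)*((M:ℝ)/2) < 1 := by rw [htv]; norm_num
    have h1 := measure_ge_le_exp_mul_mgf (X := S) (μ := P) 4
      (by positivity : (0:ℝ) ≤ (M:ℝ)/2)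
      (hX_indep.integrable_exp_mul_sum hX_meas fun i _ => (hmgf _ ht i).1)
    rw [hS_def] at h1 ⊢
    rw [hX_indep.mgf_sum hX_meas] at h1
    have h2 : ∏ i : ZMod M × Bool, mgf (X i) P ((M:ℝ)/2) = 2 ^ M := by
      rw [Finset.prod_congr rfl fun i _ => (hmgf _ ht i).2, Finset.prod_const,
        Finset.card_univ, hcard, htv, show (1:ℝ)/(1-1/2) = 2 by norm_num,
        mul_comm, pow_mul, Real.sq_sqrt (by norm_num : (0:ℝ) ≤ 2)]
    rw [h2] at h1
    have e1 : Real.exp (-((M:ℝ)/2) * 4) * 2 ^ M = Real.exp (bb*M) := by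
      rw [show -((M:ℝ)/2) * 4 = (M:ℝ) * (-2) by ring,
        show bb * (M:ℝ) = (M:ℝ) * (-2 + Real.log 2) by rw [hbb_def]; ring,
        Real.exp_nat_mul, Real.exp_nat_mul, Real.exp_add, Real.exp_log two_pos, ← mul_pow]
    exact h1.trans_eq e1
  -- lower tail
  have hlo : (P {ω | S ω ≤ (1:ℝ)/4}).toReal ≤ Real.exp (a*M) := by
    have htv : 2*(v:ℝ)*(-3*(M:ℝ)) = -3 := by rw [hvr]; field_simp
    have ht : 2*(v:ℝ)*(-3*(M:ℝ)) < 1 := by rw [htv]; norm_num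
    have h1 := measure_le_le_exp_mul_mgf (X := S) (μ := P) (1/4)
      (by nlinarith : (-3*(M:ℝ)) ≤ 0)
      (hX_indep.integrable_exp_mul_sum hX_meas fun i _ => (hmgf _ ht i).1)
    rw [hS_def] at h1 ⊢
    rw [hX_indep.mgf_sum hX_meas] at h1
    have h2 : ∏ i : ZMod M × Bool, mgf (X i) P (-3*(M:ℝ)) = ((1:ℝ)/4) ^ M := by
      rw [Finset.prod_congr rfl fun i _ => (hmgf _ ht i).2, Finset.prod_const,
        Finset.card_univ, hcard, htv,
        show (1:ℝ)/(1-(-3)) = (1/2)^2 by norm_num,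
        Real.sqrt_sq (by norm_num : (0:ℝ) ≤ 1/2), mul_comm, pow_mul]
      norm_num
    rw [h2] at h1
    have e1 : Real.exp (-(-3*(M:ℝ)) * (1/4)) * ((1:ℝ)/4) ^ M = Real.exp (a*M) := by
      rw [show -(-3*(M:ℝ)) * (1/4) = (M:ℝ) * (3/4) by ring,
        show a * (M:ℝ) = (M:ℝ) * (3/4 + (-(Real.log 2 + Real.log 2))) by rw [ha_def]; ring,
        Real.exp_nat_mul, Real.exp_nat_mul, ← mul_pow]
      congr 1
      rw [Real.exp_add, Real.exp_neg, Real.exp_add, Real.exp_log two_pos]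
      norm_num
    exact h1.trans_eq e1
  -- the target set
  set T : Set Ω := {ω | 1 / 2 < Real.sqrt (nsq M (h ω)) ∧ Real.sqrt (nsq M (h ω)) < 2}
    with hT_def
  have hTset : T = (fun ω => Real.sqrt (S ω)) ⁻¹' (Set.Ioo (1/2) 2) := by
    rw [hT_def]
    ext ω
    simp only [Set.mem_setOf_eq, Set.mem_preimage, Set.mem_Ioo, hnsq ω]
  have hTmeas : MeasurableSet T := by
    rw [hTset]
    exact hS_meas.sqrt measurableSet_Ioo
  have hTc : Tᶜ ⊆ {ω | S ω ≤ (1:ℝ)/4} ∪ {ω | (4:ℝ) ≤ S ω} := by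
    intro ω hω
    rw [hTset] at hω
    simp only [Set.mem_compl_iff, Set.mem_preimage, Set.mem_Ioo, not_and_or, not_lt] at hω
    have hsq := Real.sq_sqrt (hS_nonneg ω)
    have hsn := Real.sqrt_nonneg (S ω)
    rcases hω with h1 | h2
    · left; simp only [Set.mem_setOf_eq]; nlinarith
    · right; simp only [Set.mem_setOf_eq]; nlinarith
  set δ : ℝ := Real.exp (a*M) + Real.exp (bb*M) with hδ_def
  have hδ0 : 0 < δ := by positivity
  have hcompl : (P Tᶜ).toReal ≤ δ := by
    have h1 : P Tᶜ ≤ P {ω | S ω ≤ (1:ℝ)/4} + P {ω | (4:ℝ) ≤ S ω} :=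
      (measure_mono hTc).trans (measure_union_le _ _)
    have h2 : (P Tᶜ).toReal ≤ (P {ω | S ω ≤ (1:ℝ)/4} + P {ω | (4:ℝ) ≤ S ω}).toReal :=
      ENNReal.toReal_mono (by finiteness) h1
    rw [ENNReal.toReal_add (measure_ne_top _ _) (measure_ne_top _ _)] at h2
    rw [hδ_def]
    linarith
  have hPT : 1 - δ ≤ (P T).toReal := by
    have hsum : (P T).toReal + (P Tᶜ).toReal = 1 := by
      have := prob_add_prob_compl (μ := P) hTmeas
      have h2 := congrArg ENNReal.toReal this
      rwa [ENNReal.toReal_add (measure_ne_top _ _) (measure_ne_top _ _),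
        ENNReal.toReal_one] at h2
    linarith
  have hkey : P T ≥ ENNReal.ofReal (1 - δ) :=
    ENNReal.ofReal_le_of_le_toReal (by linarith)
  have hlog2u : Real.log 2 < 0.6931471808 := Real.log_two_lt_d9
  have hlog2l : 0.6931471803 < Real.log 2 := Real.log_two_gt_d9
  have ha_neg : a ≤ -(1:ℝ)/2 := by rw [ha_def]; linarith
  have hbb_neg : bb ≤ -9/32 := by rw [hbb_def]; linarith
  constructor
  · refine le_trans (ENNReal.ofReal_le_ofReal ?_) hkey
    have e1 : Real.exp (a*M) ≤ Real.exp (-(M:ℝ)/2) := by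
      apply Real.exp_le_exp.mpr
      nlinarith
    have e2 : Real.exp (bb*M) ≤ Real.exp (-9*(M:ℝ)/32) := by
      apply Real.exp_le_exp.mpr
      nlinarith
    rw [hδ_def]
    linarith
  · -- δ < 1
    have hEa : Real.exp a ≤ Real.exp 1 / 4 := by
      rw [ha_def, show (3:ℝ)/4 - 2*Real.log 2 = 3/4 + (-(2*Real.log 2)) by ring,
        Real.exp_add, Real.exp_neg,
        show (2:ℝ) * Real.log 2 = Real.log 2 + Real.log 2 by ring,
        Real.exp_add, Real.exp_log two_pos]
      have : Real.exp (3/4 : ℝ) ≤ Real.exp 1 := Real.exp_le_exp.mpr (by norm_num)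
      rw [div_eq_mul_inv]
      nlinarith [Real.exp_pos (3/4 : ℝ)]
    have hEb : Real.exp bb = 2 / (Real.exp 1 * Real.exp 1) := by
      rw [hbb_def, Real.exp_sub, Real.exp_log two_pos,
        show (2:ℝ) = 1 + 1 by norm_num, Real.exp_add]
    have hδ1 : δ < 1 := by
      have hma : a * (M:ℝ) ≤ a := by
        have h := mul_le_mul_of_nonpos_left hM1 (show a ≤ 0 by rw [ha_def]; linarith)
        linarith
      have hmb : bb * (M:ℝ) ≤ bb := by
        have h := mul_le_mul_of_nonpos_left hM1 (show bb ≤ 0 by rw [hbb_def]; linarith)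
        linarith
      have h1 : Real.exp (a*M) ≤ Real.exp a := Real.exp_le_exp.mpr hma
      have h2 : Real.exp (bb*M) ≤ Real.exp bb := Real.exp_le_exp.mpr hmb
      have hE1 : Real.exp 1 < 2.72 := by
        have := Real.exp_one_lt_d9; linarith
      have hE2 : 2.71 < Real.exp 1 := by
        have := Real.exp_one_gt_d9; linarith
      have hq : 2 / (Real.exp 1 * Real.exp 1) < 0.2725 := by
        have hsq : (7.3441:ℝ) < Real.exp 1 * Real.exp 1 := by
          have := mul_lt_mul'' hE2 hE2 (by norm_num : (0:ℝ) ≤ 2.71) (by norm_num : (0:ℝ) ≤ 2.71)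
          linarith
        rw [div_lt_iff₀ (by positivity)]
        linarith
      have hp : Real.exp a < 0.68 := by
        refine hEa.trans_lt ?_
        rw [div_lt_iff₀ (by norm_num : (0:ℝ) < 4)]
        linarith
      rw [hδ_def]
      linarith [h1, h2, hp, hq, hEb.le, hEb.ge]
    refine ⟨-Real.log δ / M, div_pos (neg_pos.mpr (Real.log_neg hδ0 hδ1)) hM, ?_⟩
    have : -(-Real.log δ / M) * M = Real.log δ := by field_simp
    rw [this, Real.exp_log hδ0]
    exact hkey
end
end
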